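/- arXiv:1408.0419 — 7 statements merged into one kernel-verified Lean document; each statement's English description precedes it below -/
import Mathlib

section
/- Let M be a matroid with bases B₁, B₂ and let d = |B₁ \ B₂|. Define Δ(B₁,B₂) to be the number of unordered pairs {D₁, D₂} of bases of M with D₁ ∪ D₂ = B₁ ∪ B₂ as multisets (equivalently, D₁ ∩ D₂ = B₁ ∩ B₂ and D₁ ∪ D₂ = B₁ ∪ B₂ as sets). Then Δ(B₁,B₂) ≥ 2^(d-1). -/
noncomputable def Matroid.deltaPairs {α : Type*} (M : Matroid α) (B₁ B₂ : Set α) : ℕ :=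
  {p : Sym2 (Set α) | ∃ D₁ D₂, p = s(D₁, D₂) ∧ M.IsBase D₁ ∧ M.IsBase D₂ ∧
    D₁ ∪ D₂ = B₁ ∪ B₂ ∧ D₁ ∩ D₂ = B₁ ∩ B₂}.ncard

/-- Contraction of `C` in `M`, defined via the dual of a restriction of the dual. -/
noncomputable def Matroid.con {α : Type*} (M : Matroid α) (C : Set α) : Matroid α :=
  (Matroid.restrict M.dual (M.E \ C)).dual

set_option maxHeartbeats 1000000

namespace DeltaProof

open Set

variable {α : Type*} {M : Matroid α} {I X Y : Set α}

noncomputable def mrk (M : Matroid α) (X : Set α) : ℕ :=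
  (M.exists_isBasis' X).choose.ncard

lemma mrk_eq (hI : M.IsBasis' I X) : mrk M X = I.ncard := by
  have h := (M.exists_isBasis' X).choose_spec
  rw [mrk, Set.ncard_def, Set.ncard_def, h.encard_eq_encard hI]

lemma ncard_le_mrk (hfin : M.E.Finite) (hI : M.Indep I) (hIX : I ⊆ X) :
    I.ncard ≤ mrk M X := by
  obtain ⟨J, hJ, hIJ⟩ := hI.subset_isBasis'_of_subset hIX
  rw [mrk_eq hJ]
  exact Set.ncard_le_ncard hIJ (hfin.subset hJ.indep.subset_ground)

lemma mrk_mono (hfin : M.E.Finite) (hXY : X ⊆ Y) : mrk M X ≤ mrk M Y := by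
  obtain ⟨I, hI⟩ := M.exists_isBasis' X
  rw [mrk_eq hI]
  exact ncard_le_mrk hfin hI.indep (hI.subset.trans hXY)

lemma mrk_of_indep (hI : M.Indep I) : mrk M I = I.ncard :=
  mrk_eq hI.isBasis_self.isBasis'

lemma indep_of_mrk_eq (hfin : M.E.Finite) (hX : X ⊆ M.E) (h : X.ncard ≤ mrk M X) :
    M.Indep X := by
  obtain ⟨I, hI⟩ := M.exists_isBasis' X
  rw [mrk_eq hI] at h
  rw [← Set.eq_of_subset_of_ncard_le hI.subset h (hfin.subset hX)]
  exact hI.indep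

lemma mrk_insert_le (hfin : M.E.Finite) (e : α) (X : Set α) :
    mrk M (insert e X) ≤ mrk M X + 1 := by
  obtain ⟨I, hI⟩ := M.exists_isBasis' X
  obtain ⟨J, hJ, hIJ⟩ := hI.indep.subset_isBasis'_of_subset
    (hI.subset.trans (subset_insert e X))
  have hsub : J ⊆ insert e I := by
    intro f hf
    rcases hJ.subset hf with rfl | hfX
    · exact mem_insert _ _
    by_contra hfI
    have hfI' : f ∉ I := fun h => hfI (mem_insert_of_mem _ h)
    exact hI.insert_not_indep ⟨hfX, hfI'⟩
      (hJ.indep.subset (insert_subset hf hIJ))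
  rw [mrk_eq hI, mrk_eq hJ]
  calc J.ncard ≤ (insert e I).ncard :=
        Set.ncard_le_ncard hsub ((hfin.subset hI.indep.subset_ground).insert e)
    _ ≤ I.ncard + 1 := Set.ncard_insert_le e I

lemma mrk_submod (hfin : M.E.Finite) (X Y : Set α) :
    mrk M (X ∪ Y) + mrk M (X ∩ Y) ≤ mrk M X + mrk M Y := by
  obtain ⟨I, hI⟩ := M.exists_isBasis' (X ∩ Y)
  obtain ⟨J, hJ, hIJ⟩ := hI.indep.subset_isBasis'_of_subset
    (hI.subset.trans (inter_subset_left.trans subset_union_left))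
  have hJfin : J.Finite := hfin.subset hJ.indep.subset_ground
  have h1 : (J ∩ X).ncard ≤ mrk M X :=
    ncard_le_mrk hfin (hJ.indep.subset inter_subset_left) inter_subset_right
  have h2 : (J ∩ Y).ncard ≤ mrk M Y :=
    ncard_le_mrk hfin (hJ.indep.subset inter_subset_left) inter_subset_right
  have hsum : (J ∩ X).ncard + (J ∩ Y).ncard = J.ncard + (J ∩ (X ∩ Y)).ncard := by
    have hu : (J ∩ X) ∪ (J ∩ Y) = J := by
      rw [← inter_union_distrib_left]
      exact inter_eq_self_of_subset_left hJ.subset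
    have hi : (J ∩ X) ∩ (J ∩ Y) = J ∩ (X ∩ Y) := by
      ext x; simp only [mem_inter_iff]; tauto
    have := Set.ncard_union_add_ncard_inter (J ∩ X) (J ∩ Y)
      (hJfin.subset inter_subset_left) (hJfin.subset inter_subset_left)
    rw [hu, hi] at this
    omega
  have h3 : mrk M (X ∪ Y) ≤ J.ncard := le_of_eq (mrk_eq hJ)
  have h4 : mrk M (X ∩ Y) ≤ (J ∩ (X ∩ Y)).ncard := by
    rw [mrk_eq hI]
    exact Set.ncard_le_ncard (subset_inter hIJ hI.subset) (hJfin.subset inter_subset_left)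
  omega

lemma spanning_iff_mrk (hfin : M.E.Finite) (hX : X ⊆ M.E) :
    M.Spanning X ↔ mrk M M.E ≤ mrk M X := by
  constructor
  · rintro hS
    obtain ⟨B, hB, hBX⟩ := hS.exists_isBase_subset
    have h1 : B.ncard ≤ mrk M X := ncard_le_mrk hfin hB.indep hBX
    have h2 : mrk M M.E = B.ncard := mrk_eq hB.isBasis_ground.isBasis'
    omega
  · intro h
    obtain ⟨I, hI⟩ := M.exists_isBasis' X
    obtain ⟨B, hB, hIB⟩ := hI.indep.exists_isBase_superset
    have hBI : B = I := by
      refine (Set.eq_of_subset_of_ncard_le hIB ?_ (hfin.subset hB.subset_ground)).symm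
      have h2 : mrk M M.E = B.ncard := mrk_eq hB.isBasis_ground.isBasis'
      rw [mrk_eq hI] at h
      omega
    rw [M.spanning_iff_exists_isBase_subset hX]
    exact ⟨B, hB, hBI ▸ hI.subset⟩


lemma master (M : Matroid α) (hfin : M.E.Finite) (P B₂ A Y : Set α)
    (hYE : Y ⊆ M.E) (hPY : Disjoint Y P) :
    ∀ n F C k, F.ncard = n → F ⊆ Y → C ⊆ Y → Disjoint F C →
      M.Indep (P ∪ C) → M.Spanning ((B₂ \ C) ∪ A) →
      (∀ Z, Z ⊆ F →
        k + P.ncard + C.ncard + (C.ncard + mrk M M.E) ≤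
          mrk M (P ∪ (Z ∪ C)) +
            (((F \ Z) ∪ C).ncard + mrk M ((B₂ \ ((F \ Z) ∪ C)) ∪ A))) →
      ∃ J, J ⊆ F ∧ M.Indep (P ∪ (C ∪ J)) ∧ M.Spanning ((B₂ \ (C ∪ J)) ∪ A) ∧ k ≤ J.ncard := by
  intro n
  induction n using Nat.strong_induction_on with
  | _ n IH =>
  intro F C k hn hFY hCY hFC hInd hSpan hyp
  obtain _ | k := k
  · exact ⟨∅, empty_subset _, by simpa using hInd, by simpa using hSpan, Nat.zero_le _⟩
  have hCE : C ⊆ M.E := hCY.trans hYE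
  have hFE : F ⊆ M.E := hFY.trans hYE
  have hPE : P ⊆ M.E := (subset_union_left).trans hInd.subset_ground
  have hPCdisj : Disjoint P C := (hPY.mono_left hCY).symm
  have hPCfin : (P ∪ C).Finite := hfin.subset hInd.subset_ground
  have hPCcard : (P ∪ C).ncard = P.ncard + C.ncard :=
    Set.ncard_union_eq hPCdisj (hPCfin.subset subset_union_left)
      (hPCfin.subset subset_union_right)
  have hmrkPC : mrk M (P ∪ C) = P.ncard + C.ncard := by
    rw [mrk_of_indep hInd, hPCcard]
  rcases eq_empty_or_nonempty F with rfl | ⟨e, he⟩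
  · exfalso
    have h0 := hyp ∅ (empty_subset _)
    simp only [Set.union_empty, Set.empty_union, Set.diff_empty, Set.empty_diff] at h0
    have h1 : mrk M ((B₂ \ C) ∪ A) ≤ mrk M M.E := mrk_mono hfin hSpan.subset_ground
    have h2 : C.ncard ≤ P.ncard + C.ncard := Nat.le_add_left _ _
    omega
  -- main case
  set R := mrk M M.E with hR
  set F' := F \ {e} with hF'
  have hFfin : F.Finite := hfin.subset hFE
  have heY : e ∈ Y := hFY he
  have heC : e ∉ C := Set.disjoint_left.mp hFC he
  have heP : e ∉ P := Set.disjoint_left.mp hPY heY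
  have heF' : e ∉ F' := by simp [hF']
  have hF'sub : F' ⊆ F := diff_subset
  have hF'card : F'.ncard = n - 1 := by
    rw [hF', Set.ncard_diff_singleton_of_mem he, hn]
  have hnpos : 1 ≤ n := by
    rw [← hn]
    exact (Set.ncard_pos hFfin).mpr ⟨e, he⟩
  by_cases h1 : ∀ Z, Z ⊆ F' →
      (k + 1) + P.ncard + C.ncard + (C.ncard + R) ≤
        mrk M (P ∪ (Z ∪ C)) +
          (((F' \ Z) ∪ C).ncard + mrk M ((B₂ \ ((F' \ Z) ∪ C)) ∪ A))
  · obtain ⟨J, hJF', hJi, hJs, hJk⟩ :=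
      IH (n - 1) (by omega) F' C (k + 1) hF'card (hF'sub.trans hFY) hCY
        (hFC.mono_left hF'sub) hInd hSpan h1
    exact ⟨J, hJF'.trans hF'sub, hJi, hJs, hJk⟩
  -- e is a "non-loop" on side 1
  have hIndep' : M.Indep (P ∪ insert e C) := by
    by_contra hni
    apply h1
    intro Z hZF'
    have heZ : e ∉ Z := fun h => heF' (hZF' h)
    have h := hyp (insert e Z) (insert_subset he (hZF'.trans hF'sub))
    have idA : F \ insert e Z = F' \ Z := by
      ext x
      simp only [mem_diff, mem_insert_iff, mem_singleton_iff, hF']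
      tauto
    rw [idA] at h
    -- rank inequality
    have idU : (P ∪ (Z ∪ C)) ∪ (P ∪ insert e C) = P ∪ (insert e Z ∪ C) := by
      ext x
      simp only [mem_union, mem_insert_iff]
      tauto
    have idI : (P ∪ (Z ∪ C)) ∩ (P ∪ insert e C) = P ∪ C := by
      ext x
      have hxZ : x ∈ Z → ¬ x = e := fun hx hxe => heZ (hxe ▸ hx)
      simp only [mem_inter_iff, mem_union, mem_insert_iff]
      tauto
    have hsub := mrk_submod hfin (P ∪ (Z ∪ C)) (P ∪ insert e C)
    rw [idU, idI] at hsub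
    have hPC' : P ∪ insert e C = insert e (P ∪ C) := by
      ext x; simp only [mem_union, mem_insert_iff]; tauto
    have hle : mrk M (P ∪ insert e C) ≤ P.ncard + C.ncard := by
      rw [hPC']
      have h5 := mrk_insert_le hfin e (P ∪ C)
      by_contra hgt
      push_neg at hgt
      have heq : mrk M (insert e (P ∪ C)) = (P ∪ C).ncard + 1 := by omega
      have hind : M.Indep (insert e (P ∪ C)) := by
        refine indep_of_mrk_eq hfin (insert_subset (hYE heY) hInd.subset_ground) ?_
        have := Set.ncard_insert_le e (P ∪ C)
        omega
      rw [← hPC'] at hind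
      exact hni hind
    omega
  -- e is a "non-loop" on side 2
  have hSpan' : M.Spanning ((B₂ \ insert e C) ∪ A) := by
    by_contra hns
    apply h1
    intro Z hZF'
    have heZ : e ∉ Z := fun h => heF' (hZF' h)
    have h := hyp Z (hZF'.trans hF'sub)
    set W := (F' \ Z) ∪ C with hW
    have heW : e ∉ W := by
      simp only [hW, mem_union, mem_diff]
      rintro (⟨h1', _⟩ | h2') <;> [exact heF' h1'; exact heC h2']
    have idB : (F \ Z) ∪ C = insert e W := by
      ext x
      by_cases hx : x = e
      · subst hx
        simp only [mem_union, mem_diff, mem_insert_iff, true_or, iff_true]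
        exact Or.inl ⟨he, heZ⟩
      · simp only [mem_union, mem_diff, mem_insert_iff, hW, hF', mem_singleton_iff, hx,
          false_or]
        tauto
    rw [idB] at h
    have hWfin : W.Finite := hfin.subset (union_subset ((diff_subset.trans hF'sub).trans hFE) hCE)
    have hcard : (insert e W).ncard = W.ncard + 1 := Set.ncard_insert_of_notMem heW hWfin
    -- rank inequality : mrk ((B₂ \ insert e W) ∪ A) + 1 ≤ mrk ((B₂ \ W) ∪ A)
    have hCW : C ⊆ W := subset_union_right
    have idU : ((B₂ \ W) ∪ A) ∪ ((B₂ \ insert e C) ∪ A) = (B₂ \ C) ∪ A := by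
      ext x
      by_cases hx : x = e
      · subst hx
        simp only [mem_union, mem_diff, mem_insert_iff, heW, heC]
        tauto
      · have hxc : x ∈ C → x ∈ W := fun h' => hCW h'
        simp only [mem_union, mem_diff, mem_insert_iff, hx, false_or]
        tauto
    have idI : ((B₂ \ W) ∪ A) ∩ ((B₂ \ insert e C) ∪ A) = (B₂ \ insert e W) ∪ A := by
      ext x
      have hxc : x ∈ C → x ∈ W := fun h' => hCW h'
      simp only [mem_union, mem_inter_iff, mem_diff, mem_insert_iff]
      tauto
    have hsub := mrk_submod hfin ((B₂ \ W) ∪ A) ((B₂ \ insert e C) ∪ A)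
    rw [idU, idI] at hsub
    have hsp : R ≤ mrk M ((B₂ \ C) ∪ A) :=
      (spanning_iff_mrk hfin hSpan.subset_ground).mp hSpan
    have hsubE : (B₂ \ insert e C) ∪ A ⊆ M.E := by
      refine subset_trans ?_ hSpan.subset_ground
      apply union_subset_union_left
      exact diff_subset_diff_right (subset_insert _ _)
    have hns' : mrk M ((B₂ \ insert e C) ∪ A) < R :=
      lt_of_not_ge (fun hle => hns ((spanning_iff_mrk hfin hsubE).mpr hle))
    omega
  -- both cases: recurse with C' = insert e C
  set C' := insert e C with hC'
  have hC'Y : C' ⊆ Y := insert_subset heY hCY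
  have hC'card : C'.ncard = C.ncard + 1 := by
    rw [hC', Set.ncard_insert_of_notMem heC (hfin.subset hCE)]
  by_cases h2 : ∀ Z, Z ⊆ F' →
      k + P.ncard + C'.ncard + (C'.ncard + R) ≤
        mrk M (P ∪ (Z ∪ C')) +
          (((F' \ Z) ∪ C').ncard + mrk M ((B₂ \ ((F' \ Z) ∪ C')) ∪ A))
  · obtain ⟨J, hJF', hJi, hJs, hJk⟩ :=
      IH (n - 1) (by omega) F' C' k hF'card (hF'sub.trans hFY) hC'Y
        (Set.disjoint_left.mpr fun x hx hx' =>
          (Set.mem_insert_iff.mp hx').elim (fun h => heF' (h ▸ hx))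
            (fun h => Set.disjoint_left.mp hFC (hF'sub hx) h)) hIndep' hSpan' h2
    have heJ : e ∉ J := fun h => heF' (hJF' h)
    have idC : C ∪ insert e J = C' ∪ J := by
      ext x; simp only [mem_union, mem_insert_iff, hC']; tauto
    refine ⟨insert e J, insert_subset he (hJF'.trans hF'sub), ?_, ?_, ?_⟩
    · rw [idC]; exact hJi
    · rw [idC]; exact hJs
    · rw [Set.ncard_insert_of_notMem heJ (hfin.subset ((hJF'.trans hF'sub).trans hFE))]
      omega
  -- contradiction case
  exfalso
  push_neg at h1 h2
  obtain ⟨Z₁, hZ₁F', hZ₁lt⟩ := h1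
  obtain ⟨Z₂, hZ₂F', hZ₂lt⟩ := h2
  have heZ₁ : e ∉ Z₁ := fun h => heF' (hZ₁F' h)
  have heZ₂ : e ∉ Z₂ := fun h => heF' (hZ₂F' h)
  set V₃ := (F \ insert e (Z₁ ∪ Z₂)) ∪ C with hV₃
  set V₄ := (F \ (Z₁ ∩ Z₂)) ∪ C with hV₄
  have hyp₃ := hyp (insert e (Z₁ ∪ Z₂))
    (insert_subset he ((union_subset hZ₁F' hZ₂F').trans hF'sub))
  have hyp₄ := hyp (Z₁ ∩ Z₂) ((inter_subset_left.trans hZ₁F').trans hF'sub)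
  -- submodularity on side 1
  have m1 := mrk_submod hfin (P ∪ (Z₁ ∪ C)) (P ∪ (Z₂ ∪ C'))
  have idU1 : (P ∪ (Z₁ ∪ C)) ∪ (P ∪ (Z₂ ∪ C')) = P ∪ (insert e (Z₁ ∪ Z₂) ∪ C) := by
    ext x; simp only [mem_union, mem_insert_iff, hC']; tauto
  have idI1 : (P ∪ (Z₁ ∪ C)) ∩ (P ∪ (Z₂ ∪ C')) = P ∪ ((Z₁ ∩ Z₂) ∪ C) := by
    ext x
    have hxZ : x ∈ Z₁ → ¬ x = e := fun hx hxe => heZ₁ (hxe ▸ hx)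
    simp only [mem_union, mem_inter_iff, mem_insert_iff, hC']
    tauto
  rw [idU1, idI1] at m1
  clear hyp IH hIndep' hSpan' hInd hSpan
  -- submodularity on side 2
  set W₁ := (F' \ Z₁) ∪ C with hW₁
  set W₂ := (F' \ Z₂) ∪ C' with hW₂
  have m2 := mrk_submod hfin ((B₂ \ W₁) ∪ A) ((B₂ \ W₂) ∪ A)
  clear_value R F' C' V₃ V₄ W₁ W₂
  have idU2 : ((B₂ \ W₁) ∪ A) ∪ ((B₂ \ W₂) ∪ A) = (B₂ \ (W₁ ∩ W₂)) ∪ A := by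
    ext x; simp only [mem_union, mem_diff, mem_inter_iff]; tauto
  have idI2 : ((B₂ \ W₁) ∪ A) ∩ ((B₂ \ W₂) ∪ A) = (B₂ \ (W₁ ∪ W₂)) ∪ A := by
    ext x; simp only [mem_union, mem_inter_iff, mem_diff]; tauto
  have idV₃ : V₃ = (F' \ (Z₁ ∪ Z₂)) ∪ C := by
    ext x
    by_cases hx : x = e
    · subst hx
      simp [hV₃, hF', heC, heF']
    · simp only [hV₃, hF', mem_union, mem_diff, mem_insert_iff, mem_singleton_iff, hx,
        false_or]
      tauto
  have idV₄ : V₄ = insert e ((F' \ (Z₁ ∩ Z₂)) ∪ C) := by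
    ext x
    by_cases hx : x = e
    · subst hx
      simp [hV₄, hF', he, heZ₁]
    · simp only [hV₄, hF', mem_union, mem_diff, mem_insert_iff, mem_singleton_iff, mem_inter_iff,
        hx, false_or]
      tauto
  have idWi : W₁ ∩ W₂ = V₃ := by
    rw [idV₃]
    ext x
    by_cases hx : x = e
    · subst hx
      simp [hW₁, hW₂, hC', heF', heC]
    · simp only [hW₁, hW₂, hC', mem_inter_iff, mem_union, mem_diff, mem_insert_iff, hx,
        false_or]
      tauto
  have idWu : W₁ ∪ W₂ = V₄ := by
    rw [idV₄]
    ext x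
    by_cases hx : x = e
    · subst hx
      simp [hW₁, hW₂, hC', heF', heC]
    · simp only [hW₁, hW₂, hC', mem_union, mem_diff, mem_insert_iff, mem_inter_iff, hx,
        false_or]
      tauto
  rw [idU2, idI2, idWi, idWu] at m2
  rw [← hV₃] at hyp₃
  rw [← hV₄] at hyp₄
  -- cardinalities
  have hF'fin : F'.Finite := hFfin.subset hF'sub
  have hCfin : C.Finite := hfin.subset hCE
  have hdisj1 : Disjoint (F' \ Z₁) C := (hFC.mono_left hF'sub).mono_left diff_subset
  have hdisjF'C' : Disjoint F' C' := by
    rw [hC']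
    exact Set.disjoint_left.mpr fun x hx hx' =>
      (Set.mem_insert_iff.mp hx').elim (fun h => heF' (h ▸ hx))
        (fun h => Set.disjoint_left.mp hFC (hF'sub hx) h)
  have hdisj2 : Disjoint (F' \ Z₂) (insert e C) := by
    rw [← hC']
    exact hdisjF'C'.mono_left diff_subset
  have cW₁ : W₁.ncard = (F' \ Z₁).ncard + C.ncard := by
    rw [hW₁]
    exact Set.ncard_union_eq hdisj1 (hF'fin.subset diff_subset) hCfin
  have cW₂ : W₂.ncard = (F' \ Z₂).ncard + (C.ncard + 1) := by
    rw [hW₂, hC', Set.ncard_union_eq hdisj2 (hF'fin.subset diff_subset) (hCfin.insert e),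
      Set.ncard_insert_of_notMem heC hCfin]
  have cV₃ : V₃.ncard = (F' \ (Z₁ ∪ Z₂)).ncard + C.ncard := by
    rw [idV₃]
    exact Set.ncard_union_eq ((hFC.mono_left hF'sub).mono_left diff_subset)
      (hF'fin.subset diff_subset) hCfin
  have cV₄ : V₄.ncard = (F' \ (Z₁ ∩ Z₂)).ncard + C.ncard + 1 := by
    rw [idV₄]
    have hnotmem : e ∉ (F' \ (Z₁ ∩ Z₂)) ∪ C := by
      simp only [mem_union, mem_diff]
      rintro (⟨h1', _⟩ | h2') <;> [exact heF' h1'; exact heC h2']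
    rw [Set.ncard_insert_of_notMem hnotmem ((hF'fin.subset diff_subset).union hCfin),
      Set.ncard_union_eq ((hFC.mono_left hF'sub).mono_left diff_subset)
        (hF'fin.subset diff_subset) hCfin]
  have cX : (F' \ Z₁).ncard + (F' \ Z₂).ncard
      = (F' \ (Z₁ ∩ Z₂)).ncard + (F' \ (Z₁ ∪ Z₂)).ncard := by
    have idu : (F' \ Z₁) ∪ (F' \ Z₂) = F' \ (Z₁ ∩ Z₂) := by
      ext x
      simp only [mem_union, mem_diff, mem_inter_iff]
      constructor
      · rintro (⟨h1, h2⟩ | ⟨h1, h2⟩)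
        · exact ⟨h1, fun h => h2 h.1⟩
        · exact ⟨h1, fun h => h2 h.2⟩
      · rintro ⟨h1, h2⟩
        by_cases hx : x ∈ Z₁
        · exact Or.inr ⟨h1, fun hz => h2 ⟨hx, hz⟩⟩
        · exact Or.inl ⟨h1, hx⟩
    have idi : (F' \ Z₁) ∩ (F' \ Z₂) = F' \ (Z₁ ∪ Z₂) := by
      ext x
      simp only [mem_inter_iff, mem_diff, mem_union]
      constructor
      · rintro ⟨⟨h1, h2⟩, ⟨-, h3⟩⟩
        exact ⟨h1, fun h => h.elim h2 h3⟩
      · rintro ⟨h1, h2⟩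
        exact ⟨⟨h1, fun h => h2 (Or.inl h)⟩, ⟨h1, fun h => h2 (Or.inr h)⟩⟩
    have := Set.ncard_union_add_ncard_inter (F' \ Z₁) (F' \ Z₂)
      (hF'fin.subset diff_subset) (hF'fin.subset diff_subset)
    rw [idu, idi] at this
    omega
  omega

lemma greene (M : Matroid α) (hfin : M.E.Finite) {B₁ B₂ A : Set α}
    (h₁ : M.IsBase B₁) (h₂ : M.IsBase B₂) (hA : A ⊆ B₁ \ B₂) :
    ∃ J, J ⊆ B₂ \ B₁ ∧ M.IsBase ((B₁ \ A) ∪ J) ∧ M.IsBase ((B₂ \ J) ∪ A) := by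
  have hB₁E : B₁ ⊆ M.E := h₁.subset_ground
  have hB₂E : B₂ ⊆ M.E := h₂.subset_ground
  have hB₁fin : B₁.Finite := hfin.subset hB₁E
  have hB₂fin : B₂.Finite := hfin.subset hB₂E
  have hYE : B₂ \ B₁ ⊆ M.E := diff_subset.trans hB₂E
  have hAB₁ : A ⊆ B₁ := hA.trans diff_subset
  have hAE : A ⊆ M.E := hAB₁.trans hB₁E
  have hAnB₂ : ∀ x ∈ A, x ∉ B₂ := fun x hx => (hA hx).2
  have hYP : Disjoint (B₂ \ B₁) (B₁ \ A) :=
    Set.disjoint_left.mpr fun x hx hx' => hx.2 hx'.1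
  have hPind : M.Indep ((B₁ \ A) ∪ (∅ : Set α)) := by
    rw [union_empty]; exact h₁.indep.subset diff_subset
  have hSpan0 : M.Spanning ((B₂ \ (∅ : Set α)) ∪ A) := by
    rw [diff_empty]
    exact h₂.spanning.superset subset_union_left (union_subset hB₂E hAE)
  -- ranks of bases
  have hRB₁ : mrk M M.E = B₁.ncard := mrk_eq h₁.isBasis_ground.isBasis'
  have hRB₂ : mrk M M.E = B₂.ncard := mrk_eq h₂.isBasis_ground.isBasis'
  have hcard₁ : (B₁ \ A).ncard + A.ncard = B₁.ncard := by
    have := Set.ncard_diff_add_ncard B₁ A hB₁fin (hfin.subset hAE)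
    rwa [union_eq_self_of_subset_right hAB₁] at this
  have hcardI : (B₂ \ B₁).ncard + (B₁ ∩ B₂).ncard = B₂.ncard := by
    have hdisj : Disjoint (B₂ \ B₁) (B₁ ∩ B₂) :=
      Set.disjoint_left.mpr fun x hx hx' => hx.2 hx'.1
    have hu : (B₂ \ B₁) ∪ (B₁ ∩ B₂) = B₂ := by
      ext x; simp only [mem_union, mem_diff, mem_inter_iff]; tauto
    have h' := Set.ncard_union_eq hdisj (hB₂fin.subset diff_subset)
      (hB₁fin.subset inter_subset_left)
    rw [hu] at h'
    omega
  have hcond : ∀ Z, Z ⊆ B₂ \ B₁ →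
      A.ncard + (B₁ \ A).ncard + (∅ : Set α).ncard + ((∅ : Set α).ncard + mrk M M.E) ≤
        mrk M ((B₁ \ A) ∪ (Z ∪ ∅)) +
          ((((B₂ \ B₁) \ Z) ∪ ∅).ncard + mrk M ((B₂ \ (((B₂ \ B₁) \ Z) ∪ ∅)) ∪ A)) := by
    intro Z hZY
    simp only [union_empty]
    have hZE : Z ⊆ M.E := hZY.trans hYE
    have hZfin : Z.Finite := hfin.subset hZE
    have idZ : B₂ \ ((B₂ \ B₁) \ Z) = (B₁ ∩ B₂) ∪ Z := by
      ext x
      have hxZ : x ∈ Z → x ∈ B₂ ∧ x ∉ B₁ := fun h => (hZY h).elim fun h1 h2 => ⟨h1, h2⟩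
      simp only [mem_diff, mem_union, mem_inter_iff]
      tauto
    rw [idZ]
    have m := mrk_submod hfin ((B₁ \ A) ∪ Z) (((B₁ ∩ B₂) ∪ Z) ∪ A)
    have idU : ((B₁ \ A) ∪ Z) ∪ (((B₁ ∩ B₂) ∪ Z) ∪ A) = B₁ ∪ Z := by
      ext x
      have hxA : x ∈ A → x ∈ B₁ := fun h => hAB₁ h
      simp only [mem_union, mem_diff, mem_inter_iff]
      tauto
    have idI : ((B₁ \ A) ∪ Z) ∩ (((B₁ ∩ B₂) ∪ Z) ∪ A) = (B₁ ∩ B₂) ∪ Z := by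
      ext x
      have hxA : x ∈ A → x ∈ B₁ ∧ x ∉ B₂ := fun h => (hA h).elim fun h1 h2 => ⟨h1, h2⟩
      have hxZ : x ∈ Z → x ∈ B₂ ∧ x ∉ B₁ := fun h => (hZY h).elim fun h1 h2 => ⟨h1, h2⟩
      simp only [mem_inter_iff, mem_union, mem_diff]
      tauto
    rw [idU, idI] at m
    have hBZsp : M.Spanning (B₁ ∪ Z) :=
      h₁.spanning.superset subset_union_left (union_subset hB₁E hZE)
    have hBZ : mrk M M.E ≤ mrk M (B₁ ∪ Z) :=
      (spanning_iff_mrk hfin (union_subset hB₁E hZE)).mp hBZsp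
    have hIZind : M.Indep ((B₁ ∩ B₂) ∪ Z) :=
      h₂.indep.subset (union_subset inter_subset_right (hZY.trans diff_subset))
    have hIZdisj : Disjoint (B₁ ∩ B₂) Z :=
      Set.disjoint_left.mpr fun x hx hx' => (hZY hx').2 hx.1
    have hIZ : mrk M ((B₁ ∩ B₂) ∪ Z) = (B₁ ∩ B₂).ncard + Z.ncard := by
      rw [mrk_of_indep hIZind,
        Set.ncard_union_eq hIZdisj (hB₁fin.subset inter_subset_left) hZfin]
    have hZcard : ((B₂ \ B₁) \ Z).ncard + Z.ncard = (B₂ \ B₁).ncard := by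
      have := Set.ncard_diff_add_ncard (B₂ \ B₁) Z (hB₂fin.subset diff_subset) hZfin
      rwa [union_eq_self_of_subset_right hZY] at this
    simp only [Set.ncard_empty]
    omega
  obtain ⟨J, hJY, hJi, hJs, hJk⟩ := master M hfin (B₁ \ A) B₂ A (B₂ \ B₁) hYE hYP
    (B₂ \ B₁).ncard (B₂ \ B₁) ∅ A.ncard rfl Subset.rfl (empty_subset _)
    (disjoint_empty _) hPind hSpan0 hcond
  rw [empty_union] at hJi hJs
  have hJE : J ⊆ M.E := hJY.trans hYE
  have hJfin : J.Finite := hfin.subset hJE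
  have hPJdisj : Disjoint (B₁ \ A) J :=
    Set.disjoint_left.mpr fun x hx hx' => (hJY hx').2 hx.1
  have hPJcard : ((B₁ \ A) ∪ J).ncard = (B₁ \ A).ncard + J.ncard :=
    Set.ncard_union_eq hPJdisj (hB₁fin.subset diff_subset) hJfin
  have hle : ((B₁ \ A) ∪ J).ncard ≤ mrk M M.E :=
    ncard_le_mrk hfin hJi hJi.subset_ground
  have hJA : J.ncard = A.ncard := by omega
  refine ⟨J, hJY, ?_, ?_⟩
  -- D₁ is a base
  · obtain ⟨B, hB, hDB⟩ := hJi.exists_isBase_superset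
    have hBc : mrk M M.E = B.ncard := mrk_eq hB.isBasis_ground.isBasis'
    have : (B₁ \ A) ∪ J = B :=
      Set.eq_of_subset_of_ncard_le hDB (by omega) (hfin.subset hB.subset_ground)
    rwa [this]
  -- D₂ is a base
  · obtain ⟨B, hB, hBD⟩ := hJs.exists_isBase_subset
    have hBc : mrk M M.E = B.ncard := mrk_eq hB.isBasis_ground.isBasis'
    have hJB₂ : J ⊆ B₂ := hJY.trans diff_subset
    have hD₂card : ((B₂ \ J) ∪ A).ncard = (B₂ \ J).ncard + A.ncard := by
      refine Set.ncard_union_eq ?_ (hB₂fin.subset diff_subset) (hfin.subset hAE)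
      exact Set.disjoint_left.mpr fun x hx hx' => hAnB₂ x hx' hx.1
    have hB₂J : (B₂ \ J).ncard + J.ncard = B₂.ncard := by
      have := Set.ncard_diff_add_ncard B₂ J hB₂fin hJfin
      rwa [union_eq_self_of_subset_right hJB₂] at this
    have : B = (B₂ \ J) ∪ A := by
      refine Set.eq_of_subset_of_ncard_le hBD (by omega) ?_
      exact hfin.subset (union_subset (diff_subset.trans hB₂E) hAE)
    rw [← this]
    exact hB

lemma ncard_powerset {W : Set α} (h : W.Finite) :
    {A : Set α | A ⊆ W}.ncard = 2 ^ W.ncard := by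
  refine Set.Finite.induction_on (motive := fun s _ => {A : Set α | A ⊆ s}.ncard = 2 ^ s.ncard) W h
    ?_ (fun {x W} hxW hWfin ih => ?_)
  · simp [Set.subset_empty_iff, Set.setOf_eq_eq_singleton]
  ·
    have hdecomp : {A : Set α | A ⊆ insert x W}
        = {A : Set α | A ⊆ W} ∪ (insert x '' {A : Set α | A ⊆ W}) := by
      ext A
      simp only [mem_setOf_eq, mem_union, mem_image]
      constructor
      · intro hA
        by_cases hx : x ∈ A
        · refine Or.inr ⟨A \ {x}, ?_, ?_⟩
          · intro y hy
            rcases hA hy.1 with rfl | hyW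
            · exact absurd rfl hy.2
            · exact hyW
          · rw [Set.insert_diff_singleton, Set.insert_eq_self.mpr hx]
        · exact Or.inl fun y hy => (hA hy).resolve_left (fun h => hx (h ▸ hy))
      · rintro (hAW | ⟨B, hBW, rfl⟩)
        · exact hAW.trans (subset_insert _ _)
        · exact insert_subset_insert hBW
    have hinj : Set.InjOn (insert x) {A : Set α | A ⊆ W} := by
      intro A hA B hB h
      have hA' : x ∉ A := fun hx => hxW (hA hx)
      have hB' : x ∉ B := fun hx => hxW (hB hx)
      rw [← Set.insert_diff_self_of_notMem hA', ← Set.insert_diff_self_of_notMem hB', h]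
    have hdisj : Disjoint {A : Set α | A ⊆ W} (insert x '' {A : Set α | A ⊆ W}) := by
      rw [Set.disjoint_left]
      rintro A hA ⟨B, hB, rfl⟩
      exact hxW (hA (mem_insert _ _))
    rw [hdecomp, Set.ncard_union_eq hdisj hWfin.finite_subsets
      (hWfin.finite_subsets.image _), Set.ncard_image_of_injOn hinj, (by simpa using ih : {A : Set α | A ⊆ W}.ncard = 2 ^ W.ncard),
      Set.ncard_insert_of_notMem hxW hWfin]
    ring

theorem delta_lower_bound' (M : Matroid α) (hfin : M.E.Finite)
    (B₁ B₂ : Set α) (h₁ : M.IsBase B₁) (h₂ : M.IsBase B₂)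
    (d : ℕ) (hd : d = (B₁ \ B₂).ncard) (hd1 : 1 ≤ d) :
    2 ^ (d - 1) ≤ ({p : Sym2 (Set α) | ∃ D₁ D₂, p = s(D₁, D₂) ∧ M.IsBase D₁ ∧ M.IsBase D₂ ∧
      D₁ ∪ D₂ = B₁ ∪ B₂ ∧ D₁ ∩ D₂ = B₁ ∩ B₂} : Set (Sym2 (Set α))).ncard := by
  classical
  have hB₁E : B₁ ⊆ M.E := h₁.subset_ground
  have hB₂E : B₂ ⊆ M.E := h₂.subset_ground
  have hXfin : (B₁ \ B₂).Finite := hfin.subset (diff_subset.trans hB₁E)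
  obtain ⟨e₀, he₀⟩ : (B₁ \ B₂).Nonempty :=
    Set.nonempty_of_ncard_ne_zero (by omega)
  -- choice of exchange pairs
  have H : ∀ A : Set α, ∃ J, A ⊆ B₁ \ B₂ →
      (J ⊆ B₂ \ B₁ ∧ M.IsBase ((B₁ \ A) ∪ J) ∧ M.IsBase ((B₂ \ J) ∪ A)) := by
    intro A
    by_cases hA : A ⊆ B₁ \ B₂
    · obtain ⟨J, hJ1, hJ2, hJ3⟩ := greene M hfin h₁ h₂ hA
      exact ⟨J, fun _ => ⟨hJ1, hJ2, hJ3⟩⟩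
    · exact ⟨∅, fun h => absurd h hA⟩
  choose Jf hJf using H
  set Φ : Set α → Sym2 (Set α) := fun A => s((B₁ \ A) ∪ Jf A, (B₂ \ Jf A) ∪ A) with hΦ
  set 𝒜 : Set (Set α) := {A | A ⊆ B₁ \ B₂ ∧ e₀ ∈ A} with h𝒜
  set Δ : Set (Sym2 (Set α)) := {p : Sym2 (Set α) | ∃ D₁ D₂, p = s(D₁, D₂) ∧ M.IsBase D₁ ∧
      M.IsBase D₂ ∧ D₁ ∪ D₂ = B₁ ∪ B₂ ∧ D₁ ∩ D₂ = B₁ ∩ B₂} with hΔ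
  -- trace identities
  have htr₁ : ∀ A, A ⊆ B₁ \ B₂ → ((B₁ \ A) ∪ Jf A) ∩ (B₁ \ B₂) = (B₁ \ B₂) \ A := by
    intro A hA
    obtain ⟨hJY, -, -⟩ := hJf A hA
    ext x
    have hxJ : x ∈ Jf A → x ∈ B₂ ∧ x ∉ B₁ := fun h => (hJY h).elim fun a b => ⟨a, b⟩
    simp only [mem_inter_iff, mem_union, mem_diff]
    tauto
  have htr₂ : ∀ A, A ⊆ B₁ \ B₂ → ((B₂ \ Jf A) ∪ A) ∩ (B₁ \ B₂) = A := by
    intro A hA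
    obtain ⟨hJY, -, -⟩ := hJf A hA
    ext x
    have hxA : x ∈ A → x ∈ B₁ ∧ x ∉ B₂ := fun h => (hA h).elim fun a b => ⟨a, b⟩
    simp only [mem_inter_iff, mem_union, mem_diff]
    tauto
  -- Φ maps 𝒜 into Δ
  have hmaps : ∀ A ∈ 𝒜, Φ A ∈ Δ := by
    rintro A ⟨hA, -⟩
    obtain ⟨hJY, hD₁, hD₂⟩ := hJf A hA
    refine ⟨_, _, rfl, hD₁, hD₂, ?_, ?_⟩
    · ext x
      have hxA : x ∈ A → x ∈ B₁ ∧ x ∉ B₂ := fun h => (hA h).elim fun a b => ⟨a, b⟩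
      have hxJ : x ∈ Jf A → x ∈ B₂ ∧ x ∉ B₁ := fun h => (hJY h).elim fun a b => ⟨a, b⟩
      simp only [mem_union, mem_diff]
      tauto
    · ext x
      have hxA : x ∈ A → x ∈ B₁ ∧ x ∉ B₂ := fun h => (hA h).elim fun a b => ⟨a, b⟩
      have hxJ : x ∈ Jf A → x ∈ B₂ ∧ x ∉ B₁ := fun h => (hJY h).elim fun a b => ⟨a, b⟩
      simp only [mem_inter_iff, mem_union, mem_diff]
      tauto
  -- injectivity
  have hinj : Set.InjOn Φ 𝒜 := by
    rintro A ⟨hA, heA⟩ A' ⟨hA', heA'⟩ hEq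
    rw [hΦ, Sym2.eq_iff] at hEq
    rcases hEq with ⟨h1, -⟩ | ⟨h1, -⟩
    · have := congrArg (· ∩ (B₁ \ B₂)) h1
      rw [htr₁ A hA, htr₁ A' hA'] at this
      rw [← Set.diff_diff_cancel_left hA, ← Set.diff_diff_cancel_left hA', this]
    · exfalso
      have := congrArg (· ∩ (B₁ \ B₂)) h1
      rw [htr₁ A hA, htr₂ A' hA'] at this
      have he₀A' : e₀ ∈ A' := heA'
      rw [← this] at he₀A'
      exact he₀A'.2 heA
  -- cardinality of 𝒜
  have hcard𝒜 : 𝒜.ncard = 2 ^ (d - 1) := by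
    have hXd : ((B₁ \ B₂) \ {e₀}).ncard = d - 1 := by
      rw [Set.ncard_diff_singleton_of_mem he₀, hd]
    have hid : 𝒜 = insert e₀ '' {B : Set α | B ⊆ (B₁ \ B₂) \ {e₀}} := by
      ext A
      simp only [h𝒜, mem_setOf_eq, mem_image]
      constructor
      · rintro ⟨hA, heA⟩
        refine ⟨A \ {e₀}, fun y hy => ⟨hA hy.1, hy.2⟩, ?_⟩
        rw [Set.insert_diff_singleton, Set.insert_eq_self.mpr heA]
      · rintro ⟨B, hB, rfl⟩
        exact ⟨insert_subset he₀ (fun y hy => (hB hy).1), mem_insert _ _⟩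
    have hinj' : Set.InjOn (insert e₀) {B : Set α | B ⊆ (B₁ \ B₂) \ {e₀}} := by
      intro A hA B hB h
      have hA' : e₀ ∉ A := fun hx => (hA hx).2 rfl
      have hB' : e₀ ∉ B := fun hx => (hB hx).2 rfl
      rw [← Set.insert_diff_self_of_notMem hA', ← Set.insert_diff_self_of_notMem hB', h]
    rw [hid, Set.ncard_image_of_injOn hinj', ncard_powerset hXfin.diff, hXd]
  -- Δ is finite
  have hΔfin : Δ.Finite := by
    have hU : (B₁ ∪ B₂).Finite := hfin.subset (union_subset hB₁E hB₂E)
    refine ((hU.finite_subsets.prod hU.finite_subsets).image (fun p : Set α × Set α => s(p.1, p.2))).subset ?_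
    rintro p ⟨D₁, D₂, rfl, -, -, hu, -⟩
    refine ⟨(D₁, D₂), ⟨?_, ?_⟩, rfl⟩
    · exact hu ▸ subset_union_left
    · exact hu ▸ subset_union_right
  -- conclude
  calc 2 ^ (d - 1) = 𝒜.ncard := hcard𝒜.symm
    _ = (Φ '' 𝒜).ncard := (Set.ncard_image_of_injOn hinj).symm
    _ ≤ Δ.ncard := Set.ncard_le_ncard (fun p ⟨A, hA, hpA⟩ => hpA ▸ hmaps A hA) hΔfin


end DeltaProof

/-- Lower bound `2^(d-1) ≤ Δ(B₁,B₂)` where `d = |B₁ \ B₂|`. -/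
theorem delta_lower_bound {α : Type*} (M : Matroid α) (hfin : M.E.Finite)
    (B₁ B₂ : Set α) (h₁ : M.IsBase B₁) (h₂ : M.IsBase B₂)
    (d : ℕ) (hd : d = (B₁ \ B₂).ncard) (hd1 : 1 ≤ d) :
    2 ^ (d - 1) ≤ M.deltaPairs B₁ B₂ := by
  have h := DeltaProof.delta_lower_bound' M hfin B₁ B₂ h₁ h₂ d hd hd1
  unfold Matroid.deltaPairs
  exact h
end

section
/- Let M be a matroid with bases B₁, B₂ and let d = |B₁ \ B₂| with d ≥ 1. Define Δ(B₁,B₂) to be the number of unordered pairs {D₁, D₂} of bases of M with D₁ ∪ D₂ = B₁ ∪ B₂ and D₁ ∩ D₂ = B₁ ∩ B₂. Then Δ(B₁,B₂) ≤ C(2d-1, d), the binomial coefficient (2d-1 choose d). -/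
/-- Upper bound `Δ(B₁,B₂) ≤ C(2d-1, d)` where `d = |B₁ \ B₂|`. -/
theorem delta_upper_bound {α : Type*} (M : Matroid α) (hfin : M.E.Finite)
    (B₁ B₂ : Set α) (h₁ : M.IsBase B₁) (h₂ : M.IsBase B₂)
    (d : ℕ) (hd : d = (B₁ \ B₂).ncard) (hd1 : 1 ≤ d) :
    M.deltaPairs B₁ B₂ ≤ (2 * d - 1).choose d := by
  classical
  have hB₁fin : B₁.Finite := hfin.subset h₁.subset_ground
  have hB₂fin : B₂.Finite := hfin.subset h₂.subset_ground
  have hUfin : (B₁ ∪ B₂).Finite := hB₁fin.union hB₂fin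
  -- choose e ∈ B₁ \ B₂
  obtain ⟨e, he⟩ : (B₁ \ B₂).Nonempty := by
    rw [← Set.ncard_pos (hB₁fin.subset Set.diff_subset), ← hd]; omega
  set X : Set α := (B₁ ∪ B₂) \ (B₁ ∩ B₂) with hX
  have hXfin : X.Finite := hUfin.subset Set.diff_subset
  have heX : e ∈ X := ⟨Or.inl he.1, fun h => he.2 h.2⟩
  -- the target set of (d-1)-subsets of X \ {e}
  set t : Set (Set α) := {T : Set α | T ⊆ X \ {e} ∧ T.ncard = d - 1} with ht
  set S : Set (Sym2 (Set α)) := {p : Sym2 (Set α) | ∃ D₁ D₂, p = s(D₁, D₂) ∧ M.IsBase D₁ ∧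
    M.IsBase D₂ ∧ D₁ ∪ D₂ = B₁ ∪ B₂ ∧ D₁ ∩ D₂ = B₁ ∩ B₂} with hS
  -- normalized representation: the first component contains e
  have key : ∀ p ∈ S, ∃ D₁ D₂, p = s(D₁, D₂) ∧ M.IsBase D₁ ∧ M.IsBase D₂ ∧
      D₁ ∪ D₂ = B₁ ∪ B₂ ∧ D₁ ∩ D₂ = B₁ ∩ B₂ ∧ e ∈ D₁ ∧ e ∉ D₂ := by
    rintro p ⟨D₁, D₂, rfl, hD₁, hD₂, hun, hin⟩
    have heU : e ∈ D₁ ∪ D₂ := hun ▸ Or.inl he.1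
    have heI : e ∉ D₁ ∩ D₂ := fun h => he.2 (hin ▸ h).2
    by_cases h1 : e ∈ D₁
    · exact ⟨D₁, D₂, rfl, hD₁, hD₂, hun, hin, h1, fun h2 => heI ⟨h1, h2⟩⟩
    · refine ⟨D₂, D₁, Sym2.eq_swap, hD₂, hD₁, by rwa [Set.union_comm],
        by rwa [Set.inter_comm], heU.resolve_left h1, h1⟩
  -- the map
  set g : Sym2 (Set α) → Set α := fun p => (X ∩ {x | ∃ D ∈ p, e ∈ D ∧ x ∈ D}) \ {e} with hg
  have hgval : ∀ D₁ D₂ : Set α, e ∈ D₁ → e ∉ D₂ → g s(D₁, D₂) = (X ∩ D₁) \ {e} := by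
    intro D₁ D₂ h1 h2
    simp only [hg]
    congr 1
    ext x
    simp only [Set.mem_inter_iff, Set.mem_setOf_eq, Sym2.mem_iff]
    constructor
    · rintro ⟨hx, D, (rfl | rfl), heD, hxD⟩
      · exact ⟨hx, hxD⟩
      · exact absurd heD h2
    · rintro ⟨hx, hxD⟩; exact ⟨hx, D₁, Or.inl rfl, h1, hxD⟩
  -- facts about any D₁ in a representation
  have hXD : ∀ D₁ D₂ : Set α, M.IsBase D₁ → M.IsBase D₂ → D₁ ∪ D₂ = B₁ ∪ B₂ →
      D₁ ∩ D₂ = B₁ ∩ B₂ → X ∩ D₁ = D₁ \ D₂ := by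
    intro D₁ D₂ hD₁ hD₂ hun hin
    ext x
    simp only [hX, Set.mem_inter_iff, Set.mem_diff, Set.mem_union]
    constructor
    · rintro ⟨⟨_, hxn⟩, hx1⟩
      exact ⟨hx1, fun hx2 => hxn (show x ∈ B₁ ∩ B₂ from hin ▸ ⟨hx1, hx2⟩)⟩
    · rintro ⟨hx1, hx2⟩
      refine ⟨⟨?_, fun h => hx2 ((show x ∈ D₁ ∩ D₂ from hin.symm ▸ (show x ∈ B₁ ∩ B₂ from h))).2⟩, hx1⟩
      have : x ∈ D₁ ∪ D₂ := Or.inl hx1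
      rwa [hun] at this
  have hD1card : ∀ D₁ D₂ : Set α, M.IsBase D₁ → M.IsBase D₂ → D₁ ∪ D₂ = B₁ ∪ B₂ →
      D₁ ∩ D₂ = B₁ ∩ B₂ → (D₁ \ D₂).ncard = d := by
    intro D₁ D₂ hD₁ hD₂ hun hin
    have hD₁fin : D₁.Finite := hfin.subset hD₁.subset_ground
    have h1 : D₁ \ D₂ = D₁ \ (D₁ ∩ D₂) := by rw [Set.diff_self_inter]
    have h2 : B₁ \ B₂ = B₁ \ (B₁ ∩ B₂) := by rw [Set.diff_self_inter]
    rw [h1, Set.ncard_diff Set.inter_subset_left (hD₁fin.subset Set.inter_subset_left),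
      hD₁.ncard_eq_ncard_of_isBase h₁, hin]
    rw [hd, h2, Set.ncard_diff Set.inter_subset_left (hB₁fin.subset Set.inter_subset_left)]
  -- e is in X ∩ D₁
  have heXD : ∀ D₁ D₂ : Set α, e ∈ D₁ → D₁ ∩ D₂ = B₁ ∩ B₂ → e ∈ X ∩ D₁ := by
    intro D₁ D₂ h1 _; exact ⟨heX, h1⟩
  -- D₂ determined from D₁
  have hD2eq : ∀ D₁ D₂ : Set α, D₁ ∪ D₂ = B₁ ∪ B₂ → D₁ ∩ D₂ = B₁ ∩ B₂ →
      D₂ = (B₁ ∩ B₂) ∪ ((B₁ ∪ B₂) \ D₁) := by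
    intro D₁ D₂ hun hin
    ext x
    simp only [Set.mem_union, Set.mem_diff]
    constructor
    · intro hx2
      by_cases hx1 : x ∈ D₁
      · exact Or.inl (hin ▸ ⟨hx1, hx2⟩)
      · exact Or.inr ⟨show x ∈ B₁ ∪ B₂ from hun ▸ (show x ∈ D₁ ∪ D₂ from Or.inr hx2), hx1⟩
    · rintro (hx | ⟨hx, hx1⟩)
      · exact (hin.symm ▸ hx : x ∈ D₁ ∩ D₂).2
      · exact ((show x ∈ D₁ ∪ D₂ from hun.symm ▸ (show x ∈ B₁ ∪ B₂ from hx))).resolve_left hx1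
  -- MapsTo and InjOn
  have hmaps : ∀ p ∈ S, g p ∈ t := by
    intro p hp
    obtain ⟨D₁, D₂, rfl, hD₁, hD₂, hun, hin, h1, h2⟩ := key p hp
    rw [hgval D₁ D₂ h1 h2]
    refine ⟨fun x hx => ⟨hx.1.1, hx.2⟩, ?_⟩
    have hfinXD : (X ∩ D₁).Finite := hXfin.subset Set.inter_subset_left
    rw [Set.ncard_diff_singleton_of_mem (heXD D₁ D₂ h1 hin),
      hXD D₁ D₂ hD₁ hD₂ hun hin, hD1card D₁ D₂ hD₁ hD₂ hun hin]
  have hinj : Set.InjOn g S := by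
    intro p hp q hq hpq
    obtain ⟨D₁, D₂, rfl, hD₁, hD₂, hun, hin, h1, h2⟩ := key p hp
    obtain ⟨C₁, C₂, rfl, hC₁, hC₂, hun', hin', h1', h2'⟩ := key q hq
    rw [hgval D₁ D₂ h1 h2, hgval C₁ C₂ h1' h2'] at hpq
    have hXeq : X ∩ D₁ = X ∩ C₁ := by
      have e1 : X ∩ D₁ = insert e ((X ∩ D₁) \ {e}) :=
        (Set.insert_diff_singleton.trans (Set.insert_eq_self.2 (heXD D₁ D₂ h1 hin))).symm
      have e2 : X ∩ C₁ = insert e ((X ∩ C₁) \ {e}) :=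
        (Set.insert_diff_singleton.trans (Set.insert_eq_self.2 (heXD C₁ C₂ h1' hin'))).symm
      rw [e1, e2, hpq]
    have hD1C1 : D₁ = C₁ := by
      have r1 : D₁ = (B₁ ∩ B₂) ∪ (X ∩ D₁) := by
        ext x
        simp only [Set.mem_union, Set.mem_inter_iff, hX, Set.mem_diff]
        constructor
        · intro hx
          by_cases hxi : x ∈ B₁ ∩ B₂
          · exact Or.inl hxi
          · exact Or.inr ⟨⟨show x ∈ B₁ ∪ B₂ from hun ▸ (show x ∈ D₁ ∪ D₂ from Or.inl hx), hxi⟩, hx⟩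
        · rintro (hx | ⟨_, hx⟩)
          · exact (hin.symm ▸ hx : x ∈ D₁ ∩ D₂).1
          · exact hx
      have r2 : C₁ = (B₁ ∩ B₂) ∪ (X ∩ C₁) := by
        ext x
        simp only [Set.mem_union, Set.mem_inter_iff, hX, Set.mem_diff]
        constructor
        · intro hx
          by_cases hxi : x ∈ B₁ ∩ B₂
          · exact Or.inl hxi
          · exact Or.inr ⟨⟨show x ∈ B₁ ∪ B₂ from hun' ▸ (show x ∈ C₁ ∪ C₂ from Or.inl hx), hxi⟩, hx⟩
        · rintro (hx | ⟨_, hx⟩)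
          · exact (hin'.symm ▸ hx : x ∈ C₁ ∩ C₂).1
          · exact hx
      rw [r1, r2, hXeq]
    have hD2C2 : D₂ = C₂ := by
      rw [hD2eq D₁ D₂ hun hin, hD2eq C₁ C₂ hun' hin', hD1C1]
    rw [hD1C1, hD2C2]
  -- cardinality of t
  have hXe : (X \ {e}).ncard = 2 * d - 1 := by
    have hXcard : X.ncard = 2 * d := by
      have hXsplit : X = (B₁ \ B₂) ∪ (B₂ \ B₁) := by
        ext x
        simp only [hX, Set.mem_diff, Set.mem_union, Set.mem_inter_iff]
        tauto
      have hdisj : Disjoint (B₁ \ B₂) (B₂ \ B₁) :=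
        Set.disjoint_of_subset_left Set.diff_subset Set.disjoint_sdiff_right
      rw [hXsplit, Set.ncard_union_eq hdisj (hB₁fin.subset Set.diff_subset)
        (hB₂fin.subset Set.diff_subset), ← hd, h₂.ncard_diff_comm h₁, ← hd]
      ring
    rw [Set.ncard_diff_singleton_of_mem heX, hXcard]
  have hXefin : (X \ {e}).Finite := hXfin.subset Set.diff_subset
  set F : Finset α := hXefin.toFinset with hF
  have himg : t = (fun (s : Finset α) => (s : Set α)) '' ↑(F.powersetCard (d - 1)) := by
    ext T
    simp only [ht, Set.mem_setOf_eq, Set.mem_image, Finset.mem_coe,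
      Finset.mem_powersetCard]
    constructor
    · rintro ⟨hsub, hcard⟩
      have hTfin : T.Finite := hXefin.subset hsub
      refine ⟨hTfin.toFinset, ⟨?_, ?_⟩, by simp⟩
      · intro x hx
        simp only [hF, Set.Finite.mem_toFinset] at hx ⊢
        exact hsub hx
      · rw [← Set.ncard_eq_toFinset_card T hTfin, hcard]
    · rintro ⟨s, ⟨hsub, hcard⟩, rfl⟩
      refine ⟨?_, ?_⟩
      · intro x hx
        have := hsub hx
        simpa [hF] using this
      · rw [Set.ncard_coe_finset, hcard]
  have htcard : t.ncard = (2 * d - 1).choose (d - 1) := by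
    rw [himg, Set.ncard_image_of_injective _ Finset.coe_injective,
      Set.ncard_coe_finset, Finset.card_powersetCard]
    congr 1
    rw [hF, ← Set.ncard_eq_toFinset_card _ hXefin, hXe]
  -- conclusion
  have htfin : t.Finite := by
    rw [himg]
    exact (Set.Finite.image _ (F.powersetCard (d - 1)).finite_toSet)
  have hle : S.ncard ≤ t.ncard := Set.ncard_le_ncard_of_injOn g hmaps hinj htfin
  have hchoose : (2 * d - 1).choose (d - 1) = (2 * d - 1).choose d := by
    have h : 2 * d - 1 - d = d - 1 := by omega
    rw [← h, Nat.choose_symm (by omega)]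
  calc M.deltaPairs B₁ B₂ = S.ncard := rfl
    _ ≤ t.ncard := hle
    _ = (2 * d - 1).choose (d - 1) := htcard
    _ = (2 * d - 1).choose d := hchoose
end

section
/- If a matroid M has a minor isomorphic to the uniform matroid U_{d,2d} for some d ≥ 2, then there exist bases B₁, B₂ of M with Δ(B₁,B₂) = C(2d-1, d), where Δ(B₁,B₂) is the number of unordered pairs {D₁,D₂} of bases of M with D₁ ∪ D₂ = B₁ ∪ B₂ and D₁ ∩ D₂ = B₁ ∩ B₂. -/
open Set Matroid

namespace MyAux

variable {α : Type*}

lemma con_base_spec (M : Matroid α) {C B : Set α} (hC : C ⊆ M.E)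
    (hB : (M.con C).IsBase B) :
    B ⊆ M.E \ C ∧ M.Spanning (B ∪ C) ∧ ∀ x ∈ B, ¬ M.Spanning ((B \ {x}) ∪ C) := by
  set R := M.E \ C with hR
  have hRE : R ⊆ M✶.E := by rw [Matroid.dual_ground]; exact diff_subset
  have hBR : B ⊆ R := by
    have := hB.subset_ground
    simpa [Matroid.con] using this
  have hB' : (M✶ ↾ R).IsBase (R \ B) := by
    have h1 : (M✶ ↾ R)✶.IsBase B := hB
    have hBE : B ⊆ (M✶ ↾ R).E := by simpa using hBR
    rw [Matroid.dual_isBase_iff hBE] at h1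
    simpa using h1
  have hX : M✶.IsBasis (R \ B) R := by
    rwa [Matroid.isBase_restrict_iff hRE] at hB'
  have hco : M.Coindep (R \ B) := Matroid.coindep_def.mpr hX.indep
  have hcompl : M.E \ (R \ B) = B ∪ C := by
    ext x
    simp only [hR, mem_diff, mem_union]
    constructor
    · rintro ⟨hxE, hx⟩
      by_cases hxC : x ∈ C
      · exact Or.inr hxC
      · exact Or.inl (by_contra fun hxB => hx ⟨⟨hxE, hxC⟩, hxB⟩)
    · rintro (hxB | hxC)
      · exact ⟨(hBR hxB).1, fun h => h.2 hxB⟩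
      · exact ⟨hC hxC, fun h => h.1.2 hxC⟩
  have hsp : M.Spanning (B ∪ C) := hcompl ▸ hco.compl_spanning
  refine ⟨hBR, hsp, fun x hxB hspx => ?_⟩
  have hsub : (B \ {x}) ∪ C ⊆ M.E := union_subset ((diff_subset.trans hBR).trans diff_subset) hC
  have hco2 : M.Coindep (M.E \ ((B \ {x}) ∪ C)) :=
    (Matroid.spanning_iff_compl_coindep hsub).mp hspx
  have heq : M.E \ ((B \ {x}) ∪ C) = insert x (R \ B) := by
    ext y
    simp only [hR, mem_diff, mem_union, mem_insert_iff, mem_singleton_iff]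
    constructor
    · rintro ⟨hyE, hy⟩
      push_neg at hy
      obtain ⟨hy1, hy2⟩ := hy
      by_cases hyB : y ∈ B
      · exact Or.inl (hy1 hyB)
      · exact Or.inr ⟨⟨hyE, hy2⟩, hyB⟩
    · rintro (rfl | ⟨⟨hyE, hyC⟩, hyB⟩)
      · exact ⟨(hBR hxB).1, by simp [hxB, (hBR hxB).2]⟩
      · exact ⟨hyE, by simp [hyB, hyC]⟩
  rw [heq] at hco2
  have hind : M✶.Indep (insert x (R \ B)) := hco2.indep
  have := hX.mem_of_insert_indep (hBR hxB) hind
  exact this.2 hxB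

lemma base_union_of_spec (M : Matroid α) {C I B : Set α} (hI : M.IsBasis I C)
    (hBR : B ⊆ M.E \ C) (hsp : M.Spanning (B ∪ C))
    (hmin : ∀ x ∈ B, ¬ M.Spanning ((B \ {x}) ∪ C)) : M.IsBase (B ∪ I) := by
  have hIC : I ⊆ C := hI.subset
  have hCE : C ⊆ M.E := hI.subset_ground
  have hBE : B ⊆ M.E := hBR.trans diff_subset
  have hBIE : B ∪ I ⊆ M.E := union_subset hBE (hIC.trans hCE)
  obtain ⟨W, hW, hIW⟩ := hI.indep.subset_isBasis_of_subset (subset_union_right (s := B)) hBIE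
  have hclBC : M.closure (B ∪ I) = M.closure (B ∪ C) := by
    rw [← M.closure_union_closure_right_eq B I, hI.closure_eq_closure,
      M.closure_union_closure_right_eq]
  have hWsp : M.Spanning W := by
    rw [Matroid.spanning_iff_closure_eq hW.indep.subset_ground, hW.closure_eq_closure, hclBC,
      (Matroid.spanning_iff_closure_eq (union_subset hBE hCE)).mp hsp]
  by_cases hBW : B ⊆ W
  · have hWeq : W = B ∪ I := subset_antisymm hW.subset (union_subset hBW hIW)
    rw [← hWeq]
    exact hW.indep.isBase_of_spanning hWsp
  · obtain ⟨x, hxB, hxW⟩ := not_subset.mp hBW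
    refine absurd (hWsp.superset (T := (B \ {x}) ∪ C) (fun w hw => ?_)
      (union_subset ((diff_subset.trans hBE)) hCE)) (hmin x hxB)
    rcases hW.subset hw with hwB | hwI
    · exact Or.inl ⟨hwB, fun h => hxW (h ▸ hw)⟩
    · exact Or.inr (hIC hwI)

lemma ncard_subsets {T : Set α} (hT : T.Finite) (d : ℕ) :
    {S : Set α | S ⊆ T ∧ S.ncard = d}.ncard = T.ncard.choose d := by
  classical
  have hset : {S : Set α | S ⊆ T ∧ S.ncard = d} =
      (fun F : Finset α => (F : Set α)) '' ↑(hT.toFinset.powersetCard d) := by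
    ext S
    simp only [mem_setOf_eq, mem_image, Finset.mem_coe, Finset.mem_powersetCard,
      Finite.subset_toFinset]
    constructor
    · rintro ⟨hsub, hcard⟩
      have hSfin : S.Finite := hT.subset hsub
      exact ⟨hSfin.toFinset, ⟨by simpa [Finite.coe_toFinset] using hsub,
        by rw [← Set.ncard_eq_toFinset_card S hSfin, hcard]⟩, by simp⟩
    · rintro ⟨F, ⟨hFsub, hFcard⟩, rfl⟩
      exact ⟨hFsub, by rw [Set.ncard_coe_finset, hFcard]⟩
  rw [hset, Set.ncard_image_of_injOn (fun a _ b _ h => Finset.coe_injective h),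
    Set.ncard_coe_finset, Finset.card_powersetCard, Set.ncard_eq_toFinset_card T hT]

end MyAux

/-- If `M` has a minor isomorphic to `U_{d,2d}` for some `d ≥ 2`, then some pair of bases
`B₁, B₂` of `M` satisfies `Δ(B₁,B₂) = C(2d-1, d)`. -/
theorem minor_uniform {α : Type*} (M : Matroid α) (hfin : M.E.Finite) (d : ℕ) (hd : 2 ≤ d)
    (hminor : ∃ (A C : Set α) (N : Matroid α), A ⊆ M.E ∧ C ⊆ M.E ∧ Disjoint A C ∧
      N = (M.restrict (M.E \ A)).con C ∧
      N.E.ncard = 2 * d ∧ (∀ B, N.IsBase B ↔ B ⊆ N.E ∧ B.ncard = d)) :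
    ∃ B₁ B₂, M.IsBase B₁ ∧ M.IsBase B₂ ∧ M.deltaPairs B₁ B₂ = (2 * d - 1).choose d := by
  classical
  obtain ⟨A, C, N, hAE, hCE, hAC, hNdef, hNcard, hNbase⟩ := hminor
  set M' := M.restrict (M.E \ A) with hM'
  have hM'E : M'.E = M.E \ A := rfl
  have hCM' : C ⊆ M'.E := by
    rw [hM'E]
    exact fun x hx => ⟨hCE hx, fun hA => (Set.disjoint_left.mp hAC hA) hx⟩
  have hNE : N.E = (M.E \ A) \ C := by
    rw [hNdef]; rfl
  have hNEsubE : N.E ⊆ M.E := by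
    rw [hNE]; exact diff_subset.trans diff_subset
  have hNEfin : N.E.Finite := hfin.subset hNEsubE
  obtain ⟨I, hI⟩ := M'.exists_isBasis C hCM'
  have hICsub : I ⊆ C := hI.subset
  have hlift : ∀ B, N.IsBase B → M'.IsBase (B ∪ I) := by
    intro B hB
    rw [hNdef] at hB
    obtain ⟨h1, h2, h3⟩ := MyAux.con_base_spec M' hCM' hB
    exact MyAux.base_union_of_spec M' hI h1 h2 h3
  have hM'base : ∀ X, M'.IsBase X → M.IsBasis X (M.E \ A) := by
    intro X hX
    rw [hM'] at hX
    exact (Matroid.isBase_restrict_iff diff_subset).mp hX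
  obtain ⟨B', hB'N⟩ := N.exists_isBase
  have hB'sub : B' ⊆ N.E := ((hNbase B').mp hB'N).1
  have hB'card : B'.ncard = d := ((hNbase B').mp hB'N).2
  have hB'fin : B'.Finite := hNEfin.subset hB'sub
  have hBasis1 : M.IsBasis (B' ∪ I) (M.E \ A) := hM'base _ (hlift _ hB'N)
  obtain ⟨B₁, hB₁, hsub1⟩ := hBasis1.indep.exists_isBase_superset
  set J := B₁ \ (B' ∪ I) with hJ
  have hJA : J ⊆ A := by
    rintro x ⟨hxB₁, hxBI⟩
    by_contra hxA
    have hxE : x ∈ M.E := hB₁.subset_ground hxB₁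
    exact hxBI (hBasis1.mem_of_insert_indep ⟨hxE, hxA⟩
      (hB₁.indep.subset (Set.insert_subset hxB₁ hsub1)))
  set K := I ∪ J with hK
  have hB'Jeq : (B' ∪ I) ∪ J = B₁ := by
    rw [hJ, Set.union_diff_cancel hsub1]
  have hB₁eq : B' ∪ K = B₁ := by
    rw [hK, ← Set.union_assoc, hB'Jeq]
  clear_value J K
  have hKE : K ⊆ M.E := by
    rw [hK]; exact Set.union_subset (hICsub.trans hCE) (hJA.trans hAE)
  have hKfin : K.Finite := hfin.subset hKE
  have hKNE : Disjoint N.E K := by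
    rw [hK, Set.disjoint_union_right]
    constructor
    · rw [hNE]
      exact Set.disjoint_left.mpr fun x hx hxI => hx.2 (hICsub hxI)
    · rw [hNE]
      exact Set.disjoint_left.mpr fun x hx hxJ => hx.1.2 (hJA hxJ)
  have hB'K : Disjoint B' K := hKNE.mono_left hB'sub
  -- forward transfer
  have hfwd : ∀ S, S ⊆ N.E → S.ncard = d → M.IsBase (S ∪ K) := by
    intro S hS hcard
    have hSfin : S.Finite := hNEfin.subset hS
    have hNS : N.IsBase S := (hNbase S).mpr ⟨hS, hcard⟩
    have hBS : M.IsBasis (S ∪ I) (M.E \ A) := hM'base _ (hlift _ hNS)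
    have hassoc : S ∪ K = (S ∪ I) ∪ J := by rw [hK, Set.union_assoc]
    have hSKE : S ∪ K ⊆ M.E := Set.union_subset (hS.trans hNEsubE) hKE
    have hcl : M.closure (S ∪ K) = M.E := by
      rw [hassoc, ← M.closure_union_closure_left_eq, hBS.closure_eq_closure,
        ← hBasis1.closure_eq_closure, M.closure_union_closure_left_eq, hB'Jeq,
        hB₁.spanning.closure_eq]
    have hsp : M.Spanning (S ∪ K) := (Matroid.spanning_iff_closure_eq hSKE).mpr hcl
    have hSK : Disjoint S K := hKNE.mono_left hS
    have hSKenc : (S ∪ K).encard = B₁.encard := by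
      rw [Set.encard_union_eq hSK, ← hB₁eq, Set.encard_union_eq hB'K,
        ← hSfin.cast_ncard_eq, ← hB'fin.cast_ncard_eq, hcard, hB'card]
    obtain ⟨B'', hB'', hB''sub⟩ := hsp.exists_isBase_subset
    have hfix : B'' = S ∪ K := (hfin.subset hSKE).eq_of_subset_of_encard_le' hB''sub
      (by rw [hSKenc]; exact (hB''.encard_eq_encard_of_isBase hB₁).symm.le)
    exact hfix ▸ hB''
  -- reverse cardinality
  have hrev : ∀ S, S ⊆ N.E → M.IsBase (S ∪ K) → S.ncard = d := by
    intro S hS hbase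
    have hSK : Disjoint S K := hKNE.mono_left hS
    have h1 : S.encard + K.encard = B'.encard + K.encard := by
      have h := hbase.encard_eq_encard_of_isBase hB₁
      rwa [Set.encard_union_eq hSK, ← hB₁eq, Set.encard_union_eq hB'K] at h
    have h2 : S.encard = B'.encard := WithTop.add_right_cancel hKfin.encard_lt_top.ne h1
    rw [Set.ncard_def, h2, ← Set.ncard_def, hB'card]
  have hB₁' : M.IsBase (B' ∪ K) := hB₁eq ▸ hB₁
  have hdcard : (N.E \ B').ncard = d := by
    rw [Set.ncard_diff hB'sub hB'fin, hNcard, hB'card]; omega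
  have hB₂ : M.IsBase ((N.E \ B') ∪ K) := hfwd _ diff_subset hdcard
  have hU : (B' ∪ K) ∪ ((N.E \ B') ∪ K) = N.E ∪ K := by
    ext x
    have := @hB'sub x
    simp only [Set.mem_union, Set.mem_diff]
    tauto
  have hInt : (B' ∪ K) ∩ ((N.E \ B') ∪ K) = K := by
    ext x
    simp only [Set.mem_inter_iff, Set.mem_union, Set.mem_diff]
    tauto
  obtain ⟨e, he⟩ : N.E.Nonempty := Set.nonempty_of_ncard_ne_zero (by rw [hNcard]; omega)
  refine ⟨B' ∪ K, (N.E \ B') ∪ K, hB₁', hB₂, ?_⟩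
  set T := N.E \ {e} with hT
  have hTfin : T.Finite := hNEfin.subset diff_subset
  have hTcard : T.ncard = 2 * d - 1 := by
    rw [hT, Set.ncard_diff (Set.singleton_subset_iff.mpr he) (Set.finite_singleton e),
      hNcard, Set.ncard_singleton]
  have hsetEq : {p : Sym2 (Set α) | ∃ D₁ D₂, p = s(D₁, D₂) ∧ M.IsBase D₁ ∧ M.IsBase D₂ ∧
      D₁ ∪ D₂ = (B' ∪ K) ∪ ((N.E \ B') ∪ K) ∧ D₁ ∩ D₂ = (B' ∪ K) ∩ ((N.E \ B') ∪ K)} =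
      (fun S => s(S ∪ K, (N.E \ S) ∪ K)) '' {S : Set α | S ⊆ T ∧ S.ncard = d} := by
    rw [hU, hInt]
    ext p
    simp only [Set.mem_setOf_eq, Set.mem_image]
    constructor
    · rintro ⟨D₁, D₂, rfl, hD₁, hD₂, hu, hi⟩
      have hKD₁ : K ⊆ D₁ := hi ▸ Set.inter_subset_left
      have hKD₂ : K ⊆ D₂ := hi ▸ Set.inter_subset_right
      have hS₁NE : D₁ \ K ⊆ N.E := by
        rintro x ⟨hx1, hxK⟩
        have hx' : x ∈ N.E ∪ K := hu ▸ Set.mem_union_left _ hx1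
        exact hx'.resolve_right hxK
      have hD₁eq : (D₁ \ K) ∪ K = D₁ := Set.diff_union_of_subset hKD₁
      have hD₂eq : (D₂ \ K) ∪ K = D₂ := Set.diff_union_of_subset hKD₂
      have hcompl : D₂ \ K = N.E \ (D₁ \ K) := by
        ext x
        simp only [Set.mem_diff]
        constructor
        · rintro ⟨hx2, hxK⟩
          have hx' : x ∈ N.E ∪ K := hu ▸ Set.mem_union_right _ hx2
          refine ⟨hx'.resolve_right hxK, fun hx1 => hxK ?_⟩
          rw [← hi]; exact ⟨hx1.1, hx2⟩
        · rintro ⟨hxNE, hx1⟩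
          have hxK : x ∉ K := fun h => Set.disjoint_left.mp hKNE hxNE h
          have hx' : x ∈ D₁ ∪ D₂ := by rw [hu]; exact Set.mem_union_left _ hxNE
          rcases hx' with h | h
          · exact absurd ⟨h, hxK⟩ hx1
          · exact ⟨h, hxK⟩
      have hc1 : (D₁ \ K).ncard = d := hrev _ hS₁NE (by rwa [hD₁eq])
      by_cases he1 : e ∈ D₁ \ K
      · have hS₂NE : D₂ \ K ⊆ N.E := hcompl ▸ diff_subset
        have hc2 : (D₂ \ K).ncard = d := hrev _ hS₂NE (by rwa [hD₂eq])
        refine ⟨D₂ \ K, ⟨fun x hx => ⟨hS₂NE hx, ?_⟩, hc2⟩, ?_⟩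
        · intro hxe
          rw [Set.mem_singleton_iff] at hxe
          subst hxe
          exact (hcompl ▸ hx).2 he1
        · have hdd : N.E \ (D₂ \ K) = D₁ \ K := by
            rw [hcompl, Set.diff_diff_cancel_left hS₁NE]
          rw [hdd, hD₂eq, hD₁eq]
          exact Sym2.eq_swap
      · refine ⟨D₁ \ K, ⟨fun x hx => ⟨hS₁NE hx, fun hxe => ?_⟩, hc1⟩, ?_⟩
        · rw [Set.mem_singleton_iff] at hxe
          exact he1 (hxe ▸ hx)
        · rw [hD₁eq, ← hcompl, hD₂eq]
    · rintro ⟨S, ⟨hST, hScard⟩, rfl⟩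
      have hSNE : S ⊆ N.E := hST.trans diff_subset
      refine ⟨S ∪ K, (N.E \ S) ∪ K, rfl, hfwd S hSNE hScard,
        hfwd _ diff_subset (by rw [Set.ncard_diff hSNE (hNEfin.subset hSNE), hNcard, hScard]; omega),
        ?_, ?_⟩
      · ext x
        have := @hSNE x
        simp only [Set.mem_union, Set.mem_diff]
        tauto
      · ext x
        simp only [Set.mem_inter_iff, Set.mem_union, Set.mem_diff]
        tauto
  have hinj : Set.InjOn (fun S => s(S ∪ K, (N.E \ S) ∪ K)) {S : Set α | S ⊆ T ∧ S.ncard = d} := by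
    rintro S hS S' hS' hff
    simp only [Sym2.eq_iff] at hff
    have hSsubNE : S ⊆ N.E := hS.1.trans diff_subset
    have hS'subNE : S' ⊆ N.E := hS'.1.trans diff_subset
    have hdS : Disjoint S K := hKNE.mono_left hSsubNE
    have hdS' : Disjoint S' K := hKNE.mono_left hS'subNE
    have e1 : (S ∪ K) \ K = S := by rw [Set.union_diff_right, hdS.sdiff_eq_left]
    rcases hff with ⟨h1, _⟩ | ⟨h1, _⟩
    · have e2 : (S' ∪ K) \ K = S' := by rw [Set.union_diff_right, hdS'.sdiff_eq_left]
      rw [← e1, h1, e2]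
    · have hdNE : Disjoint (N.E \ S') K := hKNE.mono_left diff_subset
      have e2 : ((N.E \ S') ∪ K) \ K = N.E \ S' := by
        rw [Set.union_diff_right, hdNE.sdiff_eq_left]
      have hSS' : S = N.E \ S' := by rw [← e1, h1, e2]
      have heS : e ∈ S := by
        rw [hSS']
        exact ⟨he, fun h => (hS'.1 h).2 rfl⟩
      exact absurd (hS.1 heS).2 (by simp)
  show Set.ncard _ = _
  rw [hsetEq, Set.ncard_image_of_injOn hinj, MyAux.ncard_subsets hTfin d, hTcard]
end

section
/- A matroid M is binary (has no minor isomorphic to U_{2,4}) if and only if Δ(B₁,B₂) ≠ 3 for every pair of bases B₁, B₂ of M, where Δ(B₁,B₂) is the number of unordered pairs {D₁,D₂} of bases of M with D₁ ∪ D₂ = B₁ ∪ B₂ and D₁ ∩ D₂ = B₁ ∩ B₂. -/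
open Set

namespace BinaryIffAux

open Matroid

variable {α : Type*} {M : Matroid α} {B B' B₁ B₂ X D I I' C S T : Set α} {e f : α}

/-- The set of unordered pairs of bases with prescribed union and intersection. -/
def pairSet (M : Matroid α) (B₁ B₂ : Set α) : Set (Sym2 (Set α)) :=
  {p : Sym2 (Set α) | ∃ D₁ D₂, p = s(D₁, D₂) ∧ M.IsBase D₁ ∧ M.IsBase D₂ ∧
    D₁ ∪ D₂ = B₁ ∪ B₂ ∧ D₁ ∩ D₂ = B₁ ∩ B₂}

lemma base_of_spanning_of_encard_le (hfin : M.E.Finite) (hsp : M.Spanning X)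
    (hB : M.IsBase B) (hcard : X.encard ≤ B.encard) : M.IsBase X := by
  obtain ⟨B', hB', hB'X⟩ := hsp.exists_isBase_subset
  have hXfin : X.Finite := hfin.subset hsp.subset_ground
  have : B' = X := (hXfin.subset hB'X).eq_of_subset_of_encard_le hB'X
    (le_trans hcard (hB.encard_eq_encard_of_isBase hB').le)
  exact this ▸ hB'


lemma base_union_congr (hfin : M.E.Finite) (hI : M.IsBasis I C) (hI' : M.IsBasis I' C)
    (hB : M.IsBase (S ∪ I)) (hSC : Disjoint S C) : M.IsBase (S ∪ I') := by
  have hsp : M.Spanning (S ∪ I') := by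
    rw [Matroid.spanning_iff_closure_eq
      (union_subset (hB.subset_ground.trans' subset_union_left) hI'.left_subset_ground)]
    have h1 : M.closure (S ∪ I') = M.closure (S ∪ I) := by
      rw [← M.closure_union_closure_right_eq S I', hI'.closure_eq_closure,
        ← hI.closure_eq_closure, M.closure_union_closure_right_eq]
    rw [h1, hB.closure_eq]
  refine base_of_spanning_of_encard_le hfin hsp hB ?_
  rw [encard_union_eq (hSC.mono_right hI'.subset), encard_union_eq (hSC.mono_right hI.subset),
    hI'.encard_eq_encard hI]


lemma con_ground (M : Matroid α) (C : Set α) : (M.con C).E = M.E \ C := rfl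

lemma con_base_iff (hfin : M.E.Finite) (hC : C ⊆ M.E) (hI : M.IsBasis I C) (S : Set α) :
    (M.con C).IsBase S ↔ S ⊆ M.E \ C ∧ M.IsBase (S ∪ I) := by
  have hdg : (M✶ ↾ (M.E \ C)).E = M.E \ C := rfl
  constructor
  · intro hS
    have hSE : S ⊆ M.E \ C := hS.subset_ground
    have hJ : (M✶ ↾ (M.E \ C)).IsBase ((M.E \ C) \ S) := by
      have := (Matroid.dual_isBase_iff (M := M✶ ↾ (M.E \ C)) (B := S) (by rwa [hdg])).mp hS
      rwa [hdg] at this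
    rw [Matroid.isBase_restrict_iff (by simp [diff_subset])] at hJ
    obtain ⟨Bs, hBs, hJeq⟩ := hJ.exists_isBase
    have hBsE : Bs ⊆ M.E := hBs.subset_ground
    have hBbase : M.IsBase (M.E \ Bs) := hBs.compl_isBase_of_dual
    have hbascompl : M✶.IsBasis ((M.E \ (M.E \ Bs)) ∩ (M.E \ C)) (M.E \ C) := by
      rwa [diff_diff_cancel_left hBsE, ← hJeq]
    have hbasC : M.IsBasis ((M.E \ Bs) ∩ C) C :=
      (hBbase.inter_isBasis_iff_compl_inter_isBasis_dual hC).mpr hbascompl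
    have h1 : (M.E \ Bs) ∩ (M.E \ C) = S := by
      rw [show (M.E \ Bs) ∩ (M.E \ C) = (M.E \ C) \ Bs by ext x; simp [mem_diff]; tauto,
        show (M.E \ C) \ Bs = (M.E \ C) \ (Bs ∩ (M.E \ C)) by rw [diff_inter_self_eq_diff],
        ← hJeq, diff_diff_cancel_left hSE]
    have hsplit : M.E \ Bs = S ∪ ((M.E \ Bs) ∩ C) := by
      ext x
      constructor
      · intro hx
        by_cases hxC : x ∈ C
        · exact Or.inr ⟨hx, hxC⟩
        · exact Or.inl (h1 ▸ ⟨hx, hx.1, hxC⟩)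
      · rintro (hx | hx)
        · exact h1 ▸ hx |>.1
        · exact hx.1
    refine ⟨hSE, ?_⟩
    have hb2 : M.IsBase (S ∪ ((M.E \ Bs) ∩ C)) := hsplit ▸ hBbase
    exact base_union_congr hfin hbasC hI hb2 (disjoint_sdiff_left.mono_left hSE)
  · rintro ⟨hSE, hSI⟩
    have hSIC : (S ∪ I) ∩ C = I := by
      apply subset_antisymm
      · rintro x ⟨hx1 | hx1, hx2⟩
        · exact absurd hx2 (fun h => (hSE hx1).2 h)
        · exact hx1
      · exact subset_inter subset_union_right hI.subset
    have hbasC : M.IsBasis ((S ∪ I) ∩ C) C := by rw [hSIC]; exact hI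
    have hdualbas := (hSI.inter_isBasis_iff_compl_inter_isBasis_dual hC).mp hbasC
    have heq : (M.E \ (S ∪ I)) ∩ (M.E \ C) = (M.E \ C) \ S := by
      ext x
      constructor
      · rintro ⟨⟨hxE, hx⟩, -, hxC⟩
        exact ⟨⟨hxE, hxC⟩, fun h => hx (Or.inl h)⟩
      · rintro ⟨⟨hxE, hxC⟩, hxS⟩
        refine ⟨⟨hxE, ?_⟩, hxE, hxC⟩
        rintro (h | h)
        · exact hxS h
        · exact hxC (hI.subset h)
    rw [heq] at hdualbas
    have hres : (M✶ ↾ (M.E \ C)).IsBase ((M.E \ C) \ S) := hdualbas.restrict_isBase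
    exact (Matroid.dual_isBase_iff (M := M✶ ↾ (M.E \ C)) (B := S) (by rwa [hdg])).mpr
      (by rwa [hdg])


lemma exists_symm_exchange (hfin : M.E.Finite) (hB : M.IsBase B) (hB' : M.IsBase B')
    (he : e ∈ B \ B') :
    ∃ f ∈ B' \ B, M.IsBase (insert f (B \ {e})) ∧ M.IsBase (insert e (B' \ {f})) := by
  obtain ⟨heB, heB'⟩ := he
  have heE : e ∈ M.E := hB.subset_ground heB
  have hecl : e ∉ M.closure (B \ {e}) := hB.indep.notMem_closure_sdiff_of_mem heB
  set K := B' ∩ M.closure (B \ {e}) with hK_def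
  have hK : M.Indep K := hB'.indep.inter_right _
  have heK : e ∉ K := fun h => hecl h.2
  have heKcl : e ∉ M.closure K := fun h => by
    have : M.closure K ⊆ M.closure (B \ {e}) :=
      (M.closure_subset_closure inter_subset_right).trans (by rw [Matroid.closure_closure])
    exact hecl (this h)
  have hKe : M.Indep (insert e K) := by
    rw [hK.insert_indep_iff_of_notMem heK]
    exact ⟨heE, heKcl⟩
  have hsub : insert e K ⊆ insert e B' := insert_subset_insert inter_subset_left
  obtain ⟨L, hL, hKeL⟩ := hKe.subset_isBasis_of_subset hsub
    (insert_subset heE hB'.subset_ground)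
  have hB'bas : M.IsBasis B' (insert e B') :=
    hB'.isBasis_of_subset (insert_subset heE hB'.subset_ground) (subset_insert _ _)
  have hLcard : L.encard = B'.encard := hL.encard_eq_encard hB'bas
  have hLne : L ≠ insert e B' := by
    intro h
    have : M.Indep (insert e B') := h ▸ hL.indep
    exact (hB'.insert_dep ⟨heE, heB'⟩).not_indep this
  obtain ⟨f, hfeB', hfL⟩ : ∃ f ∈ insert e B', f ∉ L :=
    not_subset.mp (fun hss => hLne (hL.subset.antisymm hss))
  have heL : e ∈ L := hKeL (mem_insert _ _)
  have hfe : f ≠ e := fun h => hfL (h ▸ heL)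
  have hfB' : f ∈ B' := hfeB'.resolve_left hfe
  have hfK : f ∉ K := fun h => hfL (hKeL (mem_insert_of_mem _ h))
  have hfcl : f ∉ M.closure (B \ {e}) := fun h => hfK ⟨hfB', h⟩
  have hfB : f ∉ B := by
    intro hfB
    exact hfcl (M.subset_closure (B \ {e}) (diff_subset.trans hB.subset_ground)
      ⟨hfB, hfe⟩)
  -- L = insert e (B' \ {f})
  have hLsub : L ⊆ insert e (B' \ {f}) := by
    intro x hx
    rcases hL.subset hx with h | h
    · exact Or.inl h
    · exact Or.inr ⟨h, fun hxf => hfL (hxf ▸ hx)⟩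
  have hcard2 : (insert e (B' \ {f})).encard = B'.encard := by
    rw [encard_insert_of_notMem (fun h => heB' h.1),
      ← encard_insert_of_notMem (fun h : f ∈ B' \ {f} => h.2 rfl), insert_diff_singleton,
      insert_eq_of_mem hfB']
  have hLeq : L = insert e (B' \ {f}) := by
    refine Set.Finite.eq_of_subset_of_encard_le ?_ hLsub (by rw [hcard2, hLcard])
    exact (hfin.subset (insert_subset heE hB'.subset_ground)).subset
      hL.subset
  have hside2 : M.IsBase (insert e (B' \ {f})) :=
    hB'.exchange_isBase_of_indep heB' (hLeq ▸ hL.indep)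
  have hside1 : M.IsBase (insert f (B \ {e})) := by
    refine hB.exchange_isBase_of_indep hfB ?_
    rw [(hB.indep.diff {e}).insert_indep_iff_of_notMem (fun h => hfB h.1)]
    exact ⟨hB'.subset_ground hfB', hfcl⟩
  exact ⟨f, ⟨hfB', hfB⟩, hside1, hside2⟩


lemma two_subset (hab : a ≠ b) (hac : a ≠ c) (had : a ≠ d) (hbc : b ≠ c) (hbd : b ≠ d)
    (hcd : c ≠ d) (hS : S ⊆ {a, b, c, d}) (hSc : S.ncard = 2) :
    S = {a, b} ∨ S = {a, c} ∨ S = {a, d} ∨ S = {b, c} ∨ S = {b, d} ∨ S = {c, d} := by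
  obtain ⟨p, q, hpq, rfl⟩ := Set.ncard_eq_two.mp hSc
  have hp := hS (show p ∈ ({p, q} : Set α) from Or.inl rfl)
  have hq := hS (show q ∈ ({p, q} : Set α) from Or.inr rfl)
  simp only [mem_insert_iff, mem_singleton_iff] at hp hq
  rcases hp with rfl | rfl | rfl | rfl <;> rcases hq with rfl | rfl | rfl | rfl <;>
    simp_all [Set.pair_comm] <;> tauto

lemma pair_partition (hab : a ≠ b) (hac : a ≠ c) (had : a ≠ d) (hbc : b ≠ c) (hbd : b ≠ d)
    (hcd : c ≠ d) (hST : S ∪ T = {a, b, c, d}) (hdisj : S ∩ T = ∅) (hSc : S.ncard = 2)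
    (haS : a ∈ S) :
    (S = {a, b} ∧ T = {c, d}) ∨ (S = {a, c} ∧ T = {b, d}) ∨ (S = {a, d} ∧ T = {b, c}) := by
  have hSsub : S ⊆ {a, b, c, d} := hST ▸ subset_union_left
  have hTmem : ∀ z, z ∈ T ↔ (z ∈ ({a, b, c, d} : Set α) ∧ z ∉ S) := by
    intro z
    constructor
    · intro hz
      refine ⟨hST ▸ Or.inr hz, fun hzS => ?_⟩
      have : z ∈ S ∩ T := ⟨hzS, hz⟩
      rw [hdisj] at this
      exact this
    · rintro ⟨hz, hzS⟩
      have : z ∈ S ∪ T := hST ▸ hz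
      exact this.resolve_left hzS
  have hcases := two_subset hab hac had hbc hbd hcd hSsub hSc
  have habS : ¬ (S = {b, c} ∨ S = {b, d} ∨ S = {c, d}) := by
    rintro (rfl | rfl | rfl) <;>
      · rcases haS with h | h <;> simp_all
  rcases hcases with rfl | rfl | rfl | h | h | h
  · refine Or.inl ⟨rfl, ?_⟩
    ext z
    rw [hTmem z]
    simp only [mem_insert_iff, mem_singleton_iff]
    constructor
    · rintro ⟨rfl | rfl | rfl | rfl, h2⟩ <;> tauto
    · rintro (rfl | rfl) <;> exact ⟨by tauto, by rintro (rfl | rfl) <;> tauto⟩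
  · refine Or.inr (Or.inl ⟨rfl, ?_⟩)
    ext z
    rw [hTmem z]
    simp only [mem_insert_iff, mem_singleton_iff]
    constructor
    · rintro ⟨rfl | rfl | rfl | rfl, h2⟩ <;> tauto
    · rintro (rfl | rfl) <;> exact ⟨by tauto, by rintro (rfl | rfl) <;> tauto⟩
  · refine Or.inr (Or.inr ⟨rfl, ?_⟩)
    ext z
    rw [hTmem z]
    simp only [mem_insert_iff, mem_singleton_iff]
    constructor
    · rintro ⟨rfl | rfl | rfl | rfl, h2⟩ <;> tauto
    · rintro (rfl | rfl) <;> exact ⟨by tauto, by rintro (rfl | rfl) <;> tauto⟩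
  all_goals exact absurd (by tauto) habS


lemma exchange_union (he : e ∈ B₁ \ B₂) (hf : f ∈ B₂ \ B₁) :
    insert f (B₁ \ {e}) ∪ insert e (B₂ \ {f}) = B₁ ∪ B₂ := by
  obtain ⟨he1, he2⟩ := he; obtain ⟨hf1, hf2⟩ := hf
  ext z
  simp only [mem_union, mem_insert_iff, mem_diff, mem_singleton_iff]
  constructor
  · rintro (⟨rfl | ⟨h, -⟩⟩ | ⟨rfl | ⟨h, -⟩⟩) <;> tauto
  · rintro (h | h)
    · by_cases hz : z = e
      · subst hz; tauto
      · tauto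
    · by_cases hz : z = f
      · subst hz; tauto
      · tauto

lemma exchange_inter (he : e ∈ B₁ \ B₂) (hf : f ∈ B₂ \ B₁) :
    insert f (B₁ \ {e}) ∩ insert e (B₂ \ {f}) = B₁ ∩ B₂ := by
  have hef : e ≠ f := fun h => hf.2 (h ▸ he.1)
  obtain ⟨he1, he2⟩ := he; obtain ⟨hf1, hf2⟩ := hf
  ext z
  simp only [mem_inter_iff, mem_insert_iff, mem_diff, mem_singleton_iff]
  constructor
  · rintro ⟨rfl | ⟨h1, h1'⟩, rfl | ⟨h2, h2'⟩⟩ <;> tauto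
  · rintro ⟨h1, h2⟩
    have hze : z ≠ e := fun h => he2 (h ▸ h2)
    have hzf : z ≠ f := fun h => hf2 (h ▸ h1)
    tauto

lemma mem_pairSet_exchange (he : e ∈ B₁ \ B₂) (hf : f ∈ B₂ \ B₁)
    (hX : M.IsBase (insert f (B₁ \ {e}))) (hY : M.IsBase (insert e (B₂ \ {f}))) :
    s(insert f (B₁ \ {e}), insert e (B₂ \ {f})) ∈ pairSet M B₁ B₂ :=
  ⟨_, _, rfl, hX, hY, exchange_union he hf, exchange_inter he hf⟩

/-- Two exchange pairs based at distinct elements of `B₁ \ B₂` are distinct,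
provided a third element exists. -/
lemma exchange_pairs_ne {ea eb ec fa fb : α} (hea : ea ∈ B₁ \ B₂) (heb : eb ∈ B₁ \ B₂)
    (hec : ec ∈ B₁ \ B₂) (hfa : fa ∈ B₂ \ B₁) (hfb : fb ∈ B₂ \ B₁)
    (hab : ea ≠ eb) (hac : ea ≠ ec) (hbc : eb ≠ ec) :
    s(insert fa (B₁ \ {ea}), insert ea (B₂ \ {fa})) ≠
      s(insert fb (B₁ \ {eb}), insert eb (B₂ \ {fb})) := by
  intro hQ
  rw [Sym2.eq_iff] at hQ
  rcases hQ with ⟨h1, -⟩ | ⟨h1, -⟩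
  · -- insert fa (B₁ \ {ea}) = insert fb (B₁ \ {eb}) : where is eb?
    have : eb ∈ insert fa (B₁ \ {ea}) := Or.inr ⟨heb.1, hab.symm⟩
    rw [h1] at this
    rcases this with h | h
    · exact hfb.2 (h ▸ heb.1)
    · exact h.2 rfl
  · -- insert fa (B₁ \ {ea}) = insert eb (B₂ \ {fb}) : where is ec?
    have : ec ∈ insert fa (B₁ \ {ea}) := Or.inr ⟨hec.1, hac.symm⟩
    rw [h1] at this
    rcases this with h | h
    · exact hbc (h ▸ rfl)
    · exact hec.2 h.1


lemma exchange_pair_ne_self {ea eb fa : α} (hea : ea ∈ B₁ \ B₂) (heb : eb ∈ B₁ \ B₂)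
    (hfa : fa ∈ B₂ \ B₁) (hab : ea ≠ eb) :
    s(insert fa (B₁ \ {ea}), insert ea (B₂ \ {fa})) ≠ s(B₁, B₂) := by
  intro hQ
  rw [Sym2.eq_iff] at hQ
  rcases hQ with ⟨h1, -⟩ | ⟨h1, -⟩
  · exact hfa.2 (h1 ▸ (mem_insert _ _))
  · have : eb ∈ insert fa (B₁ \ {ea}) := Or.inr ⟨heb.1, hab.symm⟩
    exact heb.2 (h1 ▸ this)

lemma self_mem_pairSet (hB₁ : M.IsBase B₁) (hB₂ : M.IsBase B₂) :
    s(B₁, B₂) ∈ pairSet M B₁ B₂ := ⟨B₁, B₂, rfl, hB₁, hB₂, rfl, rfl⟩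

lemma no_three_diff (hfin : M.E.Finite) (hB₁ : M.IsBase B₁) (hB₂ : M.IsBase B₂)
    (h3 : (pairSet M B₁ B₂).ncard = 3) {e₁ e₂ e₃ : α}
    (h1 : e₁ ∈ B₁ \ B₂) (h2 : e₂ ∈ B₁ \ B₂) (h3' : e₃ ∈ B₁ \ B₂)
    (h12 : e₁ ≠ e₂) (h13 : e₁ ≠ e₃) (h23 : e₂ ≠ e₃) : False := by
  obtain ⟨f₁, hf₁, hX₁, hY₁⟩ := exists_symm_exchange hfin hB₁ hB₂ h1
  obtain ⟨f₂, hf₂, hX₂, hY₂⟩ := exists_symm_exchange hfin hB₁ hB₂ h2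
  obtain ⟨f₃, hf₃, hX₃, hY₃⟩ := exists_symm_exchange hfin hB₁ hB₂ h3'
  have hPfin : (pairSet M B₁ B₂).Finite := Set.finite_of_ncard_ne_zero (by omega)
  set t := pairSet M B₁ B₂ \ {s(B₁, B₂)} with ht_def
  have htcard : t.ncard = 2 := by
    rw [ht_def, Set.ncard_diff_singleton_of_mem (self_mem_pairSet hB₁ hB₂), h3]
  have hQmem : ∀ (ea : α), ea ∈ B₁ \ B₂ → ∀ (eb : α), eb ∈ B₁ \ B₂ → ea ≠ eb →
      ∀ (fa : α), fa ∈ B₂ \ B₁ → M.IsBase (insert fa (B₁ \ {ea})) →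
      M.IsBase (insert ea (B₂ \ {fa})) →
      s(insert fa (B₁ \ {ea}), insert ea (B₂ \ {fa})) ∈ t := by
    intro ea hea eb heb hab fa hfa hXa hYa
    exact ⟨mem_pairSet_exchange hea hfa hXa hYa, exchange_pair_ne_self hea heb hfa hab⟩
  have hm1 := hQmem e₁ h1 e₂ h2 h12 f₁ hf₁ hX₁ hY₁
  have hm2 := hQmem e₂ h2 e₁ h1 h12.symm f₂ hf₂ hX₂ hY₂
  have hm3 := hQmem e₃ h3' e₁ h1 h13.symm f₃ hf₃ hX₃ hY₃
  have hne12 := exchange_pairs_ne h1 h2 h3' hf₁ hf₂ h12 h13 h23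
  have hne13 := exchange_pairs_ne h1 h3' h2 hf₁ hf₃ h13 h12 h23.symm
  have hne23 := exchange_pairs_ne h2 h3' h1 hf₂ hf₃ h23 h12.symm h13.symm
  have hsub : ({s(insert f₁ (B₁ \ {e₁}), insert e₁ (B₂ \ {f₁})),
      s(insert f₂ (B₁ \ {e₂}), insert e₂ (B₂ \ {f₂})),
      s(insert f₃ (B₁ \ {e₃}), insert e₃ (B₂ \ {f₃}))} : Set (Sym2 (Set α))) ⊆ t := by
    rintro p (rfl | rfl | rfl) <;> assumption
  have h33 : ({s(insert f₁ (B₁ \ {e₁}), insert e₁ (B₂ \ {f₁})),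
      s(insert f₂ (B₁ \ {e₂}), insert e₂ (B₂ \ {f₂})),
      s(insert f₃ (B₁ \ {e₃}), insert e₃ (B₂ \ {f₃}))} : Set (Sym2 (Set α))).ncard = 3 :=
    Set.ncard_eq_three.mpr ⟨_, _, _, hne12, hne13, hne23, rfl⟩
  have := Set.ncard_le_ncard hsub (hPfin.subset diff_subset)
  omega


lemma pairSet_subsingleton_of_eq (hB₁ : M.IsBase B₁) (hB₂ : M.IsBase B₂) (h : B₁ = B₂) :
    pairSet M B₁ B₂ ⊆ {s(B₁, B₂)} := by
  subst h
  rintro p ⟨D₁, D₂, rfl, hD₁, hD₂, hU, hI⟩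
  rw [union_self] at hU
  rw [inter_self] at hI
  have h1 : D₁ ⊆ B₁ := hU ▸ subset_union_left
  have h2 : D₂ ⊆ B₁ := hU ▸ subset_union_right
  rw [mem_singleton_iff, Sym2.eq_iff]
  exact Or.inl ⟨hD₁.eq_of_subset_isBase hB₁ h1, hD₂.eq_of_subset_isBase hB₁ h2⟩

lemma pairSet_subsingleton_of_single {x y : α} (hB₁ : M.IsBase B₁) (hB₂ : M.IsBase B₂)
    (hx : B₁ \ B₂ = {x}) (hy : B₂ \ B₁ = {y}) :
    pairSet M B₁ B₂ ⊆ {s(B₁, B₂)} := by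
  have hxm : x ∈ B₁ \ B₂ := hx ▸ rfl
  have hym : y ∈ B₂ \ B₁ := hy ▸ rfl
  rintro p ⟨D₁, D₂, rfl, hD₁, hD₂, hU, hI⟩
  have hIs1 : B₁ ∩ B₂ ⊆ D₁ := hI ▸ inter_subset_left
  have hIs2 : B₁ ∩ B₂ ⊆ D₂ := hI ▸ inter_subset_right
  have hU1 : D₁ ⊆ B₁ ∪ B₂ := hU ▸ subset_union_left
  have hU2 : D₂ ⊆ B₁ ∪ B₂ := hU ▸ subset_union_right
  -- a membership classifier
  have hclass : ∀ z, z ∈ B₁ ∪ B₂ → z ∈ B₁ ∩ B₂ ∨ z = x ∨ z = y := by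
    intro z hz
    rcases hz with hz | hz
    · by_cases h : z ∈ B₂
      · exact Or.inl ⟨hz, h⟩
      · exact Or.inr (Or.inl (by have : z ∈ B₁ \ B₂ := ⟨hz, h⟩; rwa [hx] at this))
    · by_cases h : z ∈ B₁
      · exact Or.inl ⟨h, hz⟩
      · exact Or.inr (Or.inr (by have : z ∈ B₂ \ B₁ := ⟨hz, h⟩; rwa [hy] at this))
  have key : ∀ Da Db : Set α, M.IsBase Da → M.IsBase Db → Da ∪ Db = B₁ ∪ B₂ →
      Da ∩ Db = B₁ ∩ B₂ → x ∈ Da → Da = B₁ ∧ Db = B₂ := by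
    intro Da Db hDa hDb hU hI hxa
    have hIsa : B₁ ∩ B₂ ⊆ Da := hI ▸ inter_subset_left
    have hIsb : B₁ ∩ B₂ ⊆ Db := hI ▸ inter_subset_right
    have hUa : Da ⊆ B₁ ∪ B₂ := hU ▸ subset_union_left
    have hUb : Db ⊆ B₁ ∪ B₂ := hU ▸ subset_union_right
    by_cases hya : y ∈ Da
    · -- then Db ⊆ Da, contradiction
      exfalso
      have hsub : Db ⊆ Da := by
        intro z hz
        rcases hclass z (hUb hz) with h | rfl | rfl
        · exact hIsa h
        · exact hxa
        · exact hya
      have : Db = Da := hDb.eq_of_subset_isBase hDa hsub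
      have hxx : x ∈ Da ∩ Db := ⟨hxa, this ▸ hxa⟩
      rw [hI] at hxx
      exact hxm.2 hxx.2
    · have hxb : x ∉ Db := by
        intro hxb
        have : x ∈ B₁ ∩ B₂ := hI ▸ (⟨hxa, hxb⟩ : x ∈ Da ∩ Db)
        exact hxm.2 this.2
      have hyb : y ∈ Db := by
        have : y ∈ Da ∪ Db := hU ▸ Or.inr hym.1
        exact this.resolve_left hya
      have hDaB₁ : Da = B₁ := by
        refine (hDa.eq_of_subset_isBase hB₁ ?_)
        intro z hz
        rcases hclass z (hUa hz) with h | rfl | rfl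
        · exact h.1
        · exact hxm.1
        · exact absurd hz hya
      have hDbB₂ : Db = B₂ := by
        refine (hDb.eq_of_subset_isBase hB₂ ?_)
        intro z hz
        rcases hclass z (hUb hz) with h | rfl | rfl
        · exact h.2
        · exact absurd hz hxb
        · exact hym.1
      exact ⟨hDaB₁, hDbB₂⟩
  rcases (hU ▸ (Or.inl hxm.1 : x ∈ B₁ ∪ B₂) : x ∈ D₁ ∪ D₂) with hx1 | hx2
  · obtain ⟨ha, hb⟩ := key D₁ D₂ hD₁ hD₂ hU hI hx1
    simp [ha, hb]
  · obtain ⟨ha, hb⟩ := key D₂ D₁ hD₂ hD₁ (by rwa [union_comm]) (by rwa [inter_comm]) hx2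
    rw [mem_singleton_iff, Sym2.eq_iff]
    exact Or.inr ⟨hb, ha⟩


lemma pairSet_subset_three (hfin : M.E.Finite) (hB₁ : M.IsBase B₁) (hB₂ : M.IsBase B₂)
    (hx12 : x₁ ≠ x₂) (hy12 : y₁ ≠ y₂) (hx : B₁ \ B₂ = {x₁, x₂}) (hy : B₂ \ B₁ = {y₁, y₂}) :
    pairSet M B₁ B₂ ⊆
      {s(B₁ ∩ B₂ ∪ {x₁, x₂}, B₁ ∩ B₂ ∪ {y₁, y₂}),
       s(B₁ ∩ B₂ ∪ {x₁, y₁}, B₁ ∩ B₂ ∪ {x₂, y₂}),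
       s(B₁ ∩ B₂ ∪ {x₁, y₂}, B₁ ∩ B₂ ∪ {x₂, y₁})} := by
  set I := B₁ ∩ B₂ with hI_def
  set W : Set α := {x₁, x₂, y₁, y₂} with hW_def
  have hx₁ : x₁ ∈ B₁ \ B₂ := hx ▸ Or.inl rfl
  have hx₂ : x₂ ∈ B₁ \ B₂ := hx ▸ Or.inr rfl
  have hy₁ : y₁ ∈ B₂ \ B₁ := hy ▸ Or.inl rfl
  have hy₂ : y₂ ∈ B₂ \ B₁ := hy ▸ Or.inr rfl
  have hx1y1 : x₁ ≠ y₁ := fun h => hy₁.2 (h ▸ hx₁.1)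
  have hx1y2 : x₁ ≠ y₂ := fun h => hy₂.2 (h ▸ hx₁.1)
  have hx2y1 : x₂ ≠ y₁ := fun h => hy₁.2 (h ▸ hx₂.1)
  have hx2y2 : x₂ ≠ y₂ := fun h => hy₂.2 (h ▸ hx₂.1)
  have hIW : I ∩ W = ∅ := by
    ext z
    simp only [hW_def, mem_inter_iff, mem_insert_iff, mem_singleton_iff, mem_empty_iff_false,
      iff_false, not_and, hI_def]
    rintro ⟨hz1, hz2⟩ (rfl | rfl | rfl | rfl)
    · exact hx₁.2 hz2
    · exact hx₂.2 hz2
    · exact hy₁.2 hz1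
    · exact hy₂.2 hz1
  have hU : B₁ ∪ B₂ = I ∪ W := by
    ext z
    simp only [hW_def, hI_def, mem_union, mem_inter_iff, mem_insert_iff, mem_singleton_iff]
    constructor
    · intro h
      by_cases h1 : z ∈ B₁ <;> by_cases h2 : z ∈ B₂
      · tauto
      · have : z ∈ B₁ \ B₂ := ⟨h1, h2⟩
        rw [hx] at this
        simp only [mem_insert_iff, mem_singleton_iff] at this
        tauto
      · have : z ∈ B₂ \ B₁ := ⟨h2, h1⟩
        rw [hy] at this
        simp only [mem_insert_iff, mem_singleton_iff] at this
        tauto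
      · tauto
    · rintro (⟨h, -⟩ | (rfl | rfl | rfl | rfl)) <;>
        first | exact Or.inl h | exact Or.inl hx₁.1 | exact Or.inl hx₂.1 |
          exact Or.inr hy₁.1 | exact Or.inr hy₂.1
  rintro p ⟨D₁, D₂, rfl, hD₁, hD₂, hUD, hID⟩
  have hI1 : I ⊆ D₁ := by rw [hI_def, ← hID]; exact inter_subset_left
  have hI2 : I ⊆ D₂ := by rw [hI_def, ← hID]; exact inter_subset_right
  set S₁ := D₁ \ I with hS₁_def
  set S₂ := D₂ \ I with hS₂_def
  have hD₁eq : D₁ = I ∪ S₁ := (union_diff_cancel hI1).symm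
  have hD₂eq : D₂ = I ∪ S₂ := (union_diff_cancel hI2).symm
  have hdisjIW : Disjoint I W := disjoint_iff_inter_eq_empty.mpr hIW
  have hScover : S₁ ∪ S₂ = W := by
    rw [hS₁_def, hS₂_def, ← union_diff_distrib, hUD, hU, union_diff_left,
      hdisjIW.symm.sdiff_eq_left]
  have hSdisj : S₁ ∩ S₂ = ∅ := by
    ext z
    refine ⟨fun hz => ?_, fun hz => hz.elim⟩
    exact (hz.1.2 (by rw [hI_def, ← hID]; exact ⟨hz.1.1, hz.2.1⟩)).elim
  have hfinD₁ : D₁.Finite := hfin.subset hD₁.subset_ground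
  have hfinI : I.Finite := hfinD₁.subset hI1
  have hfinS₁ : S₁.Finite := hfinD₁.subset diff_subset
  have hfinS₂ : S₂.Finite := (hfin.subset hD₂.subset_ground).subset diff_subset
  have hWcard : W.ncard = 4 := by
    rw [hW_def, ncard_insert_of_notMem (by simp [hx12, hx1y1, hx1y2])
        (((finite_singleton _).insert _).insert _),
      ncard_insert_of_notMem (by simp [hx2y1, hx2y2]) ((finite_singleton _).insert _),
      ncard_insert_of_notMem (by simp [hy12]) (finite_singleton _), ncard_singleton]
  have hcard12 : D₁.ncard = D₂.ncard := hD₁.ncard_eq_ncard_of_isBase hD₂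
  have hd₁ : D₁.ncard = I.ncard + S₁.ncard := by
    rw [hD₁eq, ncard_union_eq disjoint_sdiff_right hfinI hfinS₁]
  have hd₂ : D₂.ncard = I.ncard + S₂.ncard := by
    rw [hD₂eq, ncard_union_eq disjoint_sdiff_right hfinI hfinS₂]
  have hsum : S₁.ncard + S₂.ncard = 4 := by
    rw [← hWcard, ← hScover, ncard_union_eq (disjoint_iff_inter_eq_empty.mpr hSdisj)
      hfinS₁ hfinS₂]
  have hS₁card : S₁.ncard = 2 := by omega
  have hS₂card : S₂.ncard = 2 := by omega
  have hx₁W : x₁ ∈ S₁ ∪ S₂ := by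
    rw [hScover, hW_def]
    exact Or.inl rfl
  rcases hx₁W with hmem | hmem
  · rcases pair_partition hx12 hx1y1 hx1y2 hx2y1 hx2y2 hy12 (hW_def ▸ hScover) hSdisj
      hS₁card hmem with ⟨hS1, hS2⟩ | ⟨hS1, hS2⟩ | ⟨hS1, hS2⟩
    · rw [hD₁eq, hD₂eq, hS1, hS2]
      exact Or.inl rfl
    · rw [hD₁eq, hD₂eq, hS1, hS2]
      exact Or.inr (Or.inl rfl)
    · rw [hD₁eq, hD₂eq, hS1, hS2]
      exact Or.inr (Or.inr rfl)
  · rcases pair_partition hx12 hx1y1 hx1y2 hx2y1 hx2y2 hy12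
      (hW_def ▸ (union_comm S₁ S₂ ▸ hScover)) (inter_comm S₁ S₂ ▸ hSdisj)
      hS₂card hmem with ⟨hS2, hS1⟩ | ⟨hS2, hS1⟩ | ⟨hS2, hS1⟩
    · rw [hD₁eq, hD₂eq, hS1, hS2]
      exact Or.inl Sym2.eq_swap
    · rw [hD₁eq, hD₂eq, hS1, hS2]
      exact Or.inr (Or.inl Sym2.eq_swap)
    · rw [hD₁eq, hD₂eq, hS1, hS2]
      exact Or.inr (Or.inr Sym2.eq_swap)


lemma window_restrict_base (hB : M.IsBase B) (hBX : B ⊆ X) (hX : X ⊆ M.E) :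
    (M ↾ X).IsBase D ↔ M.IsBase D ∧ D ⊆ X := by
  rw [Matroid.isBase_restrict_iff hX]
  constructor
  · intro h
    exact ⟨h.isBase_of_isBase_subset hB hBX, h.subset⟩
  · rintro ⟨hD, hDX⟩
    exact hD.isBasis_of_subset hX hDX

lemma exists_minor_of_pairSet_three (hfin : M.E.Finite) (hB₁ : M.IsBase B₁) (hB₂ : M.IsBase B₂)
    (h3 : (pairSet M B₁ B₂).ncard = 3) :
    ∃ (A C : Set α) (N : Matroid α), A ⊆ M.E ∧ C ⊆ M.E ∧ Disjoint A C ∧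
      N = (M.restrict (M.E \ A)).con C ∧
      N.E.ncard = 4 ∧ (∀ B, N.IsBase B ↔ B ⊆ N.E ∧ B.ncard = 2) := by
  have hPfin : (pairSet M B₁ B₂).Finite := Set.finite_of_ncard_ne_zero (by omega)
  have hfinB₁ : B₁.Finite := hfin.subset hB₁.subset_ground
  have hfinB₂ : B₂.Finite := hfin.subset hB₂.subset_ground
  -- rule out |B₁ \ B₂| ≥ 3
  have hk2 : (B₁ \ B₂).ncard ≤ 2 := by
    by_contra h
    obtain ⟨t, hts, htc⟩ := Set.exists_subset_card_eq (show 3 ≤ (B₁ \ B₂).ncard by omega)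
    obtain ⟨e₁, e₂, e₃, h12, h13, h23, rfl⟩ := Set.ncard_eq_three.mp htc
    exact no_three_diff hfin hB₁ hB₂ h3 (hts (Or.inl rfl)) (hts (Or.inr (Or.inl rfl)))
      (hts (Or.inr (Or.inr rfl))) h12 h13 h23
  -- rule out small cases
  interval_cases hk : (B₁ \ B₂).ncard
  · -- k = 0
    exfalso
    have hsub : B₁ ⊆ B₂ := diff_eq_empty.mp ((Set.ncard_eq_zero hfinB₁.diff).mp hk)
    have hcard := Set.ncard_le_ncard (pairSet_subsingleton_of_eq hB₁ hB₂
      (hB₁.eq_of_subset_isBase hB₂ hsub)) (finite_singleton _)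
    rw [h3, Set.ncard_singleton] at hcard
    omega
  · -- k = 1
    exfalso
    obtain ⟨x, hx⟩ := Set.ncard_eq_one.mp hk
    have hy' : (B₂ \ B₁).encard = 1 := by
      rw [← hB₁.encard_sdiff_comm hB₂, hx, encard_singleton]
    obtain ⟨y, hy⟩ := Set.encard_eq_one.mp hy'
    have hcard := Set.ncard_le_ncard (pairSet_subsingleton_of_single hB₁ hB₂ hx hy)
      (finite_singleton _)
    rw [h3, Set.ncard_singleton] at hcard
    omega
  · -- k = 2 : the real case
    obtain ⟨x₁, x₂, hx12, hx⟩ := Set.ncard_eq_two.mp hk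
    have hy' : (B₂ \ B₁).encard = 2 := by
      rw [← hB₁.encard_sdiff_comm hB₂, hx, Set.encard_pair hx12]
    obtain ⟨y₁, y₂, hy12, hy⟩ := Set.encard_eq_two.mp hy'
    set I := B₁ ∩ B₂ with hI_def
    have hx₁ : x₁ ∈ B₁ \ B₂ := hx ▸ Or.inl rfl
    have hx₂ : x₂ ∈ B₁ \ B₂ := hx ▸ Or.inr rfl
    have hy₁ : y₁ ∈ B₂ \ B₁ := hy ▸ Or.inl rfl
    have hy₂ : y₂ ∈ B₂ \ B₁ := hy ▸ Or.inr rfl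
    have hx1y1 : x₁ ≠ y₁ := fun h => hy₁.2 (h ▸ hx₁.1)
    have hx1y2 : x₁ ≠ y₂ := fun h => hy₂.2 (h ▸ hx₁.1)
    have hx2y1 : x₂ ≠ y₁ := fun h => hy₁.2 (h ▸ hx₂.1)
    have hx2y2 : x₂ ≠ y₂ := fun h => hy₂.2 (h ▸ hx₂.1)
    have hB₁eq : B₁ = I ∪ {x₁, x₂} := by rw [hI_def, ← hx, inter_union_diff]
    have hB₂eq : B₂ = I ∪ {y₁, y₂} := by rw [hI_def, inter_comm, ← hy, inter_union_diff]
    -- the pair set is exactly the three candidate pairs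
    have hPeq : pairSet M B₁ B₂ =
        {s(I ∪ {x₁, x₂}, I ∪ {y₁, y₂}), s(I ∪ {x₁, y₁}, I ∪ {x₂, y₂}),
         s(I ∪ {x₁, y₂}, I ∪ {x₂, y₁})} := by
      refine Set.eq_of_subset_of_ncard_le (pairSet_subset_three hfin hB₁ hB₂ hx12 hy12 hx hy)
        ?_ (((finite_singleton _).insert _).insert _)
      calc ({s(I ∪ {x₁, x₂}, I ∪ {y₁, y₂}), s(I ∪ {x₁, y₁}, I ∪ {x₂, y₂}),
         s(I ∪ {x₁, y₂}, I ∪ {x₂, y₁})} : Set (Sym2 (Set α))).ncard ≤ 3 := by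
            apply le_trans (Set.ncard_insert_le _ _)
            have := Set.ncard_insert_le (s(I ∪ {x₁, y₁}, I ∪ {x₂, y₂}))
              ({s(I ∪ {x₁, y₂}, I ∪ {x₂, y₁})} : Set (Sym2 (Set α)))
            simp only [Set.ncard_singleton] at this ⊢
            omega
        _ = (pairSet M B₁ B₂).ncard := h3.symm
    -- extract the six bases
    have hmem2 : s(I ∪ {x₁, y₁}, I ∪ {x₂, y₂}) ∈ pairSet M B₁ B₂ := by
      rw [hPeq]; exact Or.inr (Or.inl rfl)
    have hmem3 : s(I ∪ {x₁, y₂}, I ∪ {x₂, y₁}) ∈ pairSet M B₁ B₂ := by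
      rw [hPeq]; exact Or.inr (Or.inr rfl)
    have hbases2 : M.IsBase (I ∪ {x₁, y₁}) ∧ M.IsBase (I ∪ {x₂, y₂}) := by
      obtain ⟨D₁, D₂, heq, hb₁, hb₂, -, -⟩ := hmem2
      rw [Sym2.eq_iff] at heq
      rcases heq with ⟨h1, h2⟩ | ⟨h1, h2⟩
      · exact ⟨h1 ▸ hb₁, h2 ▸ hb₂⟩
      · exact ⟨h1 ▸ hb₂, h2 ▸ hb₁⟩
    have hbases3 : M.IsBase (I ∪ {x₁, y₂}) ∧ M.IsBase (I ∪ {x₂, y₁}) := by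
      obtain ⟨D₁, D₂, heq, hb₁, hb₂, -, -⟩ := hmem3
      rw [Sym2.eq_iff] at heq
      rcases heq with ⟨h1, h2⟩ | ⟨h1, h2⟩
      · exact ⟨h1 ▸ hb₁, h2 ▸ hb₂⟩
      · exact ⟨h1 ▸ hb₂, h2 ▸ hb₁⟩
    -- construct the minor
    have hUE : B₁ ∪ B₂ ⊆ M.E := union_subset hB₁.subset_ground hB₂.subset_ground
    have hIE : I ⊆ M.E := inter_subset_left.trans hB₁.subset_ground
    have hIU : I ⊆ B₁ ∪ B₂ := inter_subset_left.trans subset_union_left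
    refine ⟨M.E \ (B₁ ∪ B₂), I, _, diff_subset, hIE,
      disjoint_sdiff_left.mono_right hIU, rfl, ?_, ?_⟩
    · -- ncard of ground set
      show ((M.E \ (M.E \ (B₁ ∪ B₂))) \ I).ncard = 4
      rw [diff_diff_cancel_left hUE]
      have hW : (B₁ ∪ B₂) \ I = {x₁, x₂, y₁, y₂} := by
        ext z
        simp only [mem_diff, mem_union, mem_insert_iff, mem_singleton_iff, hI_def,
          mem_inter_iff]
        constructor
        · rintro ⟨hz1 | hz2, hzI⟩
          · by_cases h : z ∈ B₂
            · exact absurd ⟨hz1, h⟩ hzI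
            · have : z ∈ B₁ \ B₂ := ⟨hz1, h⟩
              rw [hx] at this
              simp only [mem_insert_iff, mem_singleton_iff] at this
              tauto
          · by_cases h : z ∈ B₁
            · exact absurd ⟨h, hz2⟩ hzI
            · have : z ∈ B₂ \ B₁ := ⟨hz2, h⟩
              rw [hy] at this
              simp only [mem_insert_iff, mem_singleton_iff] at this
              tauto
        · rintro (rfl | rfl | rfl | rfl)
          · exact ⟨Or.inl hx₁.1, fun h => hx₁.2 h.2⟩
          · exact ⟨Or.inl hx₂.1, fun h => hx₂.2 h.2⟩
          · exact ⟨Or.inr hy₁.1, fun h => hy₁.2 h.1⟩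
          · exact ⟨Or.inr hy₂.1, fun h => hy₂.2 h.1⟩
      rw [hW, ncard_insert_of_notMem (by simp [hx12, hx1y1, hx1y2])
          (((finite_singleton _).insert _).insert _),
        ncard_insert_of_notMem (by simp [hx2y1, hx2y2]) ((finite_singleton _).insert _),
        ncard_insert_of_notMem (by simp [hy12]) (finite_singleton _), ncard_singleton]
    · -- base characterization
      intro S
      have hMEA : M.E \ (M.E \ (B₁ ∪ B₂)) = B₁ ∪ B₂ := diff_diff_cancel_left hUE
      have hres : M.restrict (M.E \ (M.E \ (B₁ ∪ B₂))) = M ↾ (B₁ ∪ B₂) := by rw [hMEA]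
      rw [hres]
      have hfin' : (M ↾ (B₁ ∪ B₂)).E.Finite := hfin.subset hUE
      have hIbasis : (M ↾ (B₁ ∪ B₂)).IsBasis I I :=
        (Matroid.restrict_indep_iff.mpr ⟨hB₁.indep.subset inter_subset_left, hIU⟩).isBasis_self
      rw [con_base_iff hfin' (show I ⊆ (M ↾ (B₁ ∪ B₂)).E from hIU) hIbasis S,
        window_restrict_base hB₁ subset_union_left hUE]
      have hW : (B₁ ∪ B₂) \ I = {x₁, x₂, y₁, y₂} := by
        ext z
        simp only [mem_diff, mem_union, mem_insert_iff, mem_singleton_iff, hI_def,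
          mem_inter_iff]
        constructor
        · rintro ⟨hz1 | hz2, hzI⟩
          · by_cases h : z ∈ B₂
            · exact absurd ⟨hz1, h⟩ hzI
            · have : z ∈ B₁ \ B₂ := ⟨hz1, h⟩
              rw [hx] at this
              simp only [mem_insert_iff, mem_singleton_iff] at this
              tauto
          · by_cases h : z ∈ B₁
            · exact absurd ⟨h, hz2⟩ hzI
            · have : z ∈ B₂ \ B₁ := ⟨hz2, h⟩
              rw [hy] at this
              simp only [mem_insert_iff, mem_singleton_iff] at this
              tauto
        · rintro (rfl | rfl | rfl | rfl)
          · exact ⟨Or.inl hx₁.1, fun h => hx₁.2 h.2⟩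
          · exact ⟨Or.inl hx₂.1, fun h => hx₂.2 h.2⟩
          · exact ⟨Or.inr hy₁.1, fun h => hy₁.2 h.1⟩
          · exact ⟨Or.inr hy₂.1, fun h => hy₂.2 h.1⟩
      have hNEeq : ((M ↾ (B₁ ∪ B₂)).con I).E = (B₁ ∪ B₂) \ I := rfl
      rw [hNEeq, Matroid.restrict_ground_eq, hW]
      have hWfin : ({x₁, x₂, y₁, y₂} : Set α).Finite :=
        (((finite_singleton _).insert _).insert _).insert _
      have hdisjWI : Disjoint ({x₁, x₂, y₁, y₂} : Set α) I := by
        rw [← hW]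
        exact disjoint_sdiff_left
      have hIfin : I.Finite := hfinB₁.subset inter_subset_left
      have hsub2W : ({x₁, x₂} : Set α) ⊆ ({x₁, x₂, y₁, y₂} : Set α) := by
        rintro z (rfl | rfl)
        · exact Or.inl rfl
        · exact Or.inr (Or.inl rfl)
      have hdisjI2 : Disjoint I ({x₁, x₂} : Set α) := (hdisjWI.mono_left hsub2W).symm
      constructor
      · rintro ⟨hSW, hbase, -⟩
        refine ⟨hSW, ?_⟩
        have hSfin : S.Finite := hWfin.subset hSW
        have hdisjSI : Disjoint S I := hdisjWI.mono_left hSW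
        have hcb : (S ∪ I).ncard = B₁.ncard := hbase.ncard_eq_ncard_of_isBase hB₁
        rw [ncard_union_eq hdisjSI hSfin hIfin] at hcb
        rw [hB₁eq, ncard_union_eq hdisjI2 hIfin (hWfin.subset hsub2W),
          Set.ncard_pair hx12] at hcb
        omega
      · rintro ⟨hSW, hS2⟩
        have hSunionsub : S ∪ I ⊆ B₁ ∪ B₂ :=
          union_subset (hSW.trans (hW ▸ diff_subset)) hIU
        refine ⟨hSW, ?_, hSunionsub⟩
        rcases two_subset hx12 hx1y1 hx1y2 hx2y1 hx2y2 hy12 hSW hS2 with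
          rfl | rfl | rfl | rfl | rfl | rfl
        · rw [union_comm, ← hB₁eq]; exact hB₁
        · rw [union_comm]; exact hbases2.1
        · rw [union_comm]; exact hbases3.1
        · rw [union_comm]; exact hbases3.2
        · rw [union_comm]; exact hbases2.2
        · rw [union_comm, ← hB₂eq]; exact hB₂


lemma pairSet_three_of_minor (hfin : M.E.Finite)
    {A : Set α} {N : Matroid α} (hA : A ⊆ M.E) (hC : C ⊆ M.E) (hAC : Disjoint A C)
    (hN : N = (M.restrict (M.E \ A)).con C) (h4 : N.E.ncard = 4)
    (hbase : ∀ B, N.IsBase B ↔ B ⊆ N.E ∧ B.ncard = 2) :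
    ∃ B₁ B₂, M.IsBase B₁ ∧ M.IsBase B₂ ∧ (pairSet M B₁ B₂).ncard = 3 := by
  have hfin' : (M ↾ (M.E \ A)).E.Finite := hfin.subset diff_subset
  have hCE' : C ⊆ (M ↾ (M.E \ A)).E := by
    rw [Matroid.restrict_ground_eq]
    exact subset_diff.mpr ⟨hC, hAC.symm⟩
  obtain ⟨I, hIb⟩ := (M ↾ (M.E \ A)).exists_isBasis C hCE'
  have hNE : N.E = (M.E \ A) \ C := by rw [hN]; rfl
  have hconB : ∀ S, N.IsBase S ↔ S ⊆ (M.E \ A) \ C ∧ (M ↾ (M.E \ A)).IsBase (S ∪ I) := by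
    intro S
    rw [hN]
    exact con_base_iff hfin' hCE' hIb S
  have hM'b : ∀ D, (M ↾ (M.E \ A)).IsBase D ↔ M.IsBasis D (M.E \ A) := by
    intro D
    exact Matroid.isBase_restrict_iff diff_subset
  -- get four distinct elements of N.E
  have hNEfin : N.E.Finite := by
    rw [hNE]; exact hfin.subset (diff_subset.trans diff_subset)
  obtain ⟨a, t, hat, hNEins, ht3⟩ := (Set.ncard_eq_succ hNEfin).mp h4
  obtain ⟨b, c, d, hbc, hbd, hcd, rfl⟩ := Set.ncard_eq_three.mp ht3
  have hab : a ≠ b := fun h => hat (h ▸ Or.inl rfl)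
  have hac : a ≠ c := fun h => hat (h ▸ Or.inr (Or.inl rfl))
  have had : a ≠ d := fun h => hat (h ▸ Or.inr (Or.inr rfl))
  have hNEabcd : N.E = {a, b, c, d} := hNEins.symm
  -- lifting bases of the restriction to bases of M
  have habN : ({a, b} : Set α) ⊆ N.E := by
    rintro z (rfl | rfl)
    · exact hNEins ▸ Or.inl rfl
    · exact hNEins ▸ Or.inr (Or.inl rfl)
  have hcdN : ({c, d} : Set α) ⊆ N.E := by
    rintro z (rfl | rfl)
    · exact hNEins ▸ Or.inr (Or.inr (Or.inl rfl))
    · exact hNEins ▸ Or.inr (Or.inr (Or.inr rfl))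
  have habbase : N.IsBase {a, b} := (hbase _).mpr ⟨habN, Set.ncard_pair hab⟩
  have hJ₀ : M.IsBasis ({a, b} ∪ I) (M.E \ A) := by
    rw [← hM'b]
    exact ((hconB _).mp habbase).2
  obtain ⟨B₀, hB₀, hJ₀eq⟩ := hJ₀.exists_isBase
  set F := B₀ \ (M.E \ A) with hF_def
  have hB₀split : B₀ = ({a, b} ∪ I) ∪ F := by
    rw [hJ₀eq, hF_def]
    exact (inter_union_diff _ _).symm
  have hFdisj : Disjoint (M.E \ A) F := disjoint_sdiff_right
  have hFE : F ⊆ M.E := diff_subset.trans hB₀.subset_ground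
  have lift : ∀ J, M.IsBasis J (M.E \ A) → M.IsBase (J ∪ F) := by
    intro J hJ
    have hJE : J ⊆ M.E := hJ.left_subset_ground
    have hcl : M.closure (J ∪ F) = M.E := by
      have h1 : M.closure (J ∪ F) = M.closure (({a, b} ∪ I) ∪ F) := by
        rw [← M.closure_union_closure_left_eq J F, hJ.closure_eq_closure,
          ← hJ₀.closure_eq_closure, M.closure_union_closure_left_eq]
      rw [h1, ← hB₀split, hB₀.closure_eq]
    have hsp : M.Spanning (J ∪ F) := by
      rw [Matroid.spanning_iff_closure_eq (union_subset hJE hFE)]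
      exact hcl
    refine base_of_spanning_of_encard_le hfin hsp hB₀ ?_
    rw [hB₀split, encard_union_eq (hFdisj.mono_left hJ.subset),
      encard_union_eq (hFdisj.mono_left hJ₀.subset), hJ.encard_eq_encard hJ₀]
  have unlift : ∀ J, J ⊆ M.E \ A → M.IsBase (J ∪ F) → M.IsBasis J (M.E \ A) := by
    intro J hJsub hJF
    have hJindep : M.Indep J := hJF.indep.subset subset_union_left
    obtain ⟨J', hJ', hJJ'⟩ := hJindep.subset_isBasis_of_subset hJsub (hX := diff_subset)
    have hJ'F : M.IsBase (J' ∪ F) := lift J' hJ'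
    have heq : J ∪ F = J' ∪ F :=
      hJF.eq_of_subset_isBase hJ'F (union_subset_union_left F hJJ')
    have hJ'J : J' ⊆ J := by
      intro z hz
      have : z ∈ J ∪ F := heq ▸ Or.inl hz
      rcases this with h | h
      · exact h
      · exact absurd h (disjoint_left.mp (hFdisj.mono_left hJ'.subset) hz)
    rwa [hJJ'.antisymm hJ'J]
  -- the key equivalence
  set G := I ∪ F with hG_def
  have hIsubE : I ⊆ M.E \ A := hIb.left_subset_ground
  have hIsubC : I ⊆ C := hIb.subset
  have key : ∀ S, S ⊆ N.E → (M.IsBase (S ∪ G) ↔ S.ncard = 2) := by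
    intro S hSN
    have hSsub : S ⊆ (M.E \ A) \ C := hNE ▸ hSN
    have hSIsub : S ∪ I ⊆ M.E \ A := union_subset (hSsub.trans diff_subset) hIsubE
    have hassoc : S ∪ G = (S ∪ I) ∪ F := by rw [hG_def, union_assoc]
    constructor
    · intro hbig
      have hbasis : M.IsBasis (S ∪ I) (M.E \ A) := unlift _ hSIsub (hassoc ▸ hbig)
      have : N.IsBase S := (hconB S).mpr ⟨hSsub, (hM'b _).mpr hbasis⟩
      exact ((hbase S).mp this).2
    · intro h2
      have hNb : N.IsBase S := (hbase S).mpr ⟨hSN, h2⟩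
      have hbasis : M.IsBasis (S ∪ I) (M.E \ A) := (hM'b _).mp ((hconB S).mp hNb).2
      exact hassoc ▸ lift _ hbasis
  -- disjointness of G from N.E
  have hIN : Disjoint I N.E := by
    rw [hNE]
    exact disjoint_sdiff_right.mono_left hIsubC
  have hFN : Disjoint F N.E := by
    rw [hNE]
    exact (hFdisj.symm.mono_right diff_subset)
  have hGN : Disjoint G N.E := by
    rw [hG_def]
    exact disjoint_union_left.mpr ⟨hIN, hFN⟩
  have hbN : b ∈ N.E := hNEins ▸ Or.inr (Or.inl rfl)
  have hcN : c ∈ N.E := hNEins ▸ Or.inr (Or.inr (Or.inl rfl))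
  have hdN : d ∈ N.E := hNEins ▸ Or.inr (Or.inr (Or.inr rfl))
  -- set algebra helpers
  have hUU : ∀ S T : Set α, (S ∪ G) ∪ (T ∪ G) = (S ∪ T) ∪ G := by
    intro S T
    ext z
    simp only [mem_union]
    tauto
  have hII : ∀ S T : Set α, S ∩ T = ∅ → (S ∪ G) ∩ (T ∪ G) = G := by
    intro S T hst
    ext z
    simp only [mem_inter_iff, mem_union]
    constructor
    · rintro ⟨h1 | h1, h2 | h2⟩
      · have hzz : z ∈ S ∩ T := ⟨h1, h2⟩
        rw [hst] at hzz
        exact hzz.elim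
      · exact h2
      · exact h1
      · exact h1
    · exact fun h => ⟨Or.inr h, Or.inr h⟩
  have hab_cd : ({a, b} : Set α) ∩ ({c, d} : Set α) = ∅ := by
    ext z
    simp only [mem_inter_iff, mem_insert_iff, mem_singleton_iff, mem_empty_iff_false,
      iff_false, not_and]
    rintro (rfl | rfl) (rfl | rfl)
    exacts [hac rfl, had rfl, hbc rfl, hbd rfl]
  have hac_bd : ({a, c} : Set α) ∩ ({b, d} : Set α) = ∅ := by
    ext z
    simp only [mem_inter_iff, mem_insert_iff, mem_singleton_iff, mem_empty_iff_false,
      iff_false, not_and]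
    rintro (rfl | rfl) (rfl | rfl)
    exacts [hab rfl, had rfl, hbc.symm rfl, hcd rfl]
  have had_bc : ({a, d} : Set α) ∩ ({b, c} : Set α) = ∅ := by
    ext z
    simp only [mem_inter_iff, mem_insert_iff, mem_singleton_iff, mem_empty_iff_false,
      iff_false, not_and]
    rintro (rfl | rfl) (rfl | rfl)
    exacts [hab rfl, hac rfl, hbd.symm rfl, hcd.symm rfl]
  have hU1 : ({a, b} : Set α) ∪ ({c, d} : Set α) = {a, b, c, d} := by
    ext z
    simp only [mem_union, mem_insert_iff, mem_singleton_iff]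
    tauto
  have hU2 : ({a, c} : Set α) ∪ ({b, d} : Set α) = {a, b, c, d} := by
    ext z
    simp only [mem_union, mem_insert_iff, mem_singleton_iff]
    tauto
  have hU3 : ({a, d} : Set α) ∪ ({b, c} : Set α) = {a, b, c, d} := by
    ext z
    simp only [mem_union, mem_insert_iff, mem_singleton_iff]
    tauto
  -- generic membership in the pair set
  have hpair : ∀ S T : Set α, S ∪ T = N.E → S ∩ T = ∅ → S.ncard = 2 → T.ncard = 2 →
      s(S ∪ G, T ∪ G) ∈ pairSet M ({a, b} ∪ G) ({c, d} ∪ G) := by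
    intro S T hST hst hS2 hT2
    have hSN : S ⊆ N.E := hST ▸ subset_union_left
    have hTN : T ⊆ N.E := hST ▸ subset_union_right
    refine ⟨_, _, rfl, (key S hSN).mpr hS2, (key T hTN).mpr hT2, ?_, ?_⟩
    · rw [hUU, hUU, hST, hU1, ← hNEabcd]
    · rw [hII S T hst, hII _ _ hab_cd]
  have hm1 : s(({a, b} : Set α) ∪ G, ({c, d} : Set α) ∪ G) ∈
      pairSet M ({a, b} ∪ G) ({c, d} ∪ G) :=
    hpair _ _ (by rw [hU1, hNEabcd]) hab_cd (Set.ncard_pair hab) (Set.ncard_pair hcd)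
  have hm2 : s(({a, c} : Set α) ∪ G, ({b, d} : Set α) ∪ G) ∈
      pairSet M ({a, b} ∪ G) ({c, d} ∪ G) :=
    hpair _ _ (by rw [hU2, hNEabcd]) hac_bd (Set.ncard_pair hac) (Set.ncard_pair hbd)
  have hm3 : s(({a, d} : Set α) ∪ G, ({b, c} : Set α) ∪ G) ∈
      pairSet M ({a, b} ∪ G) ({c, d} ∪ G) :=
    hpair _ _ (by rw [hU3, hNEabcd]) had_bc (Set.ncard_pair had) (Set.ncard_pair hbc)
  -- the pair set equals the three explicit pairs
  have hUtot : ({a, b} ∪ G) ∪ ({c, d} ∪ G) = N.E ∪ G := by rw [hUU, hU1, ← hNEabcd]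
  have hItot : ({a, b} ∪ G) ∩ ({c, d} ∪ G) = G := hII _ _ hab_cd
  have hPeq : pairSet M ({a, b} ∪ G) ({c, d} ∪ G) =
      {s(({a, b} : Set α) ∪ G, ({c, d} : Set α) ∪ G),
       s(({a, c} : Set α) ∪ G, ({b, d} : Set α) ∪ G),
       s(({a, d} : Set α) ∪ G, ({b, c} : Set α) ∪ G)} := by
    apply subset_antisymm
    · rintro p ⟨D₁, D₂, rfl, hD₁, hD₂, hUD, hID⟩
      rw [hUtot] at hUD
      rw [hItot] at hID
      have hG1 : G ⊆ D₁ := by rw [← hID]; exact inter_subset_left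
      have hG2 : G ⊆ D₂ := by rw [← hID]; exact inter_subset_right
      have hD₁eq : D₁ = (D₁ \ G) ∪ G := by rw [union_comm, union_diff_cancel hG1]
      have hD₂eq : D₂ = (D₂ \ G) ∪ G := by rw [union_comm, union_diff_cancel hG2]
      have hcover : (D₁ \ G) ∪ (D₂ \ G) = N.E := by
        rw [← union_diff_distrib, hUD, union_diff_right, hGN.symm.sdiff_eq_left]
      have hdisj : (D₁ \ G) ∩ (D₂ \ G) = ∅ := by
        ext z
        refine ⟨fun hz => ?_, fun hz => hz.elim⟩
        exact (hz.1.2 (by rw [← hID]; exact ⟨hz.1.1, hz.2.1⟩)).elim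
      have hS1N : D₁ \ G ⊆ N.E := by rw [← hcover]; exact subset_union_left
      have hS2N : D₂ \ G ⊆ N.E := by rw [← hcover]; exact subset_union_right
      have hS1c : (D₁ \ G).ncard = 2 := (key _ hS1N).mp (hD₁eq ▸ hD₁)
      have hS2c : (D₂ \ G).ncard = 2 := (key _ hS2N).mp (hD₂eq ▸ hD₂)
      have haU : a ∈ (D₁ \ G) ∪ (D₂ \ G) := by
        rw [hcover]
        exact hNEins ▸ Or.inl rfl
      rcases haU with hmem | hmem
      · rcases pair_partition hab hac had hbc hbd hcd (hcover.trans hNEabcd) hdisj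
          hS1c hmem with ⟨h1, h2⟩ | ⟨h1, h2⟩ | ⟨h1, h2⟩
        · rw [hD₁eq, hD₂eq, h1, h2]
          exact Or.inl rfl
        · rw [hD₁eq, hD₂eq, h1, h2]
          exact Or.inr (Or.inl rfl)
        · rw [hD₁eq, hD₂eq, h1, h2]
          exact Or.inr (Or.inr rfl)
      · rcases pair_partition hab hac had hbc hbd hcd
          ((union_comm (D₂ \ G) (D₁ \ G)).symm ▸ (hcover.trans hNEabcd) :
            (D₂ \ G) ∪ (D₁ \ G) = {a, b, c, d})
          (by rw [inter_comm]; exact hdisj) hS2c hmem with ⟨h1, h2⟩ | ⟨h1, h2⟩ | ⟨h1, h2⟩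
        · rw [hD₁eq, hD₂eq, h1, h2]
          exact Or.inl Sym2.eq_swap
        · rw [hD₁eq, hD₂eq, h1, h2]
          exact Or.inr (Or.inl Sym2.eq_swap)
        · rw [hD₁eq, hD₂eq, h1, h2]
          exact Or.inr (Or.inr Sym2.eq_swap)
    · rintro p (rfl | rfl | rfl)
      exacts [hm1, hm2, hm3]
  -- distinctness of the three pairs
  have hnotin : ∀ (w u v : α), w ∈ N.E → w ≠ u → w ≠ v → w ∉ ({u, v} : Set α) ∪ G := by
    rintro w u v hw hwu hwv (h | h)
    · rcases h with rfl | rfl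
      · exact hwu rfl
      · exact hwv rfl
    · exact disjoint_left.mp hGN h hw
  have hne12 : s(({a, b} : Set α) ∪ G, ({c, d} : Set α) ∪ G) ≠
      s(({a, c} : Set α) ∪ G, ({b, d} : Set α) ∪ G) := by
    intro h
    rw [Sym2.eq_iff] at h
    rcases h with ⟨h1, -⟩ | ⟨h1, -⟩
    · have : c ∈ ({a, c} : Set α) ∪ G := Or.inl (Or.inr rfl)
      rw [← h1] at this
      exact hnotin c a b hcN (Ne.symm hac) (Ne.symm hbc) this
    · have : d ∈ ({b, d} : Set α) ∪ G := Or.inl (Or.inr rfl)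
      rw [← h1] at this
      exact hnotin d a b hdN (Ne.symm had) (Ne.symm hbd) this
  have hne13 : s(({a, b} : Set α) ∪ G, ({c, d} : Set α) ∪ G) ≠
      s(({a, d} : Set α) ∪ G, ({b, c} : Set α) ∪ G) := by
    intro h
    rw [Sym2.eq_iff] at h
    rcases h with ⟨h1, -⟩ | ⟨h1, -⟩
    · have : d ∈ ({a, d} : Set α) ∪ G := Or.inl (Or.inr rfl)
      rw [← h1] at this
      exact hnotin d a b hdN (Ne.symm had) (Ne.symm hbd) this
    · have : c ∈ ({b, c} : Set α) ∪ G := Or.inl (Or.inr rfl)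
      rw [← h1] at this
      exact hnotin c a b hcN (Ne.symm hac) (Ne.symm hbc) this
  have hne23 : s(({a, c} : Set α) ∪ G, ({b, d} : Set α) ∪ G) ≠
      s(({a, d} : Set α) ∪ G, ({b, c} : Set α) ∪ G) := by
    intro h
    rw [Sym2.eq_iff] at h
    rcases h with ⟨h1, -⟩ | ⟨h1, -⟩
    · have : d ∈ ({a, d} : Set α) ∪ G := Or.inl (Or.inr rfl)
      rw [← h1] at this
      exact hnotin d a c hdN (Ne.symm had) (Ne.symm hcd) this
    · have : b ∈ ({b, c} : Set α) ∪ G := Or.inl (Or.inl rfl)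
      rw [← h1] at this
      exact hnotin b a c hbN (Ne.symm hab) hbc this
  refine ⟨{a, b} ∪ G, {c, d} ∪ G, (key _ habN).mpr (Set.ncard_pair hab),
    (key _ hcdN).mpr (Set.ncard_pair hcd), ?_⟩
  rw [hPeq]
  exact Set.ncard_eq_three.mpr ⟨_, _, _, hne12, hne13, hne23, rfl⟩

end BinaryIffAux

/-- A matroid is binary (has no minor isomorphic to `U_{2,4}`) iff `Δ(B₁,B₂) ≠ 3` for every
pair of bases. -/
theorem binary_iff {α : Type*} (M : Matroid α) (hfin : M.E.Finite) :
    (¬ ∃ (A C : Set α) (N : Matroid α), A ⊆ M.E ∧ C ⊆ M.E ∧ Disjoint A C ∧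
        N = (M.restrict (M.E \ A)).con C ∧
        N.E.ncard = 4 ∧ (∀ B, N.IsBase B ↔ B ⊆ N.E ∧ B.ncard = 2)) ↔
    ∀ B₁ B₂, M.IsBase B₁ → M.IsBase B₂ → M.deltaPairs B₁ B₂ ≠ 3 := by
  have hpair_eq : ∀ B₁ B₂ : Set α, M.deltaPairs B₁ B₂ = (BinaryIffAux.pairSet M B₁ B₂).ncard :=
    fun _ _ => rfl
  constructor
  · intro hno B₁ B₂ hB₁ hB₂ hΔ
    rw [hpair_eq] at hΔ
    exact hno (BinaryIffAux.exists_minor_of_pairSet_three hfin hB₁ hB₂ hΔ)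
  · rintro hΔ ⟨A, C, N, hA, hC, hAC, hN, h4, hb⟩
    obtain ⟨B₁, B₂, hB₁, hB₂, h3⟩ :=
      BinaryIffAux.pairSet_three_of_minor hfin hA hC hAC hN h4 hb
    exact hΔ B₁ B₂ hB₁ hB₂ (by rw [hpair_eq]; exact h3)
end

section
/- If M is a matroid with bases B₁, B₂ such that |B₁ \ B₂| = 2 and Δ(B₁,B₂) = 3, then the minor M' := (M / (B₁ ∩ B₂)) restricted to B₁ △ B₂ is isomorphic to U_{2,4}. -/
open scoped symmDiff

open Set

namespace Matroid

variable {α : Type*}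

lemma con_ground_eq (M : Matroid α) (C : Set α) : (M.con C).E = M.E \ C := by
  simp [Matroid.con]

lemma con_base_iff (M : Matroid α) {C B : Set α} (hC : M.Indep C) :
    (M.con C).IsBase B ↔ Disjoint B C ∧ M.IsBase (B ∪ C) := by
  have hCE : C ⊆ M.E := hC.subset_ground
  have hE' : M.E \ C ⊆ M✶.E := by rw [dual_ground]; exact diff_subset
  rw [Matroid.con, dual_isBase_iff', restrict_ground_eq, isBase_restrict_iff hE']
  constructor
  · rintro ⟨hBasis, hBE'⟩
    have hdisj : Disjoint B C := disjoint_sdiff_left.mono_left hBE'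
    refine ⟨hdisj, ?_⟩
    obtain ⟨D, hD, hJD⟩ := (dual_indep_iff_exists'.mp hBasis.indep).2
    obtain ⟨D', hD', hCD', hD'sub⟩ := hC.exists_isBase_subset_union_isBase hD
    have hJ : (M.E \ C) \ B ⊆ M.E := diff_subset.trans diff_subset
    have hJD' : Disjoint ((M.E \ C) \ B) D' := by
      refine Disjoint.mono_right hD'sub (disjoint_union_right.mpr ⟨?_, hJD⟩)
      exact disjoint_sdiff_left.mono_left diff_subset
    have hJsub : (M.E \ C) \ B ⊆ (M.E \ D') ∩ (M.E \ C) :=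
      subset_inter (subset_diff.mpr ⟨hJ, hJD'⟩) diff_subset
    have hind : M✶.Indep ((M.E \ D') ∩ (M.E \ C)) :=
      hD'.compl_isBase_dual.indep.subset inter_subset_left
    have heq := hBasis.eq_of_subset_indep hind hJsub inter_subset_right
    have h1 : (M.E \ D') ∩ (M.E \ C) = M.E \ D' := by
      rw [inter_eq_left]
      exact diff_subset_diff_right hCD'
    rw [h1] at heq
    have h2 : (M.E \ C) \ B = M.E \ (B ∪ C) := by rw [diff_diff, union_comm]
    rw [h2] at heq
    have hBCE : B ∪ C ⊆ M.E := union_subset (hBE'.trans diff_subset) hCE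
    have : B ∪ C = D' := by
      rw [← diff_diff_cancel_left hBCE, heq, diff_diff_cancel_left hD'.subset_ground]
    rwa [this]
  · rintro ⟨hdisj, hBase⟩
    have hBE : B ⊆ M.E := subset_union_left.trans hBase.subset_ground
    refine ⟨?_, subset_diff.mpr ⟨hBE, hdisj⟩⟩
    have hbas : M.IsBasis ((B ∪ C) ∩ C) C := by
      rw [inter_eq_right.mpr subset_union_right]
      exact hC.isBasis_self
    have h0 := hBase.compl_inter_isBasis_of_inter_isBasis hbas
    have h1 : (M.E \ (B ∪ C)) ∩ (M.E \ C) = (M.E \ C) \ B := by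
      rw [inter_eq_left.mpr (diff_subset_diff_right subset_union_right), diff_diff, union_comm]
    rwa [h1] at h0

end Matroid

set_option maxHeartbeats 2000000 in
/-- If `|B₁ \ B₂| = 2` and `Δ(B₁,B₂) = 3`, then `(M / (B₁ ∩ B₂))|_(B₁ △ B₂) ≅ U_{2,4}`. -/
theorem minor_is_U24 {α : Type*} (M : Matroid α) (hfin : M.E.Finite)
    (B₁ B₂ : Set α) (h₁ : M.IsBase B₁) (h₂ : M.IsBase B₂)
    (hd : (B₁ \ B₂).ncard = 2) (hΔ : M.deltaPairs B₁ B₂ = 3) :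
    (B₁ ∆ B₂).ncard = 4 ∧
    (∀ B, ((M.con (B₁ ∩ B₂)).restrict (B₁ ∆ B₂)).IsBase B ↔ B ⊆ B₁ ∆ B₂ ∧ B.ncard = 2) := by
  classical
  set C := B₁ ∩ B₂ with hCdef
  set X := B₁ ∆ B₂ with hXdef
  have hB1E := h₁.subset_ground
  have hB2E := h₂.subset_ground
  have hB1fin : B₁.Finite := hfin.subset hB1E
  have hB2fin : B₂.Finite := hfin.subset hB2E
  have hCfin : C.Finite := hB1fin.subset inter_subset_left
  have hd' : (B₂ \ B₁).ncard = 2 := by rw [← h₁.ncard_diff_comm h₂]; exact hd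
  have hXsplit : X = (B₁ \ B₂) ∪ (B₂ \ B₁) := symmDiff_def B₁ B₂
  have hdisjd : Disjoint (B₁ \ B₂) (B₂ \ B₁) := disjoint_sdiff_sdiff
  have hXfin : X.Finite := by
    rw [hXsplit]; exact (hB1fin.subset diff_subset).union (hB2fin.subset diff_subset)
  have hXcard : X.ncard = 4 := by
    rw [hXsplit, Set.ncard_union_eq hdisjd (hB1fin.subset diff_subset)
      (hB2fin.subset diff_subset), hd, hd']
  obtain ⟨a, b, hab, hP1⟩ := Set.ncard_eq_two.mp hd
  obtain ⟨c, d, hcd, hP2⟩ := Set.ncard_eq_two.mp hd'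
  have hdisj2 : Disjoint ({a, b} : Set α) ({c, d} : Set α) := by
    rw [← hP1, ← hP2]; exact hdisjd
  have hac : a ≠ c := by
    rintro rfl
    have hm := Set.disjoint_left.mp hdisj2 (show a ∈ ({a, b} : Set α) by simp)
    exact hm (by simp)
  have had : a ≠ d := by
    rintro rfl
    have hm := Set.disjoint_left.mp hdisj2 (show a ∈ ({a, b} : Set α) by simp)
    exact hm (by simp)
  have hbc : b ≠ c := by
    rintro rfl
    have hm := Set.disjoint_left.mp hdisj2 (show b ∈ ({a, b} : Set α) by simp)
    exact hm (by simp)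
  have hbd : b ≠ d := by
    rintro rfl
    have hm := Set.disjoint_left.mp hdisj2 (show b ∈ ({a, b} : Set α) by simp)
    exact hm (by simp)
  have hX : X = {a, b, c, d} := by
    rw [hXsplit, hP1, hP2]; ext z; simp only [Set.mem_union, Set.mem_insert_iff,
      Set.mem_singleton_iff]; tauto
  have hCX : Disjoint C X := by
    rw [Set.disjoint_left]
    intro x hxC hxX
    rw [hXdef, Set.mem_symmDiff] at hxX
    exact hxX.elim (fun h => h.2 hxC.2) (fun h => h.2 hxC.1)
  have hUnion : B₁ ∪ B₂ = C ∪ X := by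
    ext x
    simp only [hCdef, hXdef, Set.mem_union, Set.mem_inter_iff, Set.mem_symmDiff]
    tauto
  have hB1card : B₁.ncard = C.ncard + 2 := by
    have hdCB : Disjoint C (B₁ \ B₂) := by
      rw [Set.disjoint_left]; exact fun x hxC hxd => hxd.2 hxC.2
    rw [← Set.inter_union_diff B₁ B₂, ← hCdef,
      Set.ncard_union_eq hdCB hCfin (hB1fin.subset diff_subset), hd]
  -- the set of pairs
  set P : Set (Sym2 (Set α)) := {p : Sym2 (Set α) | ∃ D₁ D₂, p = s(D₁, D₂) ∧ M.IsBase D₁ ∧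
      M.IsBase D₂ ∧ D₁ ∪ D₂ = B₁ ∪ B₂ ∧ D₁ ∩ D₂ = B₁ ∩ B₂} with hPdef
  have hP3 : P.ncard = 3 := hΔ
  set Q : Set (Sym2 (Set α)) := {s(C ∪ {a, b}, C ∪ {c, d}), s(C ∪ {a, c}, C ∪ {b, d}),
      s(C ∪ {a, d}, C ∪ {b, c})} with hQdef
  -- set differences within X
  have hd1 : X \ {a, b} = {c, d} := by
    rw [hX]; ext z
    simp only [Set.mem_diff, Set.mem_insert_iff, Set.mem_singleton_iff, not_or]
    constructor
    · rintro ⟨(rfl | rfl | rfl | rfl), h1, h2⟩ <;> tauto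
    · rintro (rfl | rfl) <;> exact ⟨by tauto, by tauto, by tauto⟩
  have hd2 : X \ {a, c} = {b, d} := by
    rw [hX]; ext z
    simp only [Set.mem_diff, Set.mem_insert_iff, Set.mem_singleton_iff, not_or]
    constructor
    · rintro ⟨(rfl | rfl | rfl | rfl), h1, h2⟩ <;> tauto
    · rintro (rfl | rfl) <;> exact ⟨by tauto, by tauto, by tauto⟩
  have hd3 : X \ {a, d} = {b, c} := by
    rw [hX]; ext z
    simp only [Set.mem_diff, Set.mem_insert_iff, Set.mem_singleton_iff, not_or]
    constructor
    · rintro ⟨(rfl | rfl | rfl | rfl), h1, h2⟩ <;> tauto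
    · rintro (rfl | rfl) <;> exact ⟨by tauto, by tauto, by tauto⟩
  have hd4 : X \ {b, c} = {a, d} := by
    rw [hX]; ext z
    simp only [Set.mem_diff, Set.mem_insert_iff, Set.mem_singleton_iff, not_or]
    constructor
    · rintro ⟨(rfl | rfl | rfl | rfl), h1, h2⟩ <;> tauto
    · rintro (rfl | rfl) <;> exact ⟨by tauto, by tauto, by tauto⟩
  have hd5 : X \ {b, d} = {a, c} := by
    rw [hX]; ext z
    simp only [Set.mem_diff, Set.mem_insert_iff, Set.mem_singleton_iff, not_or]
    constructor
    · rintro ⟨(rfl | rfl | rfl | rfl), h1, h2⟩ <;> tauto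
    · rintro (rfl | rfl) <;> exact ⟨by tauto, by tauto, by tauto⟩
  have hd6 : X \ {c, d} = {a, b} := by
    rw [hX]; ext z
    simp only [Set.mem_diff, Set.mem_insert_iff, Set.mem_singleton_iff, not_or]
    constructor
    · rintro ⟨(rfl | rfl | rfl | rfl), h1, h2⟩ <;> tauto
    · rintro (rfl | rfl) <;> exact ⟨by tauto, by tauto, by tauto⟩
  have hPQ : P ⊆ Q := by
    rintro p ⟨D₁, D₂, rfl, hD1, hD2, hU, hI⟩
    have hCD₁ : C ⊆ D₁ := by rw [hCdef, ← hI]; exact Set.inter_subset_left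
    have hCD₂ : C ⊆ D₂ := by rw [hCdef, ← hI]; exact Set.inter_subset_right
    have hD₁sub : D₁ ⊆ C ∪ X := by rw [← hUnion]; exact subset_union_left.trans hU.subset
    have hD₂sub : D₂ ⊆ C ∪ X := by rw [← hUnion]; exact subset_union_right.trans hU.subset
    set S₁ := D₁ \ C with hS₁def
    set S₂ := D₂ \ C with hS₂def
    have hD₁eq : D₁ = C ∪ S₁ := (union_diff_cancel hCD₁).symm
    have hD₂eq : D₂ = C ∪ S₂ := (union_diff_cancel hCD₂).symm
    have hS₁X : S₁ ⊆ X := fun x hx => ((hD₁sub hx.1).resolve_left hx.2)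
    have hS₂X : S₂ ⊆ X := fun x hx => ((hD₂sub hx.1).resolve_left hx.2)
    have hpart : S₂ = X \ S₁ := by
      ext x
      constructor
      · intro hx
        refine ⟨hS₂X hx, fun hx1 => ?_⟩
        have : x ∈ D₁ ∩ D₂ := ⟨hx1.1, hx.1⟩
        rw [hI] at this
        exact hx.2 this
      · rintro ⟨hxX, hxS1⟩
        have hxC : x ∉ C := fun h => hCX.ne_of_mem h hxX rfl
        have : x ∈ D₁ ∪ D₂ := by rw [hU, hUnion]; exact Or.inr hxX
        rcases this with h | h
        · exact absurd ⟨h, hxC⟩ hxS1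
        · exact ⟨h, hxC⟩
    have hD₁fin : D₁.Finite := hfin.subset hD1.subset_ground
    have hS₁card : S₁.ncard = 2 := by
      have hcards : D₁.ncard = B₁.ncard := by
        have := hD1.encard_eq_encard_of_isBase h₁
        rw [Set.ncard_def, this, ← Set.ncard_def]
      have hdCS : Disjoint C S₁ := disjoint_sdiff_right
      have : D₁.ncard = C.ncard + S₁.ncard := by
        rw [hD₁eq, Set.ncard_union_eq hdCS hCfin (hD₁fin.subset (hD₁eq ▸ subset_union_right))]
      omega
    obtain ⟨x, y, hxy, hS₁xy⟩ := Set.ncard_eq_two.mp hS₁card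
    have hx : x ∈ X := hS₁X (hS₁xy ▸ Set.mem_insert _ _)
    have hy : y ∈ X := hS₁X (hS₁xy ▸ Set.mem_insert_of_mem _ rfl)
    rw [hX] at hx hy
    simp only [Set.mem_insert_iff, Set.mem_singleton_iff] at hx hy
    have hpeq : s(D₁, D₂) = s(C ∪ S₁, C ∪ (X \ S₁)) := by rw [← hD₁eq, ← hpart, ← hD₂eq]
    rw [hpeq, hS₁xy]
    rcases hx with rfl | rfl | rfl | rfl <;> rcases hy with rfl | rfl | rfl | rfl <;>
      first
        | exact absurd rfl hxy
        | (first
            | (rw [hd1]; exact Set.mem_insert _ _)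
            | (rw [hd2]; exact Set.mem_insert_of_mem _ (Set.mem_insert _ _))
            | (rw [hd3]; exact Set.mem_insert_of_mem _ (Set.mem_insert_of_mem _ rfl))
            | (rw [Set.pair_comm, hd1]; exact Set.mem_insert _ _)
            | (rw [Set.pair_comm, hd2]; exact Set.mem_insert_of_mem _ (Set.mem_insert _ _))
            | (rw [Set.pair_comm, hd3];
               exact Set.mem_insert_of_mem _ (Set.mem_insert_of_mem _ rfl))
            | (rw [hd4, Sym2.eq_swap];
               exact Set.mem_insert_of_mem _ (Set.mem_insert_of_mem _ rfl))
            | (rw [hd5, Sym2.eq_swap]; exact Set.mem_insert_of_mem _ (Set.mem_insert _ _))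
            | (rw [hd6, Sym2.eq_swap]; exact Set.mem_insert _ _)
            | (rw [Set.pair_comm, hd4, Sym2.eq_swap];
               exact Set.mem_insert_of_mem _ (Set.mem_insert_of_mem _ rfl))
            | (rw [Set.pair_comm, hd5, Sym2.eq_swap];
               exact Set.mem_insert_of_mem _ (Set.mem_insert _ _))
            | (rw [Set.pair_comm, hd6, Sym2.eq_swap]; exact Set.mem_insert _ _))
  have hQfin : Q.Finite := (Set.finite_singleton _).insert _ |>.insert _
  have hQcard : Q.ncard ≤ 3 := by
    rw [hQdef]
    refine (Set.ncard_insert_le _ _).trans ?_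
    have h2 := Set.ncard_insert_le (s(C ∪ ({a, c} : Set α), C ∪ {b, d}))
      ({s(C ∪ ({a, d} : Set α), C ∪ {b, c})} : Set (Sym2 (Set α)))
    rw [Set.ncard_singleton] at h2
    omega
  have hPQeq : P = Q := Set.eq_of_subset_of_ncard_le hPQ (by omega) hQfin
  have key : ∀ U V : Set α, (s(U, V) : Sym2 (Set α)) ∈ P → M.IsBase U ∧ M.IsBase V := by
    rintro U V ⟨D₁, D₂, heq, hB1, hB2, -, -⟩
    rcases Sym2.eq_iff.mp heq with ⟨rfl, rfl⟩ | ⟨rfl, rfl⟩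
    · exact ⟨hB1, hB2⟩
    · exact ⟨hB2, hB1⟩
  have hq1 := key (C ∪ {a, b}) (C ∪ {c, d}) (by
    rw [hPQeq, hQdef]; exact Set.mem_insert _ _)
  have hq2 := key (C ∪ {a, c}) (C ∪ {b, d}) (by
    rw [hPQeq, hQdef]; exact Set.mem_insert_of_mem _ (Set.mem_insert _ _))
  have hq3 := key (C ∪ {a, d}) (C ∪ {b, c}) (by
    rw [hPQeq, hQdef]; exact Set.mem_insert_of_mem _ (Set.mem_insert_of_mem _ rfl))
  obtain ⟨hbab, hbcd⟩ := hq1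
  obtain ⟨hbac, hbbd⟩ := hq2
  obtain ⟨hbad, hbbc⟩ := hq3
  have keyBase : ∀ S, S ⊆ X → S.ncard = 2 → M.IsBase (C ∪ S) := by
    intro S hSX hS2
    obtain ⟨x, y, hxy, rfl⟩ := Set.ncard_eq_two.mp hS2
    have hx : x ∈ X := hSX (Set.mem_insert _ _)
    have hy : y ∈ X := hSX (Set.mem_insert_of_mem _ rfl)
    rw [hX] at hx hy
    simp only [Set.mem_insert_iff, Set.mem_singleton_iff] at hx hy
    rcases hx with rfl | rfl | rfl | rfl <;> rcases hy with rfl | rfl | rfl | rfl <;>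
      first
        | exact absurd rfl hxy
        | exact hbab | exact hbcd | exact hbac | exact hbbd | exact hbad | exact hbbc
        | (rw [Set.pair_comm];
           first | exact hbab | exact hbcd | exact hbac | exact hbbd | exact hbad | exact hbbc)
  -- part 2
  have hCindep : M.Indep C := h₁.indep.subset inter_subset_left
  have hXE : X ⊆ M.E := by
    rw [hXsplit]
    exact union_subset (diff_subset.trans hB1E) (diff_subset.trans hB2E)
  have hXN : X ⊆ (M.con C).E := by
    rw [M.con_ground_eq C]
    exact subset_diff.mpr ⟨hXE, hCX.symm⟩
  have hNbase2 : ∀ S, S ⊆ X → S.ncard = 2 → (M.con C).IsBase S := by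
    intro S h1 h2
    rw [M.con_base_iff hCindep]
    exact ⟨(hCX.symm.mono_left h1), by rw [union_comm]; exact keyBase S h1 h2⟩
  have hNcard : ∀ B', (M.con C).IsBase B' → B'.ncard = 2 := by
    intro B' hB'
    rw [M.con_base_iff hCindep] at hB'
    obtain ⟨hdj, hbase⟩ := hB'
    have hufin : (B' ∪ C).Finite := hfin.subset hbase.subset_ground
    have hcards : (B' ∪ C).ncard = B₁.ncard := by
      have := hbase.encard_eq_encard_of_isBase h₁
      rw [Set.ncard_def, this, ← Set.ncard_def]
    have : (B' ∪ C).ncard = B'.ncard + C.ncard :=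
      Set.ncard_union_eq hdj (hufin.subset subset_union_left) hCfin
    omega
  refine ⟨hXcard, fun B => ?_⟩
  rw [Matroid.isBase_restrict_iff hXN]
  constructor
  · intro hB
    have hBX := hB.subset
    have hBle2 : B.ncard ≤ 2 := by
      obtain ⟨B'', hB'', hsub⟩ := Matroid.indep_iff.mp hB.indep
      have hB''fin : B''.Finite := (hfin.subset ((hB''.subset_ground.trans
        (M.con_ground_eq C ▸ diff_subset))))
      exact (Set.ncard_le_ncard hsub hB''fin).trans (hNcard B'' hB'').le
    obtain ⟨S, hBS, hSX, hS2⟩ := Set.exists_subsuperset_card_eq hBX hBle2 (by omega)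
    have hSbase := hNbase2 S hSX hS2
    have hBeq := hB.eq_of_subset_indep hSbase.indep hBS hSX
    exact ⟨hBX, by rw [hBeq]; exact hS2⟩
  · rintro ⟨hBX, hB2⟩
    have hBbase := hNbase2 B hBX hB2
    rw [Matroid.isBasis_iff hXN]
    exact ⟨hBbase.indep, hBX, fun J hJ hBJ hJX => hBbase.eq_of_subset_indep hJ hBJ⟩
end

section
/- Let M be a rank 2 matroid without loops or coloops on a ground set E with |E| ≥ 5 containing two disjoint bases. Then there exist three elements a, b ∈ E and three elements c₁, c₂, c₃ ∈ E \ {a,b} such that all six pairs {a, cᵢ} and {b, cᵢ} (i = 1,2,3) are bases of M. -/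
open Set

lemma triple_extract {α : Type*} {C : Set α} (hfin : C.Finite) (h3 : 3 ≤ C.ncard) :
    ∃ c₁ c₂ c₃, c₁ ∈ C ∧ c₂ ∈ C ∧ c₃ ∈ C ∧ c₁ ≠ c₂ ∧ c₁ ≠ c₃ ∧ c₂ ≠ c₃ := by
  obtain ⟨c₁, hc₁⟩ := Set.nonempty_of_ncard_ne_zero (s := C) (by omega)
  have h1 : (C \ {c₁}).ncard = C.ncard - 1 := Set.ncard_diff_singleton_of_mem hc₁
  obtain ⟨c₂, hc₂⟩ := Set.nonempty_of_ncard_ne_zero (s := C \ {c₁}) (by omega)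
  have h2 : ((C \ {c₁}) \ {c₂}).ncard = (C \ {c₁}).ncard - 1 :=
    Set.ncard_diff_singleton_of_mem hc₂
  obtain ⟨c₃, hc₃⟩ := Set.nonempty_of_ncard_ne_zero (s := (C \ {c₁}) \ {c₂}) (by omega)
  exact ⟨c₁, c₂, c₃, hc₁, hc₂.1, hc₃.1.1,
    fun h => hc₂.2 h.symm, fun h => hc₃.1.2 h.symm, fun h => hc₃.2 h.symm⟩

lemma rank_two_aux {α : Type*} (M : Matroid α) (hfin : M.E.Finite)
    (hcard : 5 ≤ M.E.ncard)
    (hrank : ∀ B, M.IsBase B → B.ncard = 2)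
    (hloops : ∀ e ∈ M.E, ∃ B, M.IsBase B ∧ e ∈ B)
    (hcoloops : ∀ e ∈ M.E, ∃ B, M.IsBase B ∧ e ∉ B)
    (x y : α) (hxy : x ≠ y) (hbxy : M.IsBase {x, y})
    (hle : {e ∈ M.E | e = x ∨ ¬ M.Indep {x, e}}.ncard ≤
           {e ∈ M.E | e = y ∨ ¬ M.Indep {y, e}}.ncard) :
    ∃ a b c₁ c₂ c₃ : α, a ∈ M.E ∧ b ∈ M.E ∧ a ≠ b ∧
      c₁ ∈ M.E \ {a, b} ∧ c₂ ∈ M.E \ {a, b} ∧ c₃ ∈ M.E \ {a, b} ∧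
      c₁ ≠ c₂ ∧ c₁ ≠ c₃ ∧ c₂ ≠ c₃ ∧
      M.IsBase {a, c₁} ∧ M.IsBase {a, c₂} ∧ M.IsBase {a, c₃} ∧
      M.IsBase {b, c₁} ∧ M.IsBase {b, c₂} ∧ M.IsBase {b, c₃} := by
  -- basic facts
  have hxE : x ∈ M.E := hbxy.subset_ground (by simp)
  have hyE : y ∈ M.E := hbxy.subset_ground (by simp)
  have indepSingle : ∀ e ∈ M.E, M.Indep {e} := by
    intro e he
    obtain ⟨B, hB, heB⟩ := hloops e he
    exact hB.indep.subset (by simpa)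
  have basePair : ∀ e f : α, e ≠ f → M.Indep {e, f} → M.IsBase {e, f} := by
    intro e f hef hI
    obtain ⟨B, hB, hsub⟩ := hI.exists_isBase_superset
    have : ({e, f} : Set α) = B :=
      Set.eq_of_subset_of_ncard_le hsub
        (by rw [hrank B hB, Set.ncard_pair hef]) (hfin.subset hB.subset_ground)
    rwa [this]
  have aug : ∀ e g f : α, e ≠ g → M.Indep {e, g} → f ∈ M.E → f ≠ e → f ≠ g →
      M.Indep {f, e} ∨ M.Indep {f, g} := by
    intro e g f heg hI hfE hfe hfg
    have h1 : ({f} : Set α).encard < ({e, g} : Set α).encard := by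
      rw [Set.encard_singleton, Set.encard_pair heg]; norm_num
    obtain ⟨z, hz, hzI⟩ := (indepSingle f hfE).augment hI h1
    rw [Set.pair_comm] at hzI
    rcases hz.1 with rfl | rfl
    · left; simpa using hzI
    · right; simpa using hzI
  -- parallel classes of x and y
  set Px := {e ∈ M.E | e = x ∨ ¬ M.Indep {x, e}} with hPx
  set Py := {e ∈ M.E | e = y ∨ ¬ M.Indep {y, e}} with hPy
  have hPxE : Px ⊆ M.E := Set.sep_subset _ _
  have hPyE : Py ⊆ M.E := Set.sep_subset _ _
  have hxPx : x ∈ Px := ⟨hxE, Or.inl rfl⟩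
  have hyPy : y ∈ Py := ⟨hyE, Or.inl rfl⟩
  -- membership facts for complements
  have notPx : ∀ c ∈ M.E, c ∉ Px → c ≠ x ∧ M.Indep {x, c} := by
    intro c hc hcn
    by_contra h
    push_neg at h
    rcases Classical.em (c = x) with h' | h'
    · exact hcn ⟨hc, Or.inl h'⟩
    · exact hcn ⟨hc, Or.inr (h h')⟩
  have notPy : ∀ c ∈ M.E, c ∉ Py → c ≠ y ∧ M.Indep {y, c} := by
    intro c hc hcn
    by_contra h
    push_neg at h
    rcases Classical.em (c = y) with h' | h'
    · exact hcn ⟨hc, Or.inl h'⟩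
    · exact hcn ⟨hc, Or.inr (h h')⟩
  -- key basis lemma: element of class, element outside class form a base
  have keyX : ∀ a ∈ Px, ∀ c ∈ M.E, c ∉ Px → M.IsBase {a, c} := by
    intro a ha c hcE hcn
    obtain ⟨hcx, hIxc⟩ := notPx c hcE hcn
    have hac : a ≠ c := fun h => hcn (h ▸ ha)
    rcases ha.2 with rfl | hax
    · exact basePair _ _ (Ne.symm hcx) hIxc
    · have hax' : a ≠ x := by
        rintro rfl
        exact hax (indepSingle a ha.1 |>.subset (by simp))
      rcases aug x c a (Ne.symm hcx) hIxc ha.1 hax' hac with h | h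
      · exact absurd (h.subset (by rw [Set.pair_comm]) |>.subset (le_refl _)) hax
      · exact basePair _ _ hac h
  have keyY : ∀ a ∈ Py, ∀ c ∈ M.E, c ∉ Py → M.IsBase {a, c} := by
    intro a ha c hcE hcn
    obtain ⟨hcy, hIyc⟩ := notPy c hcE hcn
    have hac : a ≠ c := fun h => hcn (h ▸ ha)
    rcases ha.2 with rfl | hay
    · exact basePair _ _ (Ne.symm hcy) hIyc
    · have hay' : a ≠ y := by
        rintro rfl
        exact hay (indepSingle a ha.1 |>.subset (by simp))
      rcases aug y c a (Ne.symm hcy) hIyc ha.1 hay' hac with h | h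
      · exact absurd (h.subset (by rw [Set.pair_comm]) |>.subset (le_refl _)) hay
      · exact basePair _ _ hac h
  -- disjointness of the two classes
  have hdisjC : Disjoint Px Py := by
    rw [Set.disjoint_left]
    rintro e ⟨heE, hex⟩ ⟨_, hey⟩
    rcases hex with rfl | hex
    · rcases hey with rfl | hey
      · exact hxy rfl
      · exact hey (hbxy.indep.subset (by rw [Set.pair_comm]))
    · rcases hey with rfl | hey
      · exact hex (hbxy.indep.subset (le_refl _))
      · have hex' : e ≠ x := by rintro rfl; exact hex (indepSingle e heE |>.subset (by simp))
        have hey' : e ≠ y := by rintro rfl; exact hey (indepSingle e heE |>.subset (by simp))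
        rcases aug x y e hxy hbxy.indep heE hex' hey' with h | h
        · exact hex (h.subset (by rw [Set.pair_comm]))
        · exact hey (h.subset (by rw [Set.pair_comm]))
  -- counting
  set T := M.E \ (Px ∪ Py) with hT
  have hTE : T ⊆ M.E := Set.diff_subset
  have hPxfin : Px.Finite := hfin.subset hPxE
  have hPyfin : Py.Finite := hfin.subset hPyE
  have hTfin : T.Finite := hfin.subset hTE
  have hcount : T.ncard + (Px.ncard + Py.ncard) = M.E.ncard := by
    rw [← Set.ncard_union_eq hdisjC hPxfin hPyfin]
    exact Set.ncard_diff_add_ncard_of_subset (Set.union_subset hPxE hPyE) hfin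
  have hxT : x ∉ T := fun h => h.2 (Or.inl hxPx)
  have hyT : y ∉ T := fun h => h.2 (Or.inr hyPy)
  have hkpos : 1 ≤ Px.ncard := by have := Set.ncard_pos hPxfin |>.mpr ⟨x, hxPx⟩; omega
  have hmpos : 1 ≤ Py.ncard := by have := Set.ncard_pos hPyfin |>.mpr ⟨y, hyPy⟩; omega
  by_cases hT3 : 3 ≤ T.ncard
  -- Case 1: at least 3 elements outside both classes
  · obtain ⟨c₁, c₂, c₃, hc₁, hc₂, hc₃, h12, h13, h23⟩ := triple_extract hTfin hT3
    refine ⟨x, y, c₁, c₂, c₃, hxE, hyE, hxy, ?_, ?_, ?_, h12, h13, h23, ?_, ?_, ?_, ?_, ?_, ?_⟩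
    · exact ⟨hc₁.1, by rintro (rfl | rfl) <;> [exact hxT hc₁; exact hyT hc₁]⟩
    · exact ⟨hc₂.1, by rintro (rfl | rfl) <;> [exact hxT hc₂; exact hyT hc₂]⟩
    · exact ⟨hc₃.1, by rintro (rfl | rfl) <;> [exact hxT hc₃; exact hyT hc₃]⟩
    · exact keyX x hxPx c₁ hc₁.1 (fun h => hc₁.2 (Or.inl h))
    · exact keyX x hxPx c₂ hc₂.1 (fun h => hc₂.2 (Or.inl h))
    · exact keyX x hxPx c₃ hc₃.1 (fun h => hc₃.2 (Or.inl h))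
    · exact keyY y hyPy c₁ hc₁.1 (fun h => hc₁.2 (Or.inr h))
    · exact keyY y hyPy c₂ hc₂.1 (fun h => hc₂.2 (Or.inr h))
    · exact keyY y hyPy c₃ hc₃.1 (fun h => hc₃.2 (Or.inr h))
  · push_neg at hT3
    by_cases hm3 : Py.ncard + 3 ≤ M.E.ncard
    -- Case 2: Py is not too big; use two elements of Py and E \ Py
    · have hm2 : 2 ≤ Py.ncard := by omega
      obtain ⟨b, hbPy, hby⟩ := Set.exists_ne_of_one_lt_ncard (s := Py) (by omega) y
      have hCfin : (M.E \ Py).Finite := hfin.diff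
      have hC3 : 3 ≤ (M.E \ Py).ncard := by
        have := Set.ncard_diff_add_ncard_of_subset hPyE hfin
        omega
      obtain ⟨c₁, c₂, c₃, hc₁, hc₂, hc₃, h12, h13, h23⟩ := triple_extract hCfin hC3
      refine ⟨y, b, c₁, c₂, c₃, hyE, hPyE hbPy, Ne.symm hby, ?_, ?_, ?_, h12, h13, h23,
        ?_, ?_, ?_, ?_, ?_, ?_⟩
      · exact ⟨hc₁.1, by rintro (rfl | rfl) <;> [exact hc₁.2 hyPy; exact hc₁.2 hbPy]⟩
      · exact ⟨hc₂.1, by rintro (rfl | rfl) <;> [exact hc₂.2 hyPy; exact hc₂.2 hbPy]⟩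
      · exact ⟨hc₃.1, by rintro (rfl | rfl) <;> [exact hc₃.2 hyPy; exact hc₃.2 hbPy]⟩
      · exact keyY y hyPy c₁ hc₁.1 hc₁.2
      · exact keyY y hyPy c₂ hc₂.1 hc₂.2
      · exact keyY y hyPy c₃ hc₃.1 hc₃.2
      · exact keyY b hbPy c₁ hc₁.1 hc₁.2
      · exact keyY b hbPy c₂ hc₂.1 hc₂.2
      · exact keyY b hbPy c₃ hc₃.1 hc₃.2
    · push_neg at hm3
      -- now Py.ncard ≥ M.E.ncard - 2, so Px.ncard + T.ncard ≤ 2, and Px.ncard ≤ Py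
      have hkt : Px.ncard + T.ncard ≤ 2 := by omega
      by_cases hk2 : 2 ≤ Px.ncard
      -- Px has ≥ 2 elements and is small; use two elements of Px against E \ Px
      · obtain ⟨b, hbPx, hbx⟩ := Set.exists_ne_of_one_lt_ncard (s := Px) (by omega) x
        have hCfin : (M.E \ Px).Finite := hfin.diff
        have hC3 : 3 ≤ (M.E \ Px).ncard := by
          have := Set.ncard_diff_add_ncard_of_subset hPxE hfin
          omega
        obtain ⟨c₁, c₂, c₃, hc₁, hc₂, hc₃, h12, h13, h23⟩ := triple_extract hCfin hC3
        refine ⟨x, b, c₁, c₂, c₃, hxE, hPxE hbPx, Ne.symm hbx, ?_, ?_, ?_, h12, h13, h23,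
          ?_, ?_, ?_, ?_, ?_, ?_⟩
        · exact ⟨hc₁.1, by rintro (rfl | rfl) <;> [exact hc₁.2 hxPx; exact hc₁.2 hbPx]⟩
        · exact ⟨hc₂.1, by rintro (rfl | rfl) <;> [exact hc₂.2 hxPx; exact hc₂.2 hbPx]⟩
        · exact ⟨hc₃.1, by rintro (rfl | rfl) <;> [exact hc₃.2 hxPx; exact hc₃.2 hbPx]⟩
        · exact keyX x hxPx c₁ hc₁.1 hc₁.2
        · exact keyX x hxPx c₂ hc₂.1 hc₂.2
        · exact keyX x hxPx c₃ hc₃.1 hc₃.2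
        · exact keyX b hbPx c₁ hc₁.1 hc₁.2
        · exact keyX b hbPx c₂ hc₂.1 hc₂.2
        · exact keyX b hbPx c₃ hc₃.1 hc₃.2
      · push_neg at hk2
      -- Px = {x}
        have hk1 : Px.ncard = 1 := by omega
        have hPxx : Px = {x} := by
          have : ({x} : Set α) ⊆ Px := by simpa using hxPx
          exact (Set.eq_of_subset_of_ncard_le this (by simp [hk1]) hPxfin).symm
        rcases Nat.lt_or_ge T.ncard 1 with ht0 | ht1
        -- T empty : x is a coloop, contradiction
        · exfalso
          have hTempty : T = ∅ := by
            rw [← Set.ncard_eq_zero hTfin]; omega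
          obtain ⟨B, hB, hxB⟩ := hcoloops x hxE
          obtain ⟨u, v, huv, rfl⟩ := Set.ncard_eq_two.mp (hrank B hB)
          have huE : u ∈ M.E := hB.subset_ground (by simp)
          have hvE : v ∈ M.E := hB.subset_ground (by simp)
          have huPy : u ∈ Py := by
            by_contra h
            have : u ∈ T := ⟨huE, fun hmem => by
              rcases hmem with hmem | hmem
              · rw [hPxx] at hmem; exact hxB (by simpa using Or.inl hmem.symm)
              · exact h hmem⟩
            rw [hTempty] at this; exact this
          have hvPy : v ∈ Py := by
            by_contra h
            have : v ∈ T := ⟨hvE, fun hmem => by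
              rcases hmem with hmem | hmem
              · rw [hPxx] at hmem; exact hxB (by simpa using Or.inr hmem.symm)
              · exact h hmem⟩
            rw [hTempty] at this; exact this
          -- u, v both in Py but {u,v} is independent : contradiction
          rcases huPy.2 with rfl | hu
          · rcases hvPy.2 with rfl | hv
            · exact huv rfl
            · exact hv hB.indep
          · rcases hvPy.2 with rfl | hv
            · exact hu (hB.indep.subset (by rw [Set.pair_comm]))
            · have hu' : u ≠ y := by rintro rfl; exact hu (indepSingle u huE |>.subset (by simp))
              have hv' : v ≠ y := by rintro rfl; exact hv (indepSingle v hvE |>.subset (by simp))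
              rcases aug u v y huv hB.indep hyE (Ne.symm hu') (Ne.symm hv') with h | h
              · exact hu h
              · exact hv h
        -- T = {z} : use x and z against Py
        · have ht1' : T.ncard = 1 := by omega
          obtain ⟨z, hzT⟩ := Set.nonempty_of_ncard_ne_zero (s := T) (by omega)
          have hzE : z ∈ M.E := hzT.1
          have hzPx : z ∉ Px := fun h => hzT.2 (Or.inl h)
          have hzPy : z ∉ Py := fun h => hzT.2 (Or.inr h)
          have hxz : x ≠ z := by rintro rfl; exact hzPx hxPx
          have hm3' : 3 ≤ Py.ncard := by omega
          obtain ⟨c₁, c₂, c₃, hc₁, hc₂, hc₃, h12, h13, h23⟩ := triple_extract hPyfin hm3'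
          have hxnPy : x ∉ Py := Set.disjoint_left.mp hdisjC hxPx
          have basex : ∀ c ∈ Py, M.IsBase {x, c} := by
            intro c hc
            have hcPx : c ∉ Px := Set.disjoint_left.mp hdisjC.symm hc
            exact keyX x hxPx c (hPyE hc) hcPx
          have basez : ∀ c ∈ Py, M.IsBase {z, c} := by
            intro c hc
            have h := keyY c hc z hzE hzPy
            rwa [Set.pair_comm] at h
          refine ⟨x, z, c₁, c₂, c₃, hxE, hzE, hxz, ?_, ?_, ?_, h12, h13, h23,
            basex c₁ hc₁, basex c₂ hc₂, basex c₃ hc₃, basez c₁ hc₁, basez c₂ hc₂, basez c₃ hc₃⟩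
          · exact ⟨hPyE hc₁, by rintro (rfl | rfl) <;> [exact hxnPy hc₁; exact hzPy hc₁]⟩
          · exact ⟨hPyE hc₂, by rintro (rfl | rfl) <;> [exact hxnPy hc₂; exact hzPy hc₂]⟩
          · exact ⟨hPyE hc₃, by rintro (rfl | rfl) <;> [exact hxnPy hc₃; exact hzPy hc₃]⟩

/-- A rank-2 matroid without loops or coloops on at least 5 elements containing two disjoint
bases has a `K_{2,3}` in its "basis graph on the ground set". -/
theorem rank_two_K23 {α : Type*} (M : Matroid α) (hfin : M.E.Finite)
    (hcard : 5 ≤ M.E.ncard)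
    (hrank : ∀ B, M.IsBase B → B.ncard = 2)
    (hloops : ∀ e ∈ M.E, ∃ B, M.IsBase B ∧ e ∈ B)
    (hcoloops : ∀ e ∈ M.E, ∃ B, M.IsBase B ∧ e ∉ B)
    (hdisj : ∃ B₁ B₂, M.IsBase B₁ ∧ M.IsBase B₂ ∧ Disjoint B₁ B₂) :
    ∃ a b c₁ c₂ c₃ : α, a ∈ M.E ∧ b ∈ M.E ∧ a ≠ b ∧
      c₁ ∈ M.E \ {a, b} ∧ c₂ ∈ M.E \ {a, b} ∧ c₃ ∈ M.E \ {a, b} ∧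
      c₁ ≠ c₂ ∧ c₁ ≠ c₃ ∧ c₂ ≠ c₃ ∧
      M.IsBase {a, c₁} ∧ M.IsBase {a, c₂} ∧ M.IsBase {a, c₃} ∧
      M.IsBase {b, c₁} ∧ M.IsBase {b, c₂} ∧ M.IsBase {b, c₃} := by
  obtain ⟨B, _, hB, _, _⟩ := hdisj
  obtain ⟨x, y, hxy, rfl⟩ := Set.ncard_eq_two.mp (hrank B hB)
  rcases le_total ({e ∈ M.E | e = x ∨ ¬ M.Indep {x, e}}.ncard)
      ({e ∈ M.E | e = y ∨ ¬ M.Indep {y, e}}.ncard) with h | h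
  · exact rank_two_aux M hfin hcard hrank hloops hcoloops x y hxy hB h
  · exact rank_two_aux M hfin hcard hrank hloops hcoloops y x (Ne.symm hxy)
      (by rwa [Set.pair_comm]) h
end

section
/- Let M be a matroid in which every two bases B₁, B₂ satisfy |B₁ \ B₂| ≤ 2, and suppose M is binary (equivalently, Δ(B₁,B₂) ≠ 3 for all pairs of bases). Then M is strongly base orderable: for any two bases B₁ and B₂ there is a bijection π : B₁ → B₂ such that (B₁ \ C) ∪ π(C) is a basis for all C ⊆ B₁. -/
section Helpers

open Set

variable {α : Type*}

lemma cross_eq {B₁ B₂ : Set α} {e₁ e₂ a f' : α} (hne : e₁ ≠ e₂) (hnf : a ≠ f')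
    (hd1 : B₁ \ B₂ = {e₁, e₂}) (hd2 : B₂ \ B₁ = {a, f'}) :
    insert e₁ (B₂ \ {a}) = insert f' (B₁ \ {e₂}) := by
  have he₁ : e₁ ∈ B₁ \ B₂ := by rw [hd1]; exact mem_insert _ _
  have he₂ : e₂ ∈ B₁ \ B₂ := by rw [hd1]; exact mem_insert_of_mem _ rfl
  have ha : a ∈ B₂ \ B₁ := by rw [hd2]; exact mem_insert _ _
  have hf : f' ∈ B₂ \ B₁ := by rw [hd2]; exact mem_insert_of_mem _ rfl
  ext x
  simp only [mem_insert_iff, mem_diff, mem_singleton_iff]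
  constructor
  · rintro (rfl | ⟨hx, hxa⟩)
    · exact Or.inr ⟨he₁.1, hne⟩
    · by_cases hB : x ∈ B₁
      · exact Or.inr ⟨hB, fun h => he₂.2 (h ▸ hx)⟩
      · have : x ∈ ({a, f'} : Set α) := hd2 ▸ ⟨hx, hB⟩
        rcases this with rfl | rfl
        · exact absurd rfl hxa
        · exact Or.inl rfl
  · rintro (rfl | ⟨hx, hxe⟩)
    · exact Or.inr ⟨hf.1, hnf.symm⟩
    · by_cases hB : x ∈ B₂
      · exact Or.inr ⟨hB, fun h => ha.2 (h ▸ hx)⟩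
      · have : x ∈ ({e₁, e₂} : Set α) := hd1 ▸ ⟨hx, hB⟩
        rcases this with rfl | rfl
        · exact Or.inl rfl
        · exact absurd rfl hxe

lemma diff_union_diff_eq {B C s : Set α} (h1 : s ⊆ C) (h2 : C ⊆ B) :
    (B \ C) ∪ (C \ s) = B \ s := by
  ext x
  simp only [mem_union, mem_diff]
  constructor
  · rintro (⟨h, hn⟩ | ⟨h, hn⟩)
    · exact ⟨h, fun hs => hn (h1 hs)⟩
    · exact ⟨h2 h, hn⟩
  · rintro ⟨hB, hs⟩
    by_cases hC : x ∈ C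
    · exact Or.inr ⟨hC, hs⟩
    · exact Or.inl ⟨hB, hC⟩

lemma base2_eq {B₁ B₂ : Set α} {e₁ e₂ a b : α}
    (hd1 : B₁ \ B₂ = {e₁, e₂}) (hd2 : B₂ \ B₁ = {a, b}) :
    B₂ = insert a (insert b (B₁ \ {e₁, e₂})) := by
  have he₁ : e₁ ∈ B₁ \ B₂ := by rw [hd1]; exact mem_insert _ _
  have he₂ : e₂ ∈ B₁ \ B₂ := by rw [hd1]; exact mem_insert_of_mem _ rfl
  have ha : a ∈ B₂ \ B₁ := by rw [hd2]; exact mem_insert _ _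
  have hb : b ∈ B₂ \ B₁ := by rw [hd2]; exact mem_insert_of_mem _ rfl
  ext x
  simp only [mem_insert_iff, mem_diff, mem_singleton_iff]
  constructor
  · intro hx
    by_cases hB : x ∈ B₁
    · refine Or.inr (Or.inr ⟨hB, ?_⟩)
      rintro (h | h)
      · exact he₁.2 (h ▸ hx)
      · exact he₂.2 (h ▸ hx)
    · have : x ∈ ({a, b} : Set α) := hd2 ▸ ⟨hx, hB⟩
      rcases this with h | h
      · exact Or.inl h
      · exact Or.inr (Or.inl h)
  · rintro (rfl | rfl | ⟨hx, hne⟩)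
    · exact ha.1
    · exact hb.1
    · by_contra hB
      have : x ∈ ({e₁, e₂} : Set α) := hd1 ▸ ⟨hx, hB⟩
      exact hne this

lemma swap2 {M : Matroid α} {B₁ B₂ : Set α} {e₁ e₂ a b : α}
    (hB₁ : M.IsBase B₁) (hB₂ : M.IsBase B₂)
    (hne : e₁ ≠ e₂) (hab : a ≠ b)
    (hd1 : B₁ \ B₂ = {e₁, e₂}) (hd2 : B₂ \ B₁ = {a, b})
    (hKa : M.IsBase (insert a (B₁ \ {e₁}))) (hKb : M.IsBase (insert b (B₁ \ {e₂}))) :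
    ∃ π : α → α, Set.BijOn π B₁ B₂ ∧ ∀ C ⊆ B₁, M.IsBase ((B₁ \ C) ∪ π '' C) := by
  classical
  have he₁ : e₁ ∈ B₁ \ B₂ := by rw [hd1]; exact mem_insert _ _
  have he₂ : e₂ ∈ B₁ \ B₂ := by rw [hd1]; exact mem_insert_of_mem _ rfl
  have ha : a ∈ B₂ \ B₁ := by rw [hd2]; exact mem_insert _ _
  have hb : b ∈ B₂ \ B₁ := by rw [hd2]; exact mem_insert_of_mem _ rfl
  set π : α → α := fun x => if x = e₁ then a else if x = e₂ then b else x with hπ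
  have hπe₁ : π e₁ = a := by simp [hπ]
  have hπe₂ : π e₂ = b := by simp [hπ, hne.symm]
  have hπid : ∀ x, x ≠ e₁ → x ≠ e₂ → π x = x := by
    intro x h1 h2; simp [hπ, h1, h2]
  have himg_id : ∀ s : Set α, (∀ x ∈ s, x ≠ e₁ ∧ x ≠ e₂) → π '' s = s := by
    intro s hs
    rw [Set.image_congr (g := id) (fun x hx => hπid x (hs x hx).1 (hs x hx).2), image_id]
  have hB₂eq : B₂ = insert a (insert b (B₁ \ {e₁, e₂})) := base2_eq hd1 hd2
  -- image computation for any C containing a subset of {e₁, e₂}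
  refine ⟨π, ?_, ?_⟩
  · -- BijOn
    have hsub : ({e₁, e₂} : Set α) ⊆ B₁ := by
      rintro x (rfl | rfl); exacts [he₁.1, he₂.1]
    have hB₁eq : ({e₁, e₂} : Set α) ∪ (B₁ \ {e₁, e₂}) = B₁ := union_diff_cancel hsub
    have himg : π '' B₁ = B₂ := by
      conv_lhs => rw [← hB₁eq]
      rw [image_union, show ({e₁, e₂} : Set α) = insert e₁ {e₂} from rfl, image_insert_eq,
        image_singleton, hπe₁, hπe₂,
        himg_id _ (fun x hx => ⟨fun h => (h ▸ hx).2 (mem_insert _ _),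
          fun h => (h ▸ hx).2 (mem_insert_of_mem _ rfl)⟩), hB₂eq]
      ext x
      simp only [union_def, mem_insert_iff, mem_setOf_eq, mem_singleton_iff, mem_diff]
      tauto
    refine ⟨fun x hx => himg ▸ mem_image_of_mem π hx, ?_, himg.symm.subset⟩
    intro x hx y hy h
    simp only [hπ] at h
    split_ifs at h with h1 h2 h3 h4 <;> subst_vars <;> first
      | rfl
      | (exact absurd rfl hab)
      | (exact absurd rfl hab.symm)
      | (exact absurd hx ha.2)
      | (exact absurd hy ha.2)
      | (exact absurd hx hb.2)
      | (exact absurd hy hb.2)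
  · intro C hC
    by_cases hc1 : e₁ ∈ C <;> by_cases hc2 : e₂ ∈ C
    · -- both
      have hsub : ({e₁, e₂} : Set α) ⊆ C := by rintro x (rfl | rfl); exacts [hc1, hc2]
      have himg : π '' C = insert a (insert b (C \ {e₁, e₂})) := by
        conv_lhs => rw [← union_diff_cancel hsub]
        rw [image_union, show ({e₁, e₂} : Set α) = insert e₁ {e₂} from rfl, image_insert_eq,
          image_singleton, hπe₁, hπe₂,
          himg_id _ (fun x hx => ⟨fun h => (h ▸ hx).2 (mem_insert _ _),
            fun h => (h ▸ hx).2 (mem_insert_of_mem _ rfl)⟩)]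
        simp [Set.insert_union]
      rw [himg, union_insert, union_insert, diff_union_diff_eq hsub hC, ← hB₂eq]
      exact hB₂
    · -- e₁ only
      have hsub : ({e₁} : Set α) ⊆ C := singleton_subset_iff.mpr hc1
      have himg : π '' C = insert a (C \ {e₁}) := by
        conv_lhs => rw [← union_diff_cancel hsub]
        rw [image_union, image_singleton, hπe₁,
          himg_id _ (fun x hx => ⟨fun h => (h ▸ hx).2 rfl, fun h => hc2 (h ▸ hx).1⟩),
          singleton_union]
      rw [himg, union_insert, diff_union_diff_eq hsub hC]
      exact hKa
    · -- e₂ only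
      have hsub : ({e₂} : Set α) ⊆ C := singleton_subset_iff.mpr hc2
      have himg : π '' C = insert b (C \ {e₂}) := by
        conv_lhs => rw [← union_diff_cancel hsub]
        rw [image_union, image_singleton, hπe₂,
          himg_id _ (fun x hx => ⟨fun h => hc1 (h ▸ hx).1, fun h => (h ▸ hx).2 rfl⟩),
          singleton_union]
      rw [himg, union_insert, diff_union_diff_eq hsub hC]
      exact hKb
    · -- neither
      have himg : π '' C = C := himg_id C (fun x hx =>
        ⟨fun h => hc1 (h ▸ hx), fun h => hc2 (h ▸ hx)⟩)
      rw [himg, diff_union_of_subset hC]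
      exact hB₁

lemma swap1 {M : Matroid α} {B₁ B₂ : Set α} {e f : α}
    (hB₁ : M.IsBase B₁) (hB₂ : M.IsBase B₂)
    (hd1 : B₁ \ B₂ = {e}) (hd2 : B₂ \ B₁ = {f}) :
    ∃ π : α → α, Set.BijOn π B₁ B₂ ∧ ∀ C ⊆ B₁, M.IsBase ((B₁ \ C) ∪ π '' C) := by
  classical
  have he : e ∈ B₁ \ B₂ := by rw [hd1]; rfl
  have hf : f ∈ B₂ \ B₁ := by rw [hd2]; rfl
  set π : α → α := fun x => if x = e then f else x with hπ
  have hπe : π e = f := by simp [hπ]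
  have himg_id : ∀ s : Set α, (∀ x ∈ s, x ≠ e) → π '' s = s := by
    intro s hs
    rw [Set.image_congr (g := id) (fun x hx => by simp [hπ, hs x hx]), image_id]
  have hB₂eq : B₂ = insert f (B₁ \ {e}) := by
    ext x
    simp only [mem_insert_iff, mem_diff, mem_singleton_iff]
    constructor
    · intro hx
      by_cases hB : x ∈ B₁
      · exact Or.inr ⟨hB, fun h => he.2 (h ▸ hx)⟩
      · have : x ∈ ({f} : Set α) := hd2 ▸ ⟨hx, hB⟩
        exact Or.inl this
    · rintro (rfl | ⟨hx, hxe⟩)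
      · exact hf.1
      · by_contra hB
        exact hxe (show x ∈ ({e} : Set α) from hd1 ▸ ⟨hx, hB⟩)
  refine ⟨π, ?_, ?_⟩
  · have hsub : ({e} : Set α) ⊆ B₁ := singleton_subset_iff.mpr he.1
    have himg : π '' B₁ = B₂ := by
      conv_lhs => rw [← union_diff_cancel hsub]
      rw [image_union, image_singleton, hπe,
        himg_id _ (fun x hx => fun h => hx.2 (h ▸ rfl)), singleton_union, ← hB₂eq]
    refine ⟨fun x hx => himg ▸ mem_image_of_mem π hx, ?_, himg.symm.subset⟩
    intro x hx y hy h
    simp only [hπ] at h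
    split_ifs at h with h1 h2 <;> subst_vars <;> first
      | rfl
      | (exact absurd hy hf.2)
      | (exact absurd hx hf.2)
  · intro C hC
    by_cases hc : e ∈ C
    · have hsub : ({e} : Set α) ⊆ C := singleton_subset_iff.mpr hc
      have himg : π '' C = insert f (C \ {e}) := by
        conv_lhs => rw [← union_diff_cancel hsub]
        rw [image_union, image_singleton, hπe,
          himg_id _ (fun x hx => fun h => hx.2 (h ▸ rfl)), singleton_union]
      rw [himg, union_insert,
        show (B₁ \ C) ∪ (C \ {e}) = B₁ \ {e} by
          ext x
          simp only [mem_union, mem_diff, mem_singleton_iff]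
          constructor
          · rintro (⟨h1, h2⟩ | ⟨h1, h2⟩)
            · exact ⟨h1, fun hh => h2 (hh ▸ hc)⟩
            · exact ⟨hC h1, h2⟩
          · rintro ⟨h1, h2⟩
            by_cases hxC : x ∈ C
            · exact Or.inr ⟨hxC, h2⟩
            · exact Or.inl ⟨h1, hxC⟩, ← hB₂eq]
      exact hB₂
    · have himg : π '' C = C := himg_id C (fun x hx h => hc (h ▸ hx))
      rw [himg, diff_union_of_subset hC]
      exact hB₁

end Helpers

open Set in
/-- A binary matroid in which any two bases `B₁, B₂` satisfy `|B₁ \ B₂| ≤ 2` is strongly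
base orderable. -/
theorem strongly_base_orderable {α : Type*} (M : Matroid α) (hfin : M.E.Finite)
    (hdist : ∀ B₁ B₂, M.IsBase B₁ → M.IsBase B₂ → (B₁ \ B₂).ncard ≤ 2)
    (hbin : ∀ B₁ B₂, M.IsBase B₁ → M.IsBase B₂ → M.deltaPairs B₁ B₂ ≠ 3) :
    ∀ B₁ B₂, M.IsBase B₁ → M.IsBase B₂ → ∃ π : α → α, Set.BijOn π B₁ B₂ ∧
      ∀ C ⊆ B₁, M.IsBase ((B₁ \ C) ∪ π '' C) := by
  intro B₁ B₂ hB₁ hB₂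
  have hfin1 : (B₁ \ B₂).Finite := hfin.subset (Set.diff_subset.trans hB₁.subset_ground)
  have hd := hdist B₁ B₂ hB₁ hB₂
  obtain h0 | h1 | h2 : (B₁ \ B₂).ncard = 0 ∨ (B₁ \ B₂).ncard = 1 ∨ (B₁ \ B₂).ncard = 2 := by
    omega
  · -- distance 0 : B₁ = B₂
    have hEq : B₁ = B₂ :=
      hB₁.eq_of_subset_isBase hB₂ (Set.diff_eq_empty.mp ((Set.ncard_eq_zero hfin1).mp h0))
    refine ⟨id, hEq ▸ Set.bijOn_id B₁, fun C hC => ?_⟩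
    rw [Set.image_id, Set.diff_union_of_subset hC]
    exact hB₁
  · -- distance 1
    obtain ⟨e, hd1⟩ := Set.ncard_eq_one.mp h1
    have h1' : (B₂ \ B₁).ncard = 1 := by rw [← hB₁.ncard_diff_comm hB₂]; exact h1
    obtain ⟨f, hd2⟩ := Set.ncard_eq_one.mp h1'
    exact swap1 hB₁ hB₂ hd1 hd2
  · -- distance 2
    obtain ⟨e₁, e₂, hne, hd1⟩ := Set.ncard_eq_two.mp h2
    have h2' : (B₂ \ B₁).ncard = 2 := by rw [← hB₁.ncard_diff_comm hB₂]; exact h2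
    obtain ⟨f₁, f₂, hff, hd2⟩ := Set.ncard_eq_two.mp h2'
    have he₁ : e₁ ∈ B₁ \ B₂ := by rw [hd1]; exact Set.mem_insert _ _
    have he₂ : e₂ ∈ B₁ \ B₂ := by rw [hd1]; exact Set.mem_insert_of_mem _ rfl
    obtain ⟨a, ha, hKa⟩ := hB₁.exchange hB₂ he₁
    obtain ⟨b, hb, hKb⟩ := hB₁.exchange hB₂ he₂
    by_cases hab : a = b
    · -- the two exchanges found the same element; use exchange from B₂
      subst hab
      obtain ⟨f', hff', hd2'⟩ : ∃ f', a ≠ f' ∧ B₂ \ B₁ = {a, f'} := by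
        have haf : a ∈ ({f₁, f₂} : Set α) := hd2 ▸ ha
        simp only [Set.mem_insert_iff, Set.mem_singleton_iff] at haf
        rcases haf with h | h
        · exact ⟨f₂, by rw [h]; exact hff, by rw [hd2, h]⟩
        · exact ⟨f₁, by rw [h]; exact hff.symm, by rw [hd2, h, Set.pair_comm]⟩
      obtain ⟨h, hh, hKh⟩ := hB₂.exchange hB₁ ha
      have hh' : h ∈ ({e₁, e₂} : Set α) := hd1 ▸ hh
      simp only [Set.mem_insert_iff, Set.mem_singleton_iff] at hh'
      rcases hh' with h1 | h1
      · rw [h1, cross_eq hne hff' hd1 hd2'] at hKh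
        exact swap2 hB₁ hB₂ hne hff' hd1 hd2' hKa hKh
      · have hd1' : B₁ \ B₂ = {e₂, e₁} := by rw [hd1, Set.pair_comm]
        rw [h1, cross_eq hne.symm hff' hd1' hd2'] at hKh
        have hd2'' : B₂ \ B₁ = {f', a} := by rw [hd2', Set.pair_comm]
        exact swap2 hB₁ hB₂ hne hff'.symm.symm.symm hd1 hd2'' hKh hKb
    · -- distinct elements found directly
      have hpair : B₂ \ B₁ = {a, b} := by
        have haf : a ∈ ({f₁, f₂} : Set α) := hd2 ▸ ha
        have hbf : b ∈ ({f₁, f₂} : Set α) := hd2 ▸ hb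
        simp only [Set.mem_insert_iff, Set.mem_singleton_iff] at haf hbf
        rcases haf with h1 | h1 <;> rcases hbf with h2 | h2
        · exact absurd (h1.trans h2.symm) hab
        · rw [hd2, h1, h2]
        · rw [hd2, h1, h2, Set.pair_comm]
        · exact absurd (h1.trans h2.symm) hab
      exact swap2 hB₁ hB₂ hne hab hd1 hpair hKa hKb
end
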